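/- arXiv:1802.06932 — 7 statements merged into one kernel-verified Lean document; each statement's English description precedes it below -/
import Mathlib

section
/- Let (Ω,𝒜,μ) be a σ-finite measure space with μ(Ω) = ∞. Let X ⊆ L¹(Ω)+L^∞(Ω) be a nonzero linear subspace with the following rearrangement-invariance property: whenever f ∈ X and g is a measurable function with μ{|g| > λ} ≤ μ{|f| > λ} for all λ > 0, then g ∈ X. Then X ⊆ R_μ if and only if the constant function 1 does not belong to X. -/
open MeasureTheory Filter Set
open scoped ENNReal Topology

variable {Ω : Type*} [MeasurableSpace Ω]

/-- Membership in `L¹(μ) + L^∞(μ)`: `f = g + h` with `g ∈ L¹`, `h ∈ L^∞`. -/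
def MemL1PlusLinf (μ : Measure Ω) (f : Ω → ℝ) : Prop :=
  ∃ g h : Ω → ℝ, MemLp g 1 μ ∧ MemLp h ⊤ μ ∧ f = g + h

/-- Membership in `R_μ = {f ∈ L¹+L^∞ : μ{|f| > λ} < ∞ for all λ > 0}`. -/
def MemRmu (μ : Measure Ω) (f : Ω → ℝ) : Prop :=
  MemL1PlusLinf μ f ∧ ∀ l : ℝ, 0 < l → μ {x | l < |f x|} < ⊤

/-- Membership in `L⁰_μ = {f : μ{|f| > λ} < ∞ for some λ > 0}`. -/
def MemL0mu (μ : Measure Ω) (f : Ω → ℝ) : Prop :=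
  ∃ l : ℝ, 0 < l ∧ μ {x | l < |f x|} < ⊤

/-- Almost uniform convergence of a sequence of functions. -/
def TendstoAU (μ : Measure Ω) (F : ℕ → Ω → ℝ) (f : Ω → ℝ) : Prop :=
  ∀ ε : ℝ, 0 < ε → ∃ E : Set Ω, MeasurableSet E ∧ μ Eᶜ ≤ ENNReal.ofReal ε ∧
    Tendsto (fun n => eLpNorm (E.indicator (f - F n)) ⊤ μ) atTop (𝓝 0)

/-- Dunford-Schwartz operator (at the level of measurable representatives):
a linear, measurability-preserving operator which is a contraction in both the
`L¹`- and the `L^∞`-norm. -/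
def IsDS (μ : Measure Ω) (T : (Ω → ℝ) → Ω → ℝ) : Prop :=
  (∀ f g : Ω → ℝ, T (f + g) = T f + T g) ∧
  (∀ (c : ℝ) (f : Ω → ℝ), T (c • f) = c • T f) ∧
  (∀ f : Ω → ℝ, Measurable f → Measurable (T f)) ∧
  (∀ f : Ω → ℝ, MemLp f 1 μ → eLpNorm (T f) 1 μ ≤ eLpNorm f 1 μ) ∧
  (∀ f : Ω → ℝ, MemLp f ⊤ μ → eLpNorm (T f) ⊤ μ ≤ eLpNorm f ⊤ μ)

/-- Cesàro averages `M_n(T)(f) = (1/n) ∑_{k=0}^{n-1} T^k f`. -/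
noncomputable def cesaro (T : (Ω → ℝ) → Ω → ℝ) (n : ℕ) (f : Ω → ℝ) : Ω → ℝ :=
  fun x => (∑ k ∈ Finset.range n, T^[k] f x) / n

/-- For a σ-finite measure space with `μ(Ω) = ∞` and a nonzero linear,
rearrangement-invariant subspace `X ⊆ L¹ + L^∞`, one has `X ⊆ R_μ` iff `1 ∉ X`. -/
theorem stmt0 (μ : Measure Ω) [SigmaFinite μ] (hμ : μ Set.univ = ⊤)
    (X : Set (Ω → ℝ))
    (hne : ∃ f ∈ X, f ≠ 0)
    (hadd : ∀ f ∈ X, ∀ g ∈ X, f + g ∈ X)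
    (hsmul : ∀ (c : ℝ), ∀ f ∈ X, c • f ∈ X)
    (hsub : ∀ f ∈ X, MemL1PlusLinf μ f)
    (hrearr : ∀ f ∈ X, ∀ g : Ω → ℝ, Measurable g →
      (∀ l : ℝ, 0 < l → μ {x | l < |g x|} ≤ μ {x | l < |f x|}) → g ∈ X) :
    (∀ f ∈ X, MemRmu μ f) ↔ (fun _ => (1 : ℝ)) ∉ X := by
  constructor
  · intro hX h1
    have h2 := (hX _ h1).2 (1/2) (by norm_num)
    have heq : {x : Ω | (1:ℝ)/2 < |(fun _ => (1:ℝ)) x|} = Set.univ := by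
      ext x; simp; norm_num
    rw [heq, hμ] at h2
    exact lt_irrefl _ h2
  · intro h1 f hf
    refine ⟨hsub f hf, ?_⟩
    intro l hl
    by_contra hcon
    have htop : μ {x | l < |f x|} = ⊤ := top_le_iff.mp (not_lt.mp hcon)
    apply h1
    apply hrearr ((1/l) • f) (hsmul _ f hf) _ measurable_const
    intro lam hlam
    by_cases hlam1 : 1 ≤ lam
    · have h0 : {x : Ω | lam < |(fun _ => (1:ℝ)) x|} = ∅ := by
        ext x; simp; linarith
      rw [h0]; simp
    · push_neg at hlam1
      have hsub' : {x | l < |f x|} ⊆ {x | lam < |((1/l : ℝ) • f) x|} := by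
        intro x hx
        simp only [Set.mem_setOf_eq, Pi.smul_apply, smul_eq_mul, abs_mul,
          abs_of_pos (by positivity : (0:ℝ) < 1/l)] at *
        rw [one_div, inv_mul_eq_div, lt_div_iff₀ hl]
        nlinarith
      calc μ {x : Ω | lam < |(fun _ => (1:ℝ)) x|} ≤ μ Set.univ := measure_mono (Set.subset_univ _)
        _ = ⊤ := hμ
        _ = μ {x | l < |f x|} := htop.symm
        _ ≤ _ := measure_mono hsub'
end

section
/- Let (Ω,𝒜,μ) be a σ-finite measure space, (X,‖·‖_X) a real Banach space, and M_n : X → L⁰_μ a sequence of linear maps such that the maximal function M*(f) = sup_n |M_n(f)| is finite a.e. for every f ∈ X. Assume the maximal operator M* is continuous at zero in measure, i.e., for all ε > 0 and δ > 0 there exists γ > 0 such that ‖f‖_X ≤ γ implies μ{M*(f) > δ} ≤ ε. Then the set X_c = {f ∈ X : the sequence (M_n(f)) converges almost uniformly} is closed in (X,‖·‖_X). -/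
open MeasureTheory Filter Set
open scoped ENNReal Topology

variable {Ω : Type*} [MeasurableSpace Ω]

/-- If the maximal operator `M*` of a sequence of linear maps
`M_n : X → L⁰_μ` (with `M*(f) < ∞` a.e.) is continuous at zero in measure, then
the set of `f ∈ X` for which `(M_n(f))` converges a.u. is closed in `X`. -/
theorem stmt3 (μ : Measure Ω) [SigmaFinite μ]
    {X : Type*} [NormedAddCommGroup X] [NormedSpace ℝ X] [CompleteSpace X]
    (M : ℕ → X →ₗ[ℝ] (Ω → ℝ))
    (hmeas : ∀ (n : ℕ) (f : X), Measurable (M n f))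
    (hL0 : ∀ (n : ℕ) (f : X), MemL0mu μ (M n f))
    (hfin : ∀ f : X, ∀ᵐ x ∂μ, BddAbove (Set.range fun n => |M n f x|))
    (hcont : ∀ ε δ : ℝ, 0 < ε → 0 < δ → ∃ γ : ℝ, 0 < γ ∧ ∀ f : X, ‖f‖ ≤ γ →
      μ {x | δ < ⨆ n, |M n f x|} ≤ ENNReal.ofReal ε) :
    IsClosed {f : X | ∃ g : Ω → ℝ, TendstoAU μ (fun n => M n f) g} := by
  apply isClosed_of_closure_subset
  intro f hf
  -- Step 1: a.u.-Cauchy property for a fixed pair (ε, δ)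
  have A0 : ∀ ε δ : ℝ, 0 < ε → 0 < δ → ∃ E : Set Ω, MeasurableSet E ∧
      μ Eᶜ ≤ ENNReal.ofReal ε ∧ ∃ N : ℕ, ∀ n m : ℕ, N ≤ n → N ≤ m →
      ∀ᵐ x ∂μ, x ∈ E → |M n f x - M m f x| ≤ δ := by
    intro ε δ hε hδ
    obtain ⟨γ, hγ, hγ'⟩ := hcont (ε/2) (δ/4) (by linarith) (by linarith)
    obtain ⟨f', hf', hdist⟩ := Metric.mem_closure_iff.mp hf γ hγ
    obtain ⟨g', hg'⟩ := hf'
    set h : X := f - f' with hh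
    have hhn : ‖h‖ ≤ γ := by
      rw [hh]; rw [dist_eq_norm] at hdist; exact hdist.le
    have hA := hγ' h hhn
    obtain ⟨E', hE'meas, hE'c, hE'tend⟩ := hg' (ε/2) (by linarith)
    have hev : ∀ᶠ n in atTop,
        eLpNorm (E'.indicator (g' - M n f')) ⊤ μ ≤ ENNReal.ofReal (δ/4) :=
      (ENNReal.tendsto_nhds_zero.mp hE'tend) _ (ENNReal.ofReal_pos.mpr (by linarith))
    obtain ⟨N, hN⟩ := eventually_atTop.mp hev
    have hAmeas : MeasurableSet {x | δ/4 < ⨆ n, |M n h x|} :=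
      measurableSet_lt measurable_const (Measurable.iSup fun n => (hmeas n h).abs)
    refine ⟨E' ∩ {x | δ/4 < ⨆ n, |M n h x|}ᶜ, hE'meas.inter hAmeas.compl, ?_, N, ?_⟩
    · rw [Set.compl_inter, compl_compl]
      refine le_trans (measure_union_le _ _) ?_
      calc μ E'ᶜ + μ {x | δ/4 < ⨆ n, |M n h x|}
          ≤ ENNReal.ofReal (ε/2) + ENNReal.ofReal (ε/2) := add_le_add hE'c hA
        _ = ENNReal.ofReal ε := by
            rw [← ENNReal.ofReal_add (by linarith) (by linarith)]; norm_num
    · intro n m hn hm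
      have key : ∀ (k : ℕ) (x : Ω), M k f x = M k f' x + M k h x := by
        intro k x
        have : (M k) f' + (M k) h = M k f := by
          rw [← map_add]; congr 1; rw [hh]; abel
        rw [← this]; rfl
      have hb : ∀ (k : ℕ), N ≤ k →
          ∀ᵐ x ∂μ, x ∈ E' → |g' x - M k f' x| ≤ δ/4 := by
        intro k hk
        filter_upwards [ae_le_eLpNormEssSup
          (f := E'.indicator (g' - M k f')) (μ := μ)] with x hx hxE
        have h2 : (‖E'.indicator (g' - M k f') x‖₊ : ℝ≥0∞) ≤ ENNReal.ofReal (δ/4) :=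
          le_trans hx (by rw [← eLpNorm_exponent_top]; exact hN k hk)
        rw [← enorm_eq_nnnorm, ← ofReal_norm,
          ENNReal.ofReal_le_ofReal_iff (by linarith)] at h2
        rw [Set.indicator_of_mem hxE] at h2
        simpa [Real.norm_eq_abs] using h2
      filter_upwards [hb n hn, hb m hm, hfin h] with x hx1 hx2 hx3 hxE
      obtain ⟨hxE', hxA⟩ := hxE
      have hsup : ⨆ k, |M k h x| ≤ δ/4 := le_of_not_gt hxA
      have e3 : |M n h x| ≤ δ/4 := le_trans (le_ciSup hx3 n) hsup
      have e4 : |M m h x| ≤ δ/4 := le_trans (le_ciSup hx3 m) hsup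
      have e1 := hx1 hxE'
      have e2 := hx2 hxE'
      rw [key n x, key m x]
      rw [abs_le] at e1 e2 e3 e4 ⊢
      constructor <;> [linarith [e1.1, e2.2]; linarith]
  -- Step 2: a.u.-Cauchy property with a single exceptional set for each ε
  have A1 : ∀ ε : ℝ, 0 < ε → ∃ E : Set Ω, MeasurableSet E ∧
      μ Eᶜ ≤ ENNReal.ofReal ε ∧ ∀ δ : ℝ, 0 < δ → ∃ N : ℕ, ∀ n m : ℕ, N ≤ n → N ≤ m →
      ∀ᵐ x ∂μ, x ∈ E → |M n f x - M m f x| ≤ δ := by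
    intro ε hε
    obtain ⟨ε', hε'pos, hsum⟩ := ENNReal.exists_pos_sum_of_countable
      (ε := ENNReal.ofReal ε) (ne_of_gt (ENNReal.ofReal_pos.mpr hε)) ℕ
    choose E hEmeas hEc N hN using fun j : ℕ =>
      A0 (ε' j) (1/((j:ℝ)+1)) (by exact_mod_cast hε'pos j) (by positivity)
    refine ⟨⋂ j, E j, MeasurableSet.iInter hEmeas, ?_, ?_⟩
    · rw [Set.compl_iInter]
      refine le_trans (measure_iUnion_le _) ?_
      refine le_trans (ENNReal.tsum_le_tsum fun j => le_trans (hEc j) ?_) hsum.le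
      rw [ENNReal.ofReal_coe_nnreal]
    · intro δ hδ
      obtain ⟨j, hj⟩ := exists_nat_one_div_lt hδ
      refine ⟨N j, fun n m hn hm => ?_⟩
      filter_upwards [hN j n m hn hm] with x hx hxE
      exact le_trans (hx (Set.mem_iInter.mp hxE j)) hj.le
  -- Step 3: construct the limit and prove a.u. convergence
  refine ⟨fun x => limUnder atTop (fun n => M n f x), ?_⟩
  intro ε hε
  obtain ⟨E, hEmeas, hEc, hP⟩ := A1 ε hε
  refine ⟨E, hEmeas, hEc, ?_⟩
  choose N' hN' using fun j : ℕ => hP (1/((j:ℝ)+1)) (by positivity)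
  have hae : ∀ᵐ x ∂μ, ∀ (j n m : ℕ), N' j ≤ n → N' j ≤ m → x ∈ E →
      |M n f x - M m f x| ≤ 1/((j:ℝ)+1) := by
    rw [ae_all_iff]; intro j; rw [ae_all_iff]; intro n; rw [ae_all_iff]; intro m
    by_cases hn : N' j ≤ n
    · by_cases hm : N' j ≤ m
      · filter_upwards [hN' j n m hn hm] with x hx _ _ hxE; exact hx hxE
      · filter_upwards with x _ hm'; exact absurd hm' hm
    · filter_upwards with x hn'; exact absurd hn' hn
  have hconv : ∀ᵐ x ∂μ, x ∈ E →
      Tendsto (fun n => M n f x) atTop (𝓝 (limUnder atTop (fun n => M n f x))) := by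
    filter_upwards [hae] with x hx hxE
    have hcauchy : CauchySeq (fun n => M n f x) := by
      rw [Metric.cauchySeq_iff]
      intro δ hδ
      obtain ⟨j, hj⟩ := exists_nat_one_div_lt hδ
      refine ⟨N' j, fun n hn m hm => ?_⟩
      rw [Real.dist_eq]
      exact lt_of_le_of_lt (hx j n m hn hm hxE) hj
    obtain ⟨L, hL⟩ := cauchySeq_tendsto_of_complete hcauchy
    exact tendsto_nhds_limUnder ⟨L, hL⟩
  rw [ENNReal.tendsto_nhds_zero]
  intro η hη
  obtain ⟨δ, hδpos, hδle⟩ : ∃ δ : ℝ, 0 < δ ∧ ENNReal.ofReal δ ≤ η := by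
    refine ⟨(min 1 η).toReal, ENNReal.toReal_pos (lt_min one_pos hη).ne'
      ((min_le_left _ _).trans_lt ENNReal.one_lt_top).ne, ?_⟩
    rw [ENNReal.ofReal_toReal ((min_le_left _ _).trans_lt ENNReal.one_lt_top).ne]
    exact min_le_right _ _
  obtain ⟨N, hNδ⟩ := hP (δ/2) (by linarith)
  rw [eventually_atTop]
  refine ⟨N, fun n hn => ?_⟩
  have hall : ∀ᵐ x ∂μ, ∀ m : ℕ, N ≤ m → x ∈ E → |M n f x - M m f x| ≤ δ/2 := by
    rw [ae_all_iff]; intro m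
    by_cases hm : N ≤ m
    · filter_upwards [hNδ n m hn hm] with x hx _ hxE; exact hx hxE
    · filter_upwards with x hm'; exact absurd hm' hm
  have hb : ∀ᵐ x ∂μ,
      ‖E.indicator ((fun y => limUnder atTop (fun k => M k f y)) - M n f) x‖ ≤ δ/2 := by
    filter_upwards [hall, hconv] with x hx hcx
    by_cases hxE : x ∈ E
    · rw [Set.indicator_of_mem hxE]
      have ht : Tendsto (fun m => |M n f x - M m f x|) atTop
          (𝓝 |M n f x - limUnder atTop (fun k => M k f x)|) :=
        (tendsto_const_nhds.sub (hcx hxE)).abs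
      have hle : |M n f x - limUnder atTop (fun k => M k f x)| ≤ δ/2 :=
        le_of_tendsto ht (eventually_atTop.mpr ⟨N, fun m hm => hx m hm hxE⟩)
      rw [Pi.sub_apply, Real.norm_eq_abs, abs_sub_comm]
      exact hle
    · rw [Set.indicator_of_notMem hxE]; simp; linarith
  calc eLpNorm (E.indicator ((fun y => limUnder atTop (fun k => M k f y)) - M n f)) ⊤ μ
      = eLpNormEssSup (E.indicator ((fun y => limUnder atTop (fun k => M k f y)) - M n f)) μ :=
        eLpNorm_exponent_top
    _ ≤ ENNReal.ofReal (δ/2) := eLpNormEssSup_le_of_ae_bound hb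
    _ ≤ η := le_trans (ENNReal.ofReal_le_ofReal (by linarith)) hδle
end

section
/- (Hopf's maximal ergodic theorem.) Let (Ω,𝒜,μ) be a σ-finite measure space and let T : L¹(Ω) → L¹(Ω) be a positive linear contraction (i.e., T is linear, T(f) ≥ 0 a.e. whenever f ≥ 0 a.e., and ‖T f‖₁ ≤ ‖f‖₁ for all f ∈ L¹). Then for every f ∈ L¹(Ω), ∫_{{sup_{n≥1} M_n(T)(f) > 0}} f dμ ≥ 0, where M_n(T)(f) = (1/n) ∑_{k=0}^{n-1} T^k(f). -/
open MeasureTheory Filter Set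
open scoped ENNReal Topology

variable {Ω : Type*} [MeasurableSpace Ω]

/-- Partial sums `S k = ∑_{j<k} T^j f`. -/
noncomputable def hopfS (T : (Ω → ℝ) → Ω → ℝ) (f : Ω → ℝ) (k : ℕ) : Ω → ℝ :=
  fun x => ∑ j ∈ Finset.range k, T^[j] f x

/-- `G n = max (0, S 1, ..., S n)` pointwise. -/
noncomputable def hopfG (T : (Ω → ℝ) → Ω → ℝ) (f : Ω → ℝ) : ℕ → Ω → ℝ
  | 0 => fun _ => 0
  | n + 1 => fun x => max (hopfG T f n x) (hopfS T f (n + 1) x)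

/-- Hopf's maximal ergodic theorem: for a positive linear contraction
`T` of `L¹` and `f ∈ L¹`, `∫_{sup_{n≥1} M_n(T)(f) > 0} f dμ ≥ 0`. -/
theorem stmt4 (μ : Measure Ω) [SigmaFinite μ] (T : (Ω → ℝ) → Ω → ℝ)
    (hadd : ∀ f g : Ω → ℝ, T (f + g) = T f + T g)
    (hsmul : ∀ (c : ℝ) (f : Ω → ℝ), T (c • f) = c • T f)
    (hmeas : ∀ f : Ω → ℝ, Measurable f → Measurable (T f))
    (hpos : ∀ f : Ω → ℝ, (∀ᵐ x ∂μ, 0 ≤ f x) → ∀ᵐ x ∂μ, 0 ≤ T f x)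
    (hL1 : ∀ f : Ω → ℝ, MemLp f 1 μ →
      MemLp (T f) 1 μ ∧ eLpNorm (T f) 1 μ ≤ eLpNorm f 1 μ)
    (f : Ω → ℝ) (hf : Measurable f) (hf1 : MemLp f 1 μ) :
    0 ≤ ∫ x in {x | ∃ n : ℕ, 0 < cesaro T (n + 1) f x}, f x ∂μ := by
  set S := hopfS T f with hS
  set G := hopfG T f with hG
  have hT0 : T 0 = 0 := by
    have := hsmul 0 0
    simp at this; exact this
  have hTsub : ∀ a b : Ω → ℝ, T (a - b) = T a - T b := by
    intro a b
    have h1 : a - b + b = a := by ring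
    have := hadd (a - b) b
    rw [h1] at this
    rw [eq_sub_iff_add_eq, ← this]
  -- iterates are measurable and integrable
  have hSm : ∀ k, Measurable (T^[k] f) := by
    intro k; induction k with
    | zero => simpa using hf
    | succ n ih => rw [Function.iterate_succ_apply']; exact hmeas _ ih
  have hSint : ∀ k, Integrable (T^[k] f) μ := by
    intro k; induction k with
    | zero => simpa using memLp_one_iff_integrable.mp hf1
    | succ n ih =>
      rw [Function.iterate_succ_apply']
      exact memLp_one_iff_integrable.mp
        (hL1 _ (memLp_one_iff_integrable.mpr ih)).1
  have hSmeas : ∀ k, Measurable (S k) := by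
    intro k; exact Finset.measurable_sum _ fun j _ => hSm j
  have hSint' : ∀ k, Integrable (S k) μ := by
    intro k
    exact integrable_finset_sum _ fun j _ => hSint j
  have hGmeas : ∀ n, Measurable (G n) := by
    intro n; induction n with
    | zero => exact measurable_const
    | succ n ih => exact Measurable.max ih (hSmeas (n + 1))
  have hGint : ∀ n, Integrable (G n) μ := by
    intro n; induction n with
    | zero => simpa [hG, hopfG] using integrable_const (0 : ℝ)
    | succ n ih => exact Integrable.sup ih (hSint' (n + 1))
  have hGnonneg : ∀ n x, 0 ≤ G n x := by
    intro n; induction n with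
    | zero => intro x; simp [hG, hopfG]
    | succ n ih => intro x; exact le_trans (ih x) (le_max_left _ _)
  have hSleG : ∀ n k, k ≤ n → ∀ x, S k x ≤ G n x := by
    intro n; induction n with
    | zero =>
      intro k hk x
      interval_cases k
      simp [hS, hopfS, hG, hopfG]
    | succ n ih =>
      intro k hk x
      rcases Nat.lt_succ_iff_lt_or_eq.mp (Nat.lt_succ_of_le hk) with h | h
      · exact le_trans (ih k (Nat.lt_succ_iff.mp h) x) (le_max_left _ _)
      · subst h; exact le_max_right _ _
  have hGcases : ∀ n x, G n x ≤ 0 ∨ ∃ k < n, G n x = S (k + 1) x := by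
    intro n; induction n with
    | zero => intro x; left; simp [hG, hopfG]
    | succ n ih =>
      intro x
      rcases le_total (G n x) (S (n + 1) x) with h | h
      · right
        exact ⟨n, Nat.lt_succ_self n, by simp [hG, hopfG, max_eq_right h]; exact max_eq_right h⟩
      · have hGs : G (n + 1) x = G n x := by simp [hG, hopfG, max_eq_left h]; exact h
        rcases ih x with h' | ⟨k, hk, hk'⟩
        · left; rw [hGs]; exact h'
        · right; exact ⟨k, Nat.lt_succ_of_lt hk, by rw [hGs]; exact hk'⟩
  -- T applied to S k
  have hTS : ∀ k x, S (k + 1) x = f x + T (S k) x := by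
    intro k
    have hTSk : T (S k) = fun x => ∑ j ∈ Finset.range k, T^[j+1] f x := by
      induction k with
      | zero =>
        have : S 0 = 0 := by funext x; simp [hS, hopfS]
        rw [this, hT0]; funext x; simp
      | succ n ih =>
        have hsplit : S (n + 1) = S n + T^[n] f := by
          funext x; simp [hS, hopfS, Finset.sum_range_succ]
        rw [hsplit, hadd, ih]
        funext x
        simp [Finset.sum_range_succ, Function.iterate_succ_apply']
    intro x
    rw [hTSk]
    have : S (k + 1) x = ∑ j ∈ Finset.range k, T^[j+1] f x + T^[0] f x :=
      Finset.sum_range_succ' _ k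
    simp only [Function.iterate_zero_apply] at this
    rw [this]; ring
  -- a.e. key inequality
  have hkey : ∀ n, ∀ᵐ x ∂μ, ∀ k ≤ n, S (k + 1) x ≤ f x + T (G n) x := by
    intro n
    have h1 : ∀ k ≤ n, ∀ᵐ x ∂μ, T (S k) x ≤ T (G n) x := by
      intro k hk
      have hd : ∀ᵐ x ∂μ, 0 ≤ T (G n - S k) x :=
        hpos _ (Filter.Eventually.of_forall fun x => by
          simpa using sub_nonneg.mpr (hSleG n k hk x))
      rw [hTsub] at hd
      filter_upwards [hd] with x hx
      simpa [sub_nonneg] using hx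
    have h2 : ∀ᵐ x ∂μ, ∀ k, k ≤ n → T (S k) x ≤ T (G n) x := by
      rw [ae_all_iff]
      intro k
      by_cases hk : k ≤ n
      · filter_upwards [h1 k hk] with x hx _
        exact hx
      · exact Filter.Eventually.of_forall fun x hk' => absurd hk' hk
    filter_upwards [h2] with x hx k hk
    rw [hTS k x]
    exact (add_le_add_iff_left _).mpr (hx k hk)
  -- the sets E n
  set E : ℕ → Set Ω := fun n => {x | 0 < G n x} with hE
  have hEmeas : ∀ n, MeasurableSet (E n) :=
    fun n => measurableSet_lt measurable_const (hGmeas n)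
  have hEmono : Monotone E := by
    intro m n hmn x hx
    have : ∀ m n, m ≤ n → ∀ x, G m x ≤ G n x := by
      intro m n hmn
      induction hmn with
      | refl => intro x; exact le_rfl
      | step _ ih => rename_i p _; intro x; exact le_trans (ih x) (le_max_left _ _)
    exact lt_of_lt_of_le hx (this m n hmn x)
  -- on E n, a.e. G n - T (G n) ≤ f
  have hEineq : ∀ n, ∀ᵐ x ∂μ, x ∈ E n → G n x - T (G n) x ≤ f x := by
    intro n
    filter_upwards [hkey n] with x hx hxE
    rcases hGcases n x with h | ⟨k, hk, hk'⟩
    · exact absurd hxE (not_lt.mpr h)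
    · rw [hk']
      have := hx k (Nat.le_of_lt_succ (Nat.lt_succ_of_lt hk))
      linarith
  -- positivity of T (G n)
  have hTGpos : ∀ n, ∀ᵐ x ∂μ, 0 ≤ T (G n) x :=
    fun n => hpos _ (Filter.Eventually.of_forall (hGnonneg n))
  have hTGint : ∀ n, Integrable (T (G n)) μ :=
    fun n => memLp_one_iff_integrable.mp
      (hL1 _ (memLp_one_iff_integrable.mpr (hGint n))).1
  -- main estimate: ∫_{E n} f ≥ 0
  have hmain : ∀ n, 0 ≤ ∫ x in E n, f x ∂μ := by
    intro n
    have hint1 : ∫ x in E n, G n x ∂μ = ∫ x, G n x ∂μ := by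
      rw [← integral_indicator (hEmeas n)]
      congr 1
      funext x
      by_cases hx : x ∈ E n
      · simp [hx]
      · have : G n x = 0 := le_antisymm (not_lt.mp hx) (hGnonneg n x)
        simp [hx, this]
    have hint2 : ∫ x in E n, T (G n) x ∂μ ≤ ∫ x, T (G n) x ∂μ :=
      setIntegral_le_integral (hTGint n) (hTGpos n)
    have hint3 : ∫ x, T (G n) x ∂μ ≤ ∫ x, G n x ∂μ := by
      have e1 : ∫ x, T (G n) x ∂μ ≤ ∫ x, |T (G n) x| ∂μ :=
        integral_mono (hTGint n) (hTGint n).abs fun x => le_abs_self _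
      have e2 : ENNReal.ofReal (∫ x, |T (G n) x| ∂μ) = eLpNorm (T (G n)) 1 μ := by
        simpa [Real.norm_eq_abs] using
          ofReal_integral_norm_eq_lintegral_enorm (hTGint n) |>.trans
          (by rw [← eLpNorm_one_eq_lintegral_enorm])
      have e3 : ENNReal.ofReal (∫ x, G n x ∂μ) = eLpNorm (G n) 1 μ := by
        have : ∫ x, |G n x| ∂μ = ∫ x, G n x ∂μ := by
          congr 1; funext x; exact abs_of_nonneg (hGnonneg n x)
        rw [← this]
        simpa [Real.norm_eq_abs] using
          ofReal_integral_norm_eq_lintegral_enorm (hGint n) |>.trans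
          (by rw [← eLpNorm_one_eq_lintegral_enorm])
      have e4 : eLpNorm (T (G n)) 1 μ ≤ eLpNorm (G n) 1 μ :=
        (hL1 _ (memLp_one_iff_integrable.mpr (hGint n))).2
      have e5 : ∫ x, |T (G n) x| ∂μ ≤ ∫ x, G n x ∂μ := by
        have := e2 ▸ e3 ▸ e4
        rwa [ENNReal.ofReal_le_ofReal_iff (integral_nonneg (hGnonneg n))] at this
      linarith
    have hle : ∫ x in E n, (G n x - T (G n) x) ∂μ ≤ ∫ x in E n, f x ∂μ := by
      refine integral_mono_ae ((hGint n).sub (hTGint n)).integrableOn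
        (memLp_one_iff_integrable.mp hf1).integrableOn ?_
      refine (ae_restrict_iff' (hEmeas n)).mpr ?_
      filter_upwards [hEineq n] with x hx hxE
      simpa using hx hxE
    have hsplit : ∫ x in E n, (G n x - T (G n) x) ∂μ
        = ∫ x in E n, G n x ∂μ - ∫ x in E n, T (G n) x ∂μ :=
      integral_sub (hGint n).integrableOn (hTGint n).integrableOn
    rw [hsplit, hint1] at hle
    linarith
  -- identify the target set with ⋃ E n
  have hset : {x | ∃ n : ℕ, 0 < cesaro T (n + 1) f x} = ⋃ n, E n := by
    ext x
    simp only [mem_setOf_eq, mem_iUnion, hE, cesaro]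
    constructor
    · rintro ⟨n, hn⟩
      have hSx : 0 < S (n + 1) x := by
        have hpos' : (0:ℝ) < (n + 1 : ℕ) := by positivity
        have := (div_pos_iff_of_pos_right hpos').mp hn
        simpa [hS, hopfS] using this
      exact ⟨n + 1, lt_of_lt_of_le hSx (hSleG (n + 1) (n + 1) le_rfl x)⟩
    · rintro ⟨n, hn⟩
      rcases hGcases n x with h | ⟨k, hk, hk'⟩
      · exact absurd hn (not_lt.mpr h)
      · refine ⟨k, ?_⟩
        have hSx : 0 < S (k + 1) x := hk' ▸ hn
        have hpos' : (0:ℝ) < (k + 1 : ℕ) := by positivity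
        apply div_pos _ hpos'
        simpa [hS, hopfS] using hSx
  rw [hset]
  have htend := tendsto_setIntegral_of_monotone hEmeas hEmono
    (memLp_one_iff_integrable.mp hf1).integrableOn
  exact ge_of_tendsto' htend hmain
end

section
/- Let (Ω,𝒜,μ) be a σ-finite measure space and let T be a positive Dunford–Schwartz operator on (Ω,μ). Then for every f ∈ L¹(Ω) and every λ > 0, μ{ sup_{n≥1} M_n(T)(|f|) > λ } ≤ ‖f‖₁ / λ. -/
open MeasureTheory Filter Set
open scoped ENNReal Topology

variable {Ω : Type*} [MeasurableSpace Ω]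

set_option linter.unusedSectionVars false

section DS
variable {μ : Measure Ω} {T : (Ω → ℝ) → Ω → ℝ}

lemma ds_zero (hT : IsDS μ T) : T 0 = 0 := by
  have := hT.1 0 0
  simp only [add_zero] at this
  have h2 : T 0 + T 0 = T 0 + 0 := by rw [← this, add_zero]
  exact add_left_cancel h2

lemma ds_sub (hT : IsDS μ T) (a b : Ω → ℝ) : T (a - b) = T a - T b := by
  have hb : T (-b) = -T b := by
    have := hT.2.1 (-1) b
    simpa [neg_one_smul] using this
  rw [sub_eq_add_neg, hT.1, hb, ← sub_eq_add_neg]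

lemma ds_sum (hT : IsDS μ T) {ι : Type*} (s : Finset ι) (F : ι → Ω → ℝ) :
    T (∑ k ∈ s, F k) = ∑ k ∈ s, T (F k) := by
  classical
  induction s using Finset.induction_on with
  | empty => simpa using ds_zero hT
  | insert _ _ hnot ih => rw [Finset.sum_insert hnot, hT.1, ih, Finset.sum_insert hnot]

lemma ds_iter_meas (hT : IsDS μ T) {h : Ω → ℝ} (hm : Measurable h) (k : ℕ) :
    Measurable (T^[k] h) := by
  induction k with
  | zero => simpa using hm
  | succ n ih => rw [Function.iterate_succ_apply']; exact hT.2.2.1 _ ih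

lemma ds_iter_L1 (hT : IsDS μ T) {h : Ω → ℝ} (hm : Measurable h) (hi : MemLp h 1 μ) (k : ℕ) :
    MemLp (T^[k] h) 1 μ ∧ eLpNorm (T^[k] h) 1 μ ≤ eLpNorm h 1 μ := by
  induction k with
  | zero => exact ⟨by simpa using hi, by simp⟩
  | succ n ih =>
    rw [Function.iterate_succ_apply']
    have hb := hT.2.2.2.1 _ ih.1
    refine ⟨⟨((ds_iter_meas hT hm (n+1)).aestronglyMeasurable).congr ?_, ?_⟩, hb.trans ih.2⟩
    · rw [Function.iterate_succ_apply']
    · exact lt_of_le_of_lt (hb.trans ih.2) hi.2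

lemma ds_iter_Linf (hT : IsDS μ T) {h : Ω → ℝ} (hm : Measurable h) (hi : MemLp h ⊤ μ) (k : ℕ) :
    MemLp (T^[k] h) ⊤ μ ∧ eLpNorm (T^[k] h) ⊤ μ ≤ eLpNorm h ⊤ μ := by
  induction k with
  | zero => exact ⟨by simpa using hi, by simp⟩
  | succ n ih =>
    rw [Function.iterate_succ_apply']
    have hb := hT.2.2.2.2 _ ih.1
    refine ⟨⟨((ds_iter_meas hT hm (n+1)).aestronglyMeasurable).congr ?_, ?_⟩, hb.trans ih.2⟩
    · rw [Function.iterate_succ_apply']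
    · exact lt_of_le_of_lt (hb.trans ih.2) hi.2

lemma ds_mono (hT : IsDS μ T)
    (hpos : ∀ f : Ω → ℝ, (∀ᵐ x ∂μ, 0 ≤ f x) → ∀ᵐ x ∂μ, 0 ≤ T f x)
    {a b : Ω → ℝ} (hab : ∀ᵐ x ∂μ, a x ≤ b x) : ∀ᵐ x ∂μ, T a x ≤ T b x := by
  have h0 : ∀ᵐ x ∂μ, 0 ≤ (b - a) x := by filter_upwards [hab] with x hx; simpa using hx
  have := hpos _ h0
  rw [ds_sub hT] at this
  filter_upwards [this] with x hx
  simpa [sub_nonneg] using hx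

end DS

noncomputable def ergS (T : (Ω → ℝ) → Ω → ℝ) (h : Ω → ℝ) (n : ℕ) : Ω → ℝ :=
  ∑ k ∈ Finset.range n, T^[k] h

noncomputable def ergM (T : (Ω → ℝ) → Ω → ℝ) (h : Ω → ℝ) : ℕ → Ω → ℝ
  | 0 => 0
  | (n+1) => ergM T h n ⊔ ergS T h (n+1)

section erg
variable {μ : Measure Ω} {T : (Ω → ℝ) → Ω → ℝ}

lemma ergS_apply (h : Ω → ℝ) (n : ℕ) (x : Ω) :
    ergS T h n x = ∑ k ∈ Finset.range n, T^[k] h x := by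
  simp [ergS]

lemma ergS_eq (h : Ω → ℝ) (n : ℕ) :
    ergS T h n = fun x => ∑ k ∈ Finset.range n, T^[k] h x := by
  funext x; simp [ergS]

lemma ergM_succ (h : Ω → ℝ) (n : ℕ) :
    ergM T h (n+1) = ergM T h n ⊔ ergS T h (n+1) := rfl

lemma ergS_succ (hT : IsDS μ T) (h : Ω → ℝ) (n : ℕ) :
    ergS T h (n+1) = h + T (ergS T h n) := by
  rw [ergS, Finset.sum_range_succ', ergS, ds_sum hT]
  simp only [Function.iterate_zero_apply]
  rw [add_comm]
  congr 1
  exact Finset.sum_congr rfl (fun k _ => Function.iterate_succ_apply' T k h)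

lemma ergS_meas (hT : IsDS μ T) {h : Ω → ℝ} (hm : Measurable h) (n : ℕ) :
    Measurable (ergS T h n) := by
  rw [ergS_eq]
  exact Finset.measurable_sum _ (fun k _ => ds_iter_meas hT hm k)

lemma ergS_int (hT : IsDS μ T) {h : Ω → ℝ} (hm : Measurable h) (hi : Integrable h μ) (n : ℕ) :
    Integrable (ergS T h n) μ := by
  rw [ergS_eq]
  exact integrable_finset_sum _ (fun k _ =>
    memLp_one_iff_integrable.mp (ds_iter_L1 hT hm (memLp_one_iff_integrable.mpr hi) k).1)

lemma ergM_meas (hT : IsDS μ T) {h : Ω → ℝ} (hm : Measurable h) (N : ℕ) :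
    Measurable (ergM T h N) := by
  induction N with
  | zero => exact measurable_const
  | succ n ih => exact ih.max (ergS_meas hT hm (n+1))

lemma ergM_int (hT : IsDS μ T) {h : Ω → ℝ} (hm : Measurable h) (hi : Integrable h μ) (N : ℕ) :
    Integrable (ergM T h N) μ := by
  induction N with
  | zero => exact integrable_zero Ω ℝ μ
  | succ n ih => rw [ergM_succ]; exact ih.sup (ergS_int hT hm hi (n+1))

lemma ergM_nonneg (h : Ω → ℝ) (N : ℕ) (x : Ω) : 0 ≤ ergM T h N x := by
  induction N with
  | zero => simp [ergM]
  | succ n ih => exact le_trans ih (le_sup_left : ergM T h n x ≤ _)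

lemma ergM_succ_apply (h : Ω → ℝ) (n : ℕ) (x : Ω) :
    ergM T h (n+1) x = max (ergM T h n x) (ergS T h (n+1) x) := rfl

lemma ergS_le_ergM (h : Ω → ℝ) {n N : ℕ} (hn : n ≤ N) (x : Ω) :
    ergS T h n x ≤ ergM T h N x := by
  induction N with
  | zero =>
    interval_cases n
    simp [ergS, ergM]
  | succ m ih =>
    rcases Nat.lt_or_ge n (m+1) with hlt | hge
    · exact le_trans (ih (Nat.lt_succ_iff.mp hlt)) (le_max_left _ _)
    · have : n = m + 1 := le_antisymm hn hge
      subst this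
      exact le_max_right _ _

lemma ergM_pos_eq (h : Ω → ℝ) {N : ℕ} {x : Ω} (hx : 0 < ergM T h (N+1) x) :
    ∃ n ≤ N, ergM T h (N+1) x = ergS T h (n+1) x := by
  induction N with
  | zero =>
    rw [ergM_succ_apply] at hx ⊢
    rcases max_cases (ergM T h 0 x) (ergS T h 1 x) with ⟨he, _⟩ | ⟨he, _⟩
    · exfalso; rw [he] at hx; simpa [ergM] using hx
    · exact ⟨0, le_rfl, he⟩
  | succ m ih =>
    rw [ergM_succ_apply] at hx ⊢
    rcases max_cases (ergM T h (m+1) x) (ergS T h (m+2) x) with ⟨he, _⟩ | ⟨he, _⟩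
    · rw [he] at hx ⊢
      obtain ⟨n, hn, he'⟩ := ih hx
      exact ⟨n, hn.trans (Nat.le_succ m), he'⟩
    · exact ⟨m+1, le_rfl, he⟩

end erg

lemma hopf (μ : Measure Ω) (T : (Ω → ℝ) → Ω → ℝ) (hT : IsDS μ T)
    (hpos : ∀ f : Ω → ℝ, (∀ᵐ x ∂μ, 0 ≤ f x) → ∀ᵐ x ∂μ, 0 ≤ T f x)
    (h : Ω → ℝ) (hm : Measurable h) (hi : Integrable h μ) (N : ℕ) :
    0 ≤ ∫ x in {x | 0 < ergM T h (N+1) x}, h x ∂μ := by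
  set Φ := ergM T h (N+1) with hΦdef
  have hΦm : Measurable Φ := ergM_meas hT hm _
  have hΦi : Integrable Φ μ := ergM_int hT hm hi _
  set F := {x | 0 < Φ x} with hFdef
  have hFm : MeasurableSet F := measurableSet_lt measurable_const hΦm
  have hTΦm : Measurable (T Φ) := hT.2.2.1 _ hΦm
  have hTΦi : Integrable (T Φ) μ := by
    rw [← memLp_one_iff_integrable]
    exact ⟨hTΦm.aestronglyMeasurable,
      lt_of_le_of_lt (hT.2.2.2.1 _ (memLp_one_iff_integrable.mpr hΦi))
        (memLp_one_iff_integrable.mpr hΦi).2⟩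
  have hmono : ∀ n, ∀ᵐ x ∂μ, n ≤ N + 1 → T (ergS T h n) x ≤ T Φ x := by
    intro n
    by_cases hn : n ≤ N + 1
    · have := ds_mono hT hpos (a := ergS T h n) (b := Φ)
        (Eventually.of_forall fun x => ergS_le_ergM h hn x)
      filter_upwards [this] with x hx _
      exact hx
    · filter_upwards with x hx
      exact absurd hx hn
  have hmono' : ∀ᵐ x ∂μ, ∀ n, n ≤ N + 1 → T (ergS T h n) x ≤ T Φ x := ae_all_iff.mpr hmono
  have key : ∀ᵐ x ∂μ, x ∈ F → Φ x - T Φ x ≤ h x := by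
    filter_upwards [hmono'] with x hx hxF
    have hxF' : 0 < ergM T h (N+1) x := hxF
    obtain ⟨n, hn, he⟩ := ergM_pos_eq h hxF'
    have hsucc := congrFun (ergS_succ hT h n) x
    have hTle : T (ergS T h n) x ≤ T Φ x := hx n (by omega)
    have : Φ x = h x + T (ergS T h n) x := by
      rw [hΦdef, he, hsucc]; rfl
    linarith
  have hΦ_ind : F.indicator Φ = Φ := by
    funext x
    by_cases hx : x ∈ F
    · simp [indicator_of_mem hx]
    · have h0 : ¬ (0 < Φ x) := hx
      have h1 := ergM_nonneg (T := T) h (N+1) x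
      rw [indicator_of_notMem hx]
      rw [hΦdef]
      linarith [not_lt.mp h0]
  have hIΦ : ∫ x in F, Φ x ∂μ = ∫ x, Φ x ∂μ := by
    rw [← integral_indicator hFm, hΦ_ind]
  have habs : ∫ x, |T Φ x| ∂μ ≤ ∫ x, Φ x ∂μ := by
    have h1 : eLpNorm (T Φ) 1 μ ≤ eLpNorm Φ 1 μ :=
      hT.2.2.2.1 _ (memLp_one_iff_integrable.mpr hΦi)
    have e1 : eLpNorm (T Φ) 1 μ = ENNReal.ofReal (∫ x, ‖T Φ x‖ ∂μ) := by
      rw [eLpNorm_one_eq_lintegral_enorm, ← ofReal_integral_norm_eq_lintegral_enorm hTΦi]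
    have e2 : eLpNorm Φ 1 μ = ENNReal.ofReal (∫ x, ‖Φ x‖ ∂μ) := by
      rw [eLpNorm_one_eq_lintegral_enorm, ← ofReal_integral_norm_eq_lintegral_enorm hΦi]
    rw [e1, e2] at h1
    have hb : 0 ≤ ∫ x, ‖Φ x‖ ∂μ := integral_nonneg fun x => norm_nonneg _
    have h2 : ∫ x, ‖T Φ x‖ ∂μ ≤ ∫ x, ‖Φ x‖ ∂μ := (ENNReal.ofReal_le_ofReal_iff hb).mp h1
    have h3 : ∫ x, ‖Φ x‖ ∂μ = ∫ x, Φ x ∂μ := by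
      refine integral_congr_ae (Eventually.of_forall fun x => ?_)
      simp only [Real.norm_eq_abs]
      exact abs_of_nonneg (ergM_nonneg h (N+1) x)
    have h4 : ∫ x, |T Φ x| ∂μ = ∫ x, ‖T Φ x‖ ∂μ := by
      refine integral_congr_ae (Eventually.of_forall fun x => ?_)
      simp [Real.norm_eq_abs]
    linarith
  have hFTΦ : ∫ x in F, T Φ x ∂μ ≤ ∫ x, Φ x ∂μ := by
    calc ∫ x in F, T Φ x ∂μ ≤ ∫ x in F, |T Φ x| ∂μ :=
          setIntegral_mono_on hTΦi.integrableOn hTΦi.abs.integrableOn hFm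
            (fun x _ => le_abs_self _)
      _ ≤ ∫ x, |T Φ x| ∂μ :=
          setIntegral_le_integral hTΦi.abs (Eventually.of_forall fun x => abs_nonneg _)
      _ ≤ ∫ x, Φ x ∂μ := habs
  have main : ∫ x in F, Φ x ∂μ - ∫ x in F, T Φ x ∂μ ≤ ∫ x in F, h x ∂μ := by
    rw [← integral_sub hΦi.integrableOn hTΦi.integrableOn]
    exact setIntegral_mono_on_ae (hΦi.integrableOn.sub hTΦi.integrableOn) hi.integrableOn hFm key
  linarith

lemma cesaro_eq {T : (Ω → ℝ) → Ω → ℝ} (g : Ω → ℝ) (n : ℕ) (x : Ω) :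
    cesaro T n g x = ergS T g n x / n := by
  simp [cesaro, ergS_apply]

lemma keybound (μ : Measure Ω) (T : (Ω → ℝ) → Ω → ℝ) (hT : IsDS μ T)
    (hpos : ∀ f : Ω → ℝ, (∀ᵐ x ∂μ, 0 ≤ f x) → ∀ᵐ x ∂μ, 0 ≤ T f x)
    (g : Ω → ℝ) (hgm : Measurable g) (hgi : Integrable g μ) (hg0 : ∀ x, 0 ≤ g x)
    (l : ℝ) (hl : 0 < l) (N : ℕ) :
    μ {x | ∃ n ≤ N, l < cesaro T (n+1) g x} ≤ ENNReal.ofReal ((∫ x, g x ∂μ) / l) := by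
  classical
  set E := {x | ∃ n ≤ N, l < cesaro T (n+1) g x} with hEdef
  have hcesm : ∀ n : ℕ, Measurable (cesaro T (n+1) g) := by
    intro n
    have : cesaro T (n+1) g = fun x => ergS T g (n+1) x / ((n+1 : ℕ) : ℝ) :=
      funext fun x => by rw [cesaro_eq]
    rw [this]
    exact (ergS_meas hT hgm (n+1)).div_const _
  have hE_eq : E = ⋃ (n : ℕ), ⋃ (_ : n ≤ N), {x | l < cesaro T (n+1) g x} := by
    ext x; simp [hEdef, mem_iUnion]
  have hEm : MeasurableSet E := by
    rw [hE_eq]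
    exact MeasurableSet.iUnion fun n => MeasurableSet.iUnion fun _ =>
      measurableSet_lt measurable_const (hcesm n)
  have hEfin : μ E < ⊤ := by
    have hsub : E ⊆ ⋃ n ∈ Finset.range (N+1), {x | l < cesaro T (n+1) g x} := by
      rw [hE_eq]
      intro x hx
      simp only [mem_iUnion] at hx ⊢
      obtain ⟨n, hn, hx⟩ := hx
      exact ⟨n, Finset.mem_range.mpr (Nat.lt_succ_of_le hn), hx⟩
    refine lt_of_le_of_lt ((measure_mono hsub).trans (measure_biUnion_finset_le _ _)) ?_
    refine ENNReal.sum_lt_top.mpr fun n _ => ?_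
    have hci : Integrable (cesaro T (n+1) g) μ := by
      have : cesaro T (n+1) g = fun x => ergS T g (n+1) x / ((n+1 : ℕ) : ℝ) :=
        funext fun x => by rw [cesaro_eq]
      rw [this]
      exact (ergS_int hT hgm hgi (n+1)).div_const _
    exact hci.measure_gt_lt_top hl
  set χ : Ω → ℝ := E.indicator (fun _ => (1:ℝ)) with hχdef
  have hχm : Measurable χ := measurable_const.indicator hEm
  have hχi : Integrable χ μ :=
    (integrable_indicator_iff hEm).mpr (integrableOn_const hEfin.ne)
  have hχbd : ∀ x, ‖χ x‖ ≤ 1 := by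
    intro x
    rw [hχdef]
    by_cases hx : x ∈ E <;> simp [indicator_of_mem, indicator_of_notMem, hx]
  have hχtopnorm : eLpNorm χ ⊤ μ ≤ 1 := by
    rw [eLpNorm_exponent_top]
    calc eLpNormEssSup χ μ ≤ ENNReal.ofReal 1 :=
          eLpNormEssSup_le_of_ae_bound (Eventually.of_forall hχbd)
      _ = 1 := ENNReal.ofReal_one
  have hχtop : MemLp χ ⊤ μ :=
    ⟨hχm.aestronglyMeasurable, lt_of_le_of_lt hχtopnorm (by norm_num)⟩
  have hTχ_le : ∀ᵐ x ∂μ, ∀ k : ℕ, T^[k] χ x ≤ 1 := by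
    rw [ae_all_iff]
    intro k
    have hb : eLpNorm (T^[k] χ) ⊤ μ ≤ 1 := (ds_iter_Linf hT hχm hχtop k).2.trans hχtopnorm
    rw [eLpNorm_exponent_top] at hb
    filter_upwards [ae_le_eLpNormEssSup (f := T^[k] χ) (μ := μ)] with x hx
    have hx1 : (‖T^[k] χ x‖₊ : ℝ≥0∞) ≤ 1 := hx.trans hb
    rw [← ENNReal.coe_one, ENNReal.coe_le_coe] at hx1
    have : ‖T^[k] χ x‖ ≤ 1 := by exact_mod_cast hx1
    exact le_trans (le_abs_self _) (by rwa [← Real.norm_eq_abs])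
  set h : Ω → ℝ := g - l • χ with hhdef
  have hhm : Measurable h := hgm.sub (hχm.const_smul l)
  have hhi : Integrable h μ := hgi.sub (hχi.smul l)
  -- iterates are linear
  have hiter : ∀ k : ℕ, T^[k] h = T^[k] g - l • T^[k] χ := by
    intro k
    induction k with
    | zero => simp [hhdef]
    | succ n ih =>
      rw [Function.iterate_succ_apply', Function.iterate_succ_apply',
        Function.iterate_succ_apply', ih, ds_sub hT, hT.2.1]
  have hergSh : ∀ n : ℕ, ergS T h n = ergS T g n - l • ergS T χ n := by
    intro n
    rw [ergS, ergS, ergS]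
    simp only [hiter]
    rw [Finset.sum_sub_distrib, Finset.smul_sum]
  -- lower bound for ergS of h
  have claim3 : ∀ᵐ x ∂μ, ∀ n : ℕ, ergS T g (n+1) x - ((n:ℝ)+1) * l ≤ ergS T h (n+1) x := by
    filter_upwards [hTχ_le] with x hx n
    have h1 : ergS T h (n+1) x = ergS T g (n+1) x - l * ergS T χ (n+1) x := by
      rw [hergSh (n+1)]
      simp [Pi.sub_apply, Pi.smul_apply, smul_eq_mul]
    have h2 : ergS T χ (n+1) x ≤ (n:ℝ) + 1 := by
      rw [ergS_apply]
      calc ∑ k ∈ Finset.range (n+1), T^[k] χ x ≤ ∑ k ∈ Finset.range (n+1), (1:ℝ) :=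
            Finset.sum_le_sum fun k _ => hx k
        _ = (n:ℝ) + 1 := by simp
    have h3 : l * ergS T χ (n+1) x ≤ l * ((n:ℝ)+1) := by
      exact mul_le_mul_of_nonneg_left h2 hl.le
    rw [h1]
    nlinarith
  set F := {x | 0 < ergM T h (N+1) x} with hFdef
  have hEF : ∀ᵐ x ∂μ, x ∈ E → x ∈ F := by
    filter_upwards [claim3] with x hx hxE
    obtain ⟨n, hn, hlt⟩ := hxE
    rw [cesaro_eq] at hlt
    have hnpos : (0:ℝ) < ((n+1 : ℕ) : ℝ) := by positivity
    rw [lt_div_iff₀ hnpos] at hlt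
    have h1 : ((n:ℝ)+1) * l < ergS T g (n+1) x := by
      push_cast at hlt
      linarith
    have h2 : 0 < ergS T h (n+1) x := by
      have := hx n
      linarith
    exact lt_of_lt_of_le h2 (ergS_le_ergM h (by omega) x)
  have hENF : μ (E \ F) = 0 := by
    refine measure_mono_null ?_ (ae_iff.mp hEF)
    intro x hx
    simp only [mem_diff] at hx
    simp only [mem_setOf_eq]
    push_neg
    exact ⟨hx.1, hx.2⟩
  have hμEF : μ (F ∩ E) = μ E := by
    refine le_antisymm (measure_mono inter_subset_right) ?_
    calc μ E ≤ μ (F ∩ E) + μ (E \ F) := by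
          refine (measure_mono ?_).trans (measure_union_le _ _)
          intro x hx
          by_cases hxF : x ∈ F
          · exact Or.inl ⟨hxF, hx⟩
          · exact Or.inr ⟨hx, hxF⟩
      _ = μ (F ∩ E) := by rw [hENF, add_zero]
  -- Hopf
  have hhopf : 0 ≤ ∫ x in F, h x ∂μ := hopf μ T hT hpos h hhm hhi N
  have hIχ : ∫ x in F, χ x ∂μ = (μ E).toReal := by
    rw [hχdef]
    rw [setIntegral_indicator hEm]
    rw [setIntegral_const, measureReal_def, hμEF, smul_eq_mul, mul_one]
  have hsplit : ∫ x in F, h x ∂μ = ∫ x in F, g x ∂μ - l * (μ E).toReal := by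
    have : ∀ x, h x = g x - l * χ x := fun x => rfl
    calc ∫ x in F, h x ∂μ = ∫ x in F, (g x - l * χ x) ∂μ := by
          exact setIntegral_congr_ae₀ (by
            exact (measurableSet_lt measurable_const (ergM_meas hT hhm (N+1))).nullMeasurableSet)
            (Eventually.of_forall fun x _ => this x)
      _ = ∫ x in F, g x ∂μ - ∫ x in F, l * χ x ∂μ :=
          integral_sub hgi.integrableOn ((hχi.const_mul l).integrableOn)
      _ = ∫ x in F, g x ∂μ - l * ∫ x in F, χ x ∂μ := by rw [integral_const_mul]
      _ = ∫ x in F, g x ∂μ - l * (μ E).toReal := by rw [hIχ]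
  have hFg : ∫ x in F, g x ∂μ ≤ ∫ x, g x ∂μ :=
    setIntegral_le_integral hgi (Eventually.of_forall hg0)
  have hfinal : l * (μ E).toReal ≤ ∫ x, g x ∂μ := by linarith [hhopf, hsplit, hFg]
  have h1 : (μ E).toReal ≤ (∫ x, g x ∂μ) / l := by
    rw [le_div_iff₀ hl]
    linarith [hfinal]
  calc μ E = ENNReal.ofReal (μ E).toReal := (ENNReal.ofReal_toReal hEfin.ne).symm
    _ ≤ ENNReal.ofReal ((∫ x, g x ∂μ) / l) := ENNReal.ofReal_le_ofReal h1

/-- maximal inequality for a positive Dunford-Schwartz operator on `L¹`: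
`μ{sup_{n≥1} M_n(T)(|f|) > λ} ≤ ‖f‖₁/λ`. -/
theorem stmt5 (μ : Measure Ω) [SigmaFinite μ] (T : (Ω → ℝ) → Ω → ℝ)
    (hT : IsDS μ T)
    (hpos : ∀ f : Ω → ℝ, (∀ᵐ x ∂μ, 0 ≤ f x) → ∀ᵐ x ∂μ, 0 ≤ T f x)
    (f : Ω → ℝ) (hf : Measurable f) (hf1 : MemLp f 1 μ) (l : ℝ) (hl : 0 < l) :
    μ {x | ∃ n : ℕ, l < cesaro T (n + 1) (fun y => |f y|) x} ≤
      eLpNorm f 1 μ / ENNReal.ofReal l := by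
  set g : Ω → ℝ := fun y => |f y| with hgdef
  have hgm : Measurable g := hf.abs
  have hfi : Integrable f μ := memLp_one_iff_integrable.mp hf1
  have hgi : Integrable g μ := hfi.abs
  have hg0 : ∀ x, 0 ≤ g x := fun x => abs_nonneg _
  set A : ℕ → Set Ω := fun N => {x | ∃ n ≤ N, l < cesaro T (n+1) g x} with hAdef
  have hAmono : Monotone A := by
    intro i j hij x hx
    obtain ⟨n, hn, h⟩ := hx
    exact ⟨n, hn.trans hij, h⟩
  have hU : {x | ∃ n : ℕ, l < cesaro T (n + 1) g x} = ⋃ N, A N := by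
    ext x
    simp only [hAdef, mem_setOf_eq, mem_iUnion]
    constructor
    · rintro ⟨n, h⟩; exact ⟨n, n, le_rfl, h⟩
    · rintro ⟨N, n, hn, h⟩; exact ⟨n, h⟩
  rw [hU, (hAmono.directed_le).measure_iUnion]
  refine iSup_le fun N => ?_
  refine le_trans (keybound μ T hT hpos g hgm hgi hg0 l hl N) ?_
  rw [ENNReal.ofReal_div_of_pos hl]
  have heq : ENNReal.ofReal (∫ x, g x ∂μ) = eLpNorm f 1 μ := by
    rw [eLpNorm_one_eq_lintegral_enorm, ← ofReal_integral_norm_eq_lintegral_enorm hfi]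
    simp only [Real.norm_eq_abs]
    rfl
  rw [heq]
end

section
/- Let (Ω,𝒜,μ) be a σ-finite measure space, let T be a Dunford–Schwartz operator on (Ω,μ), and let 1 ≤ p < ∞. Then the set C_p = { f ∈ L^p(Ω) : the sequence (M_n(T)(f)) converges almost uniformly } is closed in L^p(Ω) with respect to the norm ‖·‖_p. -/
open MeasureTheory Filter Set
open scoped ENNReal Topology

variable {Ω : Type*} [MeasurableSpace Ω]

namespace DSproof

variable {μ : Measure Ω} {T : (Ω → ℝ) → Ω → ℝ}

theorem T_add (hT : IsDS μ T) (f g : Ω → ℝ) : T (f + g) = T f + T g := hT.1 f g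

theorem T_smul (hT : IsDS μ T) (c : ℝ) (f : Ω → ℝ) : T (c • f) = c • T f := hT.2.1 c f

theorem T_meas (hT : IsDS μ T) {f : Ω → ℝ} (hf : Measurable f) : Measurable (T f) := hT.2.2.1 f hf

theorem T_L1 (hT : IsDS μ T) {f : Ω → ℝ} (hf : MemLp f 1 μ) :
    eLpNorm (T f) 1 μ ≤ eLpNorm f 1 μ := hT.2.2.2.1 f hf

theorem T_Linf (hT : IsDS μ T) {f : Ω → ℝ} (hf : MemLp f ⊤ μ) :
    eLpNorm (T f) ⊤ μ ≤ eLpNorm f ⊤ μ := hT.2.2.2.2 f hf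

theorem T_zero (hT : IsDS μ T) : T 0 = 0 := by
  have := hT.2.1 0 0
  simpa using this

theorem T_neg (hT : IsDS μ T) (f : Ω → ℝ) : T (-f) = - T f := by
  have := hT.2.1 (-1) f
  simpa [neg_one_smul] using this

theorem T_sub (hT : IsDS μ T) (f g : Ω → ℝ) : T (f - g) = T f - T g := by
  rw [sub_eq_add_neg, hT.1, T_neg hT, sub_eq_add_neg]

theorem T_sum (hT : IsDS μ T) {ι : Type*} (s : Finset ι) (v : ι → Ω → ℝ) :
    T (fun x => ∑ i ∈ s, v i x) = fun x => ∑ i ∈ s, T (v i) x := by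
  classical
  induction s using Finset.induction_on with
  | empty => simp only [Finset.sum_empty]; exact T_zero hT
  | insert a s' hns ih =>
    have h1 : (fun x => ∑ i ∈ insert a s', v i x) = v a + fun x => ∑ i ∈ s', v i x := by
      funext x; simp [Finset.sum_insert hns]
    rw [h1, hT.1, ih]
    funext x; simp [Finset.sum_insert hns]

/-- T respects a.e. equality of measurable functions. -/
theorem T_congr_ae (hT : IsDS μ T) {f g : Ω → ℝ} (hf : Measurable f) (hg : Measurable g)
    (h : f =ᵐ[μ] g) : T f =ᵐ[μ] T g := by
  have hfg : f - g =ᵐ[μ] 0 := by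
    filter_upwards [h] with x hx; simp [hx]
  have hmem : MemLp (f - g) 1 μ := by
    constructor
    · exact (hf.sub hg).aestronglyMeasurable
    · rw [eLpNorm_congr_ae hfg]; simp
  have h0 : eLpNorm (T (f - g)) 1 μ = 0 := by
    refine le_antisymm ?_ (zero_le)
    calc eLpNorm (T (f - g)) 1 μ ≤ eLpNorm (f - g) 1 μ := T_L1 hT hmem
    _ = 0 := by rw [eLpNorm_congr_ae hfg]; simp
  have h1 := (eLpNorm_eq_zero_iff ((T_meas hT (hf.sub hg)).aestronglyMeasurable) one_ne_zero).mp h0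
  have h1' : T (f - g) =ᵐ[μ] 0 := h1
  rw [T_sub hT f g] at h1'
  filter_upwards [h1'] with x hx
  have : T f x - T g x = 0 := by simpa using hx
  linarith

/-- `∫⁻ ‖T f‖ ≤ ∫⁻ ‖f‖` for integrable measurable f. -/
theorem T_lintegral (hT : IsDS μ T) {f : Ω → ℝ} (hf : Measurable f) (hfi : Integrable f μ) :
    ∫⁻ x, ‖T f x‖₊ ∂μ ≤ ∫⁻ x, ‖f x‖₊ ∂μ := by
  have := T_L1 hT (memLp_one_iff_integrable.mpr hfi)
  rwa [eLpNorm_one_eq_lintegral_enorm, eLpNorm_one_eq_lintegral_enorm] at this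

theorem T_integrable (hT : IsDS μ T) {f : Ω → ℝ} (hf : Measurable f) (hfi : Integrable f μ) :
    Integrable (T f) μ := by
  refine ⟨(T_meas hT hf).aestronglyMeasurable, ?_⟩
  have : HasFiniteIntegral (T f) μ := by
    rw [hasFiniteIntegral_iff_norm]
    have h1 : ∫⁻ x, ENNReal.ofReal ‖T f x‖ ∂μ = ∫⁻ x, (‖T f x‖₊ : ℝ≥0∞) ∂μ := by
      congr 1; funext x; rw [← enorm_eq_nnnorm, ← ofReal_norm]
    rw [h1]
    refine lt_of_le_of_lt (T_lintegral hT hf hfi) ?_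
    have := hfi.2
    rw [hasFiniteIntegral_iff_norm] at this
    have h2 : ∫⁻ x, ENNReal.ofReal ‖f x‖ ∂μ = ∫⁻ x, (‖f x‖₊ : ℝ≥0∞) ∂μ := by
      congr 1; funext x; rw [← enorm_eq_nnnorm, ← ofReal_norm]
    rwa [h2] at this
  exact this

/-- a.e. bound from `L∞` norm. -/
theorem ae_le_of_eLpNormTop_le {f : Ω → ℝ} {c : ℝ} (hc : 0 ≤ c)
    (h : eLpNorm f ⊤ μ ≤ ENNReal.ofReal c) : ∀ᵐ x ∂μ, |f x| ≤ c := by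
  have h2 : ∀ᵐ x ∂μ, (‖f x‖₊ : ℝ≥0∞) ≤ eLpNorm f ⊤ μ := ae_le_eLpNormEssSup
  filter_upwards [h2] with x hx
  have : (‖f x‖₊ : ℝ≥0∞) ≤ ENNReal.ofReal c := le_trans hx h
  have := ENNReal.toReal_mono (by simp) this
  simpa [Real.norm_eq_abs, ENNReal.toReal_ofReal hc, abs_nonneg] using this

theorem eLpNormTop_le_of_ae_le {f : Ω → ℝ} {c : ℝ} (h : ∀ᵐ x ∂μ, |f x| ≤ c) :
    eLpNorm f ⊤ μ ≤ ENNReal.ofReal c := by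
  rw [eLpNorm_exponent_top]
  refine essSup_le_of_ae_le _ ?_
  filter_upwards [h] with x hx
  calc (‖f x‖₊ : ℝ≥0∞) = ENNReal.ofReal |f x| := by
        rw [← enorm_eq_nnnorm, ← ofReal_norm, Real.norm_eq_abs]
  _ ≤ ENNReal.ofReal c := ENNReal.ofReal_le_ofReal hx

theorem memLpTop_of_ae_le {f : Ω → ℝ} (hf : Measurable f) {c : ℝ} (h : ∀ᵐ x ∂μ, |f x| ≤ c) :
    MemLp f ⊤ μ :=
  ⟨hf.aestronglyMeasurable, lt_of_le_of_lt (eLpNormTop_le_of_ae_le h) ENNReal.ofReal_lt_top⟩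


/-! ### The decomposition family (Chacon–Krengel) -/

/-- Members of the family whose supremum is the linear modulus applied to `u`. -/
def DMem (μ : Measure Ω) (T : (Ω → ℝ) → Ω → ℝ) (u f : Ω → ℝ) : Prop :=
  ∃ (m : ℕ) (v : ℕ → Ω → ℝ),
    (∀ i, Measurable (v i)) ∧ (∀ i, 0 ≤ᵐ[μ] v i) ∧
    ((fun x => ∑ i ∈ Finset.range m, v i x) =ᵐ[μ] u) ∧
    f = fun x => ∑ i ∈ Finset.range m, |T (v i) x|

theorem DMem.meas (hT : IsDS μ T) {u f : Ω → ℝ} (h : DMem μ T u f) : Measurable f := by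
  obtain ⟨m, v, hv, -, -, rfl⟩ := h
  exact Finset.measurable_sum _ (fun i _ => (T_meas hT (hv i)).abs)

theorem DMem.nonneg {u f : Ω → ℝ} (h : DMem μ T u f) : ∀ x, 0 ≤ f x := by
  obtain ⟨m, v, -, -, -, rfl⟩ := h
  exact fun x => Finset.sum_nonneg (fun i _ => abs_nonneg _)

theorem DMem.self {u : Ω → ℝ} (hu : Measurable u) (hnn : 0 ≤ᵐ[μ] u) :
    DMem μ T u (fun x => |T u x|) := by
  refine ⟨1, fun _ => u, fun _ => hu, fun _ => hnn, ?_, ?_⟩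
  · have : (fun x => ∑ _i ∈ Finset.range 1, u x) = u := by funext x; simp
    rw [this]
  · funext x; simp

theorem sum_range_mul_eq {β : Type*} [AddCommMonoid β] (G : ℕ → β) (m l : ℕ) :
    ∑ n ∈ Finset.range (m * l), G n
      = ∑ i ∈ Finset.range m, ∑ j ∈ Finset.range l, G (i * l + j) := by
  induction m with
  | zero => simp
  | succ m ih =>
    have h1 : (m + 1) * l = m * l + l := by ring
    have h2 : ∑ n ∈ Finset.Ico 0 (m * l), G n + ∑ n ∈ Finset.Ico (m * l) (m * l + l), G n
        = ∑ n ∈ Finset.Ico 0 (m * l + l), G n :=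
      Finset.sum_Ico_consecutive G (Nat.zero_le _) (Nat.le_add_right _ _)
    have h3 : ∑ n ∈ Finset.Ico (m * l) (m * l + l), G n
        = ∑ j ∈ Finset.range l, G (m * l + j) := by
      rw [Finset.sum_Ico_eq_sum_range]; simp
    rw [h1, ← Finset.range_eq_Ico] at *
    rw [← Finset.range_eq_Ico] at h2
    rw [← h2, h3, ih, Finset.sum_range_succ]

/-- Each piece of a decomposition of `u` is integrable. -/
theorem decomp_piece_integrable (hui : Integrable u μ) {m : ℕ} {v : ℕ → Ω → ℝ}
    (hv : ∀ i, Measurable (v i)) (hnn : ∀ i, 0 ≤ᵐ[μ] v i)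
    (hsum : (fun x => ∑ i ∈ Finset.range m, v i x) =ᵐ[μ] u) {i : ℕ} (hi : i < m) :
    Integrable (v i) μ := by
  refine hui.mono (hv i).aestronglyMeasurable ?_
  have hall : ∀ᵐ x ∂μ, ∀ j, 0 ≤ v j x := ae_all_iff.mpr hnn
  filter_upwards [hall, hsum] with x hx hs
  have h1 : v i x ≤ ∑ j ∈ Finset.range m, v j x :=
    Finset.single_le_sum (fun j _ => hx j) (Finset.mem_range.mpr hi)
  rw [Real.norm_eq_abs, Real.norm_eq_abs, abs_of_nonneg (hx i)]
  have : 0 ≤ u x := by rw [← hs]; exact Finset.sum_nonneg (fun j _ => hx j)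
  rw [abs_of_nonneg this]
  calc v i x ≤ ∑ j ∈ Finset.range m, v j x := h1
  _ = u x := hs

theorem DMem.lintegral_le (hT : IsDS μ T) {u f : Ω → ℝ} (hui : Integrable u μ)
    (h : DMem μ T u f) :
    ∫⁻ x, ENNReal.ofReal (f x) ∂μ ≤ ∫⁻ x, ENNReal.ofReal (u x) ∂μ := by
  obtain ⟨m, v, hv, hnn, hsum, rfl⟩ := h
  have hvi : ∀ i ∈ Finset.range m, Integrable (v i) μ := fun i hi =>
    decomp_piece_integrable hui hv hnn hsum (Finset.mem_range.mp hi)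
  have h1 : ∫⁻ x, ENNReal.ofReal (∑ i ∈ Finset.range m, |T (v i) x|) ∂μ
      = ∑ i ∈ Finset.range m, ∫⁻ x, ENNReal.ofReal (|T (v i) x|) ∂μ := by
    rw [← lintegral_finset_sum _ (fun i _ => ((T_meas hT (hv i)).abs.ennreal_ofReal))]
    congr 1; funext x
    exact ENNReal.ofReal_sum_of_nonneg (fun i _ => abs_nonneg _)
  rw [h1]
  have h2 : ∀ i ∈ Finset.range m,
      ∫⁻ x, ENNReal.ofReal (|T (v i) x|) ∂μ ≤ ∫⁻ x, ENNReal.ofReal (v i x) ∂μ := by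
    intro i hi
    have hTl := T_lintegral hT (hv i) (hvi i hi)
    have e1 : ∀ g : Ω → ℝ, (∫⁻ x, ENNReal.ofReal (|g x|) ∂μ) = ∫⁻ x, (‖g x‖₊ : ℝ≥0∞) ∂μ := by
      intro g; congr 1; funext x
      rw [← Real.enorm_eq_ofReal (abs_nonneg _)]; simp; rfl
    rw [e1]
    refine le_trans hTl (le_of_eq ?_)
    refine lintegral_congr_ae ?_
    filter_upwards [hnn i] with x hx
    rw [← enorm_eq_nnnorm, Real.enorm_eq_ofReal hx]
  calc ∑ i ∈ Finset.range m, ∫⁻ x, ENNReal.ofReal (|T (v i) x|) ∂μ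
      ≤ ∑ i ∈ Finset.range m, ∫⁻ x, ENNReal.ofReal (v i x) ∂μ := Finset.sum_le_sum h2
  _ = ∫⁻ x, ∑ i ∈ Finset.range m, ENNReal.ofReal (v i x) ∂μ := by
      rw [lintegral_finset_sum _ (fun i _ => (hv i).ennreal_ofReal)]
  _ = ∫⁻ x, ENNReal.ofReal (u x) ∂μ := by
      refine lintegral_congr_ae ?_
      filter_upwards [ae_all_iff.mpr hnn, hsum] with x hx hs
      rw [← ENNReal.ofReal_sum_of_nonneg (fun i _ => hx i), hs]


theorem DMem.directed (hT : IsDS μ T) {u f₁ f₂ : Ω → ℝ} (hu : Measurable u)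
    (h₁ : DMem μ T u f₁) (h₂ : DMem μ T u f₂) :
    ∃ f₃, DMem μ T u f₃ ∧ f₁ ≤ᵐ[μ] f₃ ∧ f₂ ≤ᵐ[μ] f₃ := by
  obtain ⟨m, v, hv, hvn, hvs, rfl⟩ := h₁
  obtain ⟨l, w, hw, hwn, hws, rfl⟩ := h₂
  rcases Nat.eq_zero_or_pos m with hm | hm
  · subst hm
    refine ⟨_, ⟨l, w, hw, hwn, hws, rfl⟩, ?_, Filter.EventuallyLE.refl _ _⟩
    refine Filter.Eventually.of_forall (fun x => ?_)
    simp only [Finset.range_zero, Finset.sum_empty]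
    exact Finset.sum_nonneg (fun j _ => abs_nonneg _)
  rcases Nat.eq_zero_or_pos l with hl | hl
  · subst hl
    refine ⟨_, ⟨m, v, hv, hvn, hvs, rfl⟩, Filter.EventuallyLE.refl _ _, ?_⟩
    refine Filter.Eventually.of_forall (fun x => ?_)
    simp only [Finset.range_zero, Finset.sum_empty]
    exact Finset.sum_nonneg (fun j _ => abs_nonneg _)
  -- main case
  set r : ℕ → Ω → ℝ := fun n x => if u x = 0 then 0 else v (n / l) x * w (n % l) x / u x with hr
  have hr_meas : ∀ n, Measurable (r n) := by
    intro n
    refine Measurable.ite (hu (measurableSet_singleton 0)) measurable_const ?_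
    exact ((hv _).mul (hw _)).div hu
  -- the good a.e. set
  have hgood : ∀ᵐ x ∂μ, (∀ i, 0 ≤ v i x) ∧ (∀ j, 0 ≤ w j x) ∧
      (∑ i ∈ Finset.range m, v i x) = u x ∧ (∑ j ∈ Finset.range l, w j x) = u x := by
    filter_upwards [ae_all_iff.mpr hvn, ae_all_iff.mpr hwn, hvs, hws] with x a b c d
    exact ⟨a, b, c, d⟩
  have hrij : ∀ i j, i < m → j < l → ∀ x, (∀ i, 0 ≤ v i x) → (∀ j, 0 ≤ w j x) →
      (∑ i ∈ Finset.range m, v i x) = u x → (∑ j ∈ Finset.range l, w j x) = u x →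
      r (i * l + j) x = if u x = 0 then 0 else v i x * w j x / u x := by
    intro i j hi hj x _ _ _ _
    have e1 : (i * l + j) / l = i := by
      rw [mul_comm i l, Nat.mul_add_div hl, Nat.div_eq_of_lt hj, add_zero]
    have e2 : (i * l + j) % l = j := by
      rw [mul_comm i l, Nat.mul_add_mod, Nat.mod_eq_of_lt hj]
    simp only [hr, e1, e2]
  have hr_nn : ∀ n, 0 ≤ᵐ[μ] r n := by
    intro n
    filter_upwards [hgood] with x ⟨ha, hb, hc, _⟩
    by_cases h0 : u x = 0
    · simp [hr, h0]
    · have hupos : 0 < u x := by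
        rcases lt_or_eq_of_le (hc ▸ Finset.sum_nonneg (fun i _ => ha i)) with h | h
        · exact h
        · exact absurd h.symm h0
      simp only [hr, if_neg h0]
      have := ha (n / l); have := hb (n % l)
      positivity
  have hr_sum : (fun x => ∑ n ∈ Finset.range (m * l), r n x) =ᵐ[μ] u := by
    filter_upwards [hgood] with x ⟨ha, hb, hc, hd⟩
    by_cases h0 : u x = 0
    · have hz : ∑ n ∈ Finset.range (m * l), r n x = 0 :=
        Finset.sum_eq_zero (fun n _ => by simp [hr, h0])
      rw [hz, h0]
    · have : ∑ n ∈ Finset.range (m * l), r n x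
          = ∑ i ∈ Finset.range m, ∑ j ∈ Finset.range l, v i x * w j x / u x := by
        rw [sum_range_mul_eq (fun n => r n x) m l]
        refine Finset.sum_congr rfl (fun i hi => Finset.sum_congr rfl (fun j hj => ?_))
        rw [hrij i j (Finset.mem_range.mp hi) (Finset.mem_range.mp hj) x ha hb hc hd,
          if_neg h0]
      rw [this]
      have : ∑ i ∈ Finset.range m, ∑ j ∈ Finset.range l, v i x * w j x / u x
          = (∑ i ∈ Finset.range m, v i x) * (∑ j ∈ Finset.range l, w j x) / u x := by
        rw [Finset.sum_mul, Finset.sum_div]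
        refine Finset.sum_congr rfl (fun i _ => ?_)
        rw [Finset.mul_sum, Finset.sum_div]
      rw [this, hc, hd]
      field_simp
  refine ⟨_, ⟨m * l, r, hr_meas, hr_nn, hr_sum, rfl⟩, ?_, ?_⟩
  -- domination of f₁
  · have key : ∀ i, i < m → T (v i) =ᵐ[μ] fun x => ∑ j ∈ Finset.range l, T (r (i * l + j)) x := by
      intro i hi
      have heq : v i =ᵐ[μ] fun x => ∑ j ∈ Finset.range l, r (i * l + j) x := by
        filter_upwards [hgood] with x ⟨ha, hb, hc, hd⟩
        by_cases h0 : u x = 0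
        · have hvz : v i x = 0 := by
            have h1 : v i x ≤ ∑ i' ∈ Finset.range m, v i' x :=
              Finset.single_le_sum (fun i' _ => ha i') (Finset.mem_range.mpr hi)
            have h2 := hc.trans h0
            linarith [ha i, h1, h2.le]
          rw [hvz]
          symm
          refine Finset.sum_eq_zero (fun j hj => ?_)
          rw [hrij i j hi (Finset.mem_range.mp hj) x ha hb hc hd, if_pos h0]
        · have : ∀ j ∈ Finset.range l, r (i * l + j) x = v i x * w j x / u x := by
            intro j hj
            rw [hrij i j hi (Finset.mem_range.mp hj) x ha hb hc hd, if_neg h0]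
          rw [Finset.sum_congr rfl this]
          have : ∑ j ∈ Finset.range l, v i x * w j x / u x
              = v i x * (∑ j ∈ Finset.range l, w j x) / u x := by
            rw [Finset.mul_sum, Finset.sum_div]
          rw [this, hd]
          field_simp
      have hms : Measurable fun x => ∑ j ∈ Finset.range l, r (i * l + j) x :=
        Finset.measurable_sum _ (fun j _ => hr_meas _)
      calc T (v i) =ᵐ[μ] T (fun x => ∑ j ∈ Finset.range l, r (i * l + j) x) :=
            T_congr_ae hT (hv i) hms heq
      _ = fun x => ∑ j ∈ Finset.range l, T (r (i * l + j)) x := T_sum hT _ _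
    have keyall : ∀ᵐ x ∂μ, ∀ i, i < m →
        T (v i) x = ∑ j ∈ Finset.range l, T (r (i * l + j)) x := by
      rw [ae_all_iff]
      intro i
      by_cases hi : i < m
      · filter_upwards [key i hi] with x hx
        intro _
        exact hx
      · exact Filter.Eventually.of_forall (fun x h => absurd h hi)
    filter_upwards [keyall] with x hx
    calc ∑ i ∈ Finset.range m, |T (v i) x|
        = ∑ i ∈ Finset.range m, |∑ j ∈ Finset.range l, T (r (i * l + j)) x| := by
          refine Finset.sum_congr rfl (fun i hi => ?_)
          rw [hx i (Finset.mem_range.mp hi)]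
    _ ≤ ∑ i ∈ Finset.range m, ∑ j ∈ Finset.range l, |T (r (i * l + j)) x| :=
          Finset.sum_le_sum (fun i _ => Finset.abs_sum_le_sum_abs _ _)
    _ = ∑ n ∈ Finset.range (m * l), |T (r n) x| :=
          (sum_range_mul_eq (fun n => |T (r n) x|) m l).symm
  -- domination of f₂
  · have key : ∀ j, j < l → T (w j) =ᵐ[μ] fun x => ∑ i ∈ Finset.range m, T (r (i * l + j)) x := by
      intro j hj
      have heq : w j =ᵐ[μ] fun x => ∑ i ∈ Finset.range m, r (i * l + j) x := by
        filter_upwards [hgood] with x ⟨ha, hb, hc, hd⟩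
        by_cases h0 : u x = 0
        · have hwz : w j x = 0 := by
            have h1 : w j x ≤ ∑ j' ∈ Finset.range l, w j' x :=
              Finset.single_le_sum (fun j' _ => hb j') (Finset.mem_range.mpr hj)
            have h2 := hd.trans h0
            linarith [hb j, h1, h2.le]
          rw [hwz]
          symm
          refine Finset.sum_eq_zero (fun i hi => ?_)
          rw [hrij i j (Finset.mem_range.mp hi) hj x ha hb hc hd, if_pos h0]
        · have : ∀ i ∈ Finset.range m, r (i * l + j) x = v i x * w j x / u x := by
            intro i hi
            rw [hrij i j (Finset.mem_range.mp hi) hj x ha hb hc hd, if_neg h0]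
          rw [Finset.sum_congr rfl this]
          have : ∑ i ∈ Finset.range m, v i x * w j x / u x
              = (∑ i ∈ Finset.range m, v i x) * w j x / u x := by
            rw [Finset.sum_mul, Finset.sum_div]
          rw [this, hc]
          field_simp
      have hms : Measurable fun x => ∑ i ∈ Finset.range m, r (i * l + j) x :=
        Finset.measurable_sum _ (fun i _ => hr_meas _)
      calc T (w j) =ᵐ[μ] T (fun x => ∑ i ∈ Finset.range m, r (i * l + j) x) :=
            T_congr_ae hT (hw j) hms heq
      _ = fun x => ∑ i ∈ Finset.range m, T (r (i * l + j)) x := T_sum hT _ _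
    have keyall : ∀ᵐ x ∂μ, ∀ j, j < l →
        T (w j) x = ∑ i ∈ Finset.range m, T (r (i * l + j)) x := by
      rw [ae_all_iff]
      intro j
      by_cases hj : j < l
      · filter_upwards [key j hj] with x hx
        intro _
        exact hx
      · exact Filter.Eventually.of_forall (fun x h => absurd h hj)
    filter_upwards [keyall] with x hx
    calc ∑ j ∈ Finset.range l, |T (w j) x|
        = ∑ j ∈ Finset.range l, |∑ i ∈ Finset.range m, T (r (i * l + j)) x| := by
          refine Finset.sum_congr rfl (fun j hj => ?_)
          rw [hx j (Finset.mem_range.mp hj)]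
    _ ≤ ∑ j ∈ Finset.range l, ∑ i ∈ Finset.range m, |T (r (i * l + j)) x| :=
          Finset.sum_le_sum (fun j _ => Finset.abs_sum_le_sum_abs _ _)
    _ = ∑ i ∈ Finset.range m, ∑ j ∈ Finset.range l, |T (r (i * l + j)) x| := Finset.sum_comm
    _ = ∑ n ∈ Finset.range (m * l), |T (r n) x| :=
          (sum_range_mul_eq (fun n => |T (r n) x|) m l).symm


/-! ### Construction of the modulus `tau` -/

def tauSpec (μ : Measure Ω) (T : (Ω → ℝ) → Ω → ℝ) (u t : Ω → ℝ) : Prop :=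
  Measurable t ∧ (∀ x, 0 ≤ t x) ∧
    (∫⁻ x, ENNReal.ofReal (t x) ∂μ ≤ ∫⁻ x, ENNReal.ofReal (u x) ∂μ) ∧
    (∀ f, DMem μ T u f → f ≤ᵐ[μ] t) ∧
    ∃ gs : ℕ → Ω → ℝ, (∀ k, DMem μ T u (gs k)) ∧
      ∀ᵐ x ∂μ, Tendsto (fun k => gs k x) atTop (𝓝 (t x))

theorem lintegral_ofReal_lt_top {u : Ω → ℝ} (hui : Integrable u μ) :
    ∫⁻ x, ENNReal.ofReal (u x) ∂μ < ⊤ := by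
  have h := hui.2
  rw [hasFiniteIntegral_iff_norm] at h
  refine lt_of_le_of_lt ?_ h
  refine lintegral_mono (fun x => ENNReal.ofReal_le_ofReal ?_)
  rw [Real.norm_eq_abs]
  exact le_abs_self _

theorem exists_tau (hT : IsDS μ T) {u : Ω → ℝ} (hu : Measurable u) (hui : Integrable u μ)
    (hnn : 0 ≤ᵐ[μ] u) : ∃ t, tauSpec μ T u t := by
  classical
  set Dset : Set ℝ≥0∞ := (fun f => ∫⁻ x, ENNReal.ofReal (f x) ∂μ) '' {f | DMem μ T u f}
    with hDset
  have hne : Dset.Nonempty := ⟨_, ⟨_, DMem.self hu hnn, rfl⟩⟩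
  set S := sSup Dset with hS
  have hSle : S ≤ ∫⁻ x, ENNReal.ofReal (u x) ∂μ := by
    refine sSup_le ?_
    rintro b ⟨f, hf, rfl⟩
    exact DMem.lintegral_le hT hui hf
  have hSfin : S < ⊤ := lt_of_le_of_lt hSle (lintegral_ofReal_lt_top hui)
  obtain ⟨a, ha_mono, ha_tendsto, ha_mem⟩ := exists_seq_tendsto_sSup hne (OrderTop.bddAbove _)
  have hg : ∀ k, ∃ f, DMem μ T u f ∧ ∫⁻ x, ENNReal.ofReal (f x) ∂μ = a k := by
    intro k
    obtain ⟨f, hf, hfe⟩ := ha_mem k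
    exact ⟨f, hf, hfe⟩
  choose g hg_mem hg_int using hg
  -- total directedness choice function
  have hdir : ∀ a b : Ω → ℝ, ∃ c,
      DMem μ T u a → DMem μ T u b → DMem μ T u c ∧ a ≤ᵐ[μ] c ∧ b ≤ᵐ[μ] c := by
    intro a b
    by_cases h : DMem μ T u a ∧ DMem μ T u b
    · obtain ⟨c, hc1, hc2, hc3⟩ := DMem.directed hT hu h.1 h.2
      exact ⟨c, fun _ _ => ⟨hc1, hc2, hc3⟩⟩
    · exact ⟨0, fun h1 h2 => absurd ⟨h1, h2⟩ h⟩
  choose Fc hFc using hdir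
  set gh : ℕ → Ω → ℝ := fun k => Nat.rec (g 0) (fun k prev => Fc prev (g (k + 1))) k with hgh
  have hgh_mem : ∀ k, DMem μ T u (gh k) := by
    intro k
    induction k with
    | zero => exact hg_mem 0
    | succ k ih => exact ((hFc (gh k) (g (k + 1))) ih (hg_mem (k + 1))).1
  have hgh_step : ∀ k, gh k ≤ᵐ[μ] gh (k + 1) :=
    fun k => ((hFc (gh k) (g (k + 1))) (hgh_mem k) (hg_mem (k + 1))).2.1
  have hgh_ge : ∀ k, g k ≤ᵐ[μ] gh k := by
    intro k
    cases k with
    | zero => exact Filter.EventuallyLE.refl _ _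
    | succ k => exact ((hFc (gh k) (g (k + 1))) (hgh_mem k) (hg_mem (k + 1))).2.2
  have hgh_meas : ∀ k, Measurable (gh k) := fun k => (hgh_mem k).meas hT
  have hstep_ae : ∀ᵐ x ∂μ, ∀ k, gh k x ≤ gh (k + 1) x := ae_all_iff.mpr hgh_step
  have hmono_ae : ∀ᵐ x ∂μ, Monotone fun k => ENNReal.ofReal (gh k x) := by
    filter_upwards [hstep_ae] with x hx
    exact monotone_nat_of_le_succ (fun k => ENNReal.ofReal_le_ofReal (hx k))
  set G : Ω → ℝ≥0∞ := fun x => ⨆ k, ENNReal.ofReal (gh k x) with hG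
  have hG_meas : Measurable G := Measurable.iSup (fun k => (hgh_meas k).ennreal_ofReal)
  have hG_int : ∫⁻ x, G x ∂μ = S := by
    rw [hG]
    rw [lintegral_iSup' (fun k => ((hgh_meas k).ennreal_ofReal).aemeasurable) hmono_ae]
    refine le_antisymm ?_ ?_
    · refine iSup_le (fun k => ?_)
      exact le_sSup ⟨gh k, hgh_mem k, rfl⟩
    · refine le_of_tendsto ha_tendsto (Filter.Eventually.of_forall (fun k => ?_))
      calc a k = ∫⁻ x, ENNReal.ofReal (g k x) ∂μ := (hg_int k).symm
      _ ≤ ∫⁻ x, ENNReal.ofReal (gh k x) ∂μ := by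
          refine lintegral_mono_ae ?_
          filter_upwards [hgh_ge k] with x hx
          exact ENNReal.ofReal_le_ofReal hx
      _ ≤ ⨆ k, ∫⁻ x, ENNReal.ofReal (gh k x) ∂μ :=
          le_iSup (fun k => ∫⁻ x, ENNReal.ofReal (gh k x) ∂μ) k
  have hG_fin : ∀ᵐ x ∂μ, G x < ⊤ := by
    refine ae_lt_top hG_meas ?_
    rw [hG_int]; exact hSfin.ne
  set t : Ω → ℝ := fun x => (G x).toReal with ht
  have ht_meas : Measurable t := hG_meas.ennreal_toReal
  have ht_nn : ∀ x, 0 ≤ t x := fun x => ENNReal.toReal_nonneg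
  have ht_ofReal : (fun x => ENNReal.ofReal (t x)) =ᵐ[μ] G := by
    filter_upwards [hG_fin] with x hx
    simp only [ht]
    exact ENNReal.ofReal_toReal hx.ne
  have ht_int : ∫⁻ x, ENNReal.ofReal (t x) ∂μ = S := by
    rw [lintegral_congr_ae ht_ofReal, hG_int]
  -- domination of members
  have hdom : ∀ f, DMem μ T u f → f ≤ᵐ[μ] t := by
    intro f hf
    have h1 : ∫⁻ x, (G x ⊔ ENNReal.ofReal (f x)) ∂μ ≤ S := by
      have e1 : (fun x => G x ⊔ ENNReal.ofReal (f x))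
          = fun x => ⨆ k, ENNReal.ofReal (max (gh k x) (f x)) := by
        funext x
        simp only [hG]
        refine le_antisymm ?_ ?_
        · refine sup_le (iSup_le fun k =>
            le_iSup_of_le k (ENNReal.ofReal_le_ofReal (le_max_left _ _)))
            (le_iSup_of_le 0 (ENNReal.ofReal_le_ofReal (le_max_right _ _)))
        · refine iSup_le fun k => ?_
          rcases max_cases (gh k x) (f x) with ⟨h, -⟩ | ⟨h, -⟩ <;> rw [h]
          · exact le_sup_of_le_left (le_iSup_of_le k le_rfl)
          · exact le_sup_right
      rw [e1]
      rw [lintegral_iSup' (fun k => (((hgh_meas k).max (hf.meas hT)).ennreal_ofReal).aemeasurable) ?_]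
      · refine iSup_le (fun k => ?_)
        obtain ⟨hcm, hc1, hc2⟩ := (hFc (gh k) f) (hgh_mem k) hf
        refine le_trans ?_ (le_sSup ⟨_, hcm, rfl⟩)
        refine lintegral_mono_ae ?_
        filter_upwards [hc1, hc2] with x hx1 hx2
        exact ENNReal.ofReal_le_ofReal (max_le hx1 hx2)
      · filter_upwards [hstep_ae] with x hx
        exact monotone_nat_of_le_succ (fun k =>
          ENNReal.ofReal_le_ofReal (max_le_max (hx k) le_rfl))
    have h2 : ∫⁻ x, (G x ⊔ ENNReal.ofReal (f x)) - G x ∂μ = 0 := by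
      have hle : (fun x => G x) ≤ᵐ[μ] fun x => G x ⊔ ENNReal.ofReal (f x) :=
        Filter.Eventually.of_forall (fun x => le_sup_left)
      rw [lintegral_sub hG_meas (by rw [hG_int]; exact hSfin.ne) hle]
      rw [hG_int]
      exact tsub_eq_zero_of_le (le_trans h1 le_rfl)
    have h3 := (lintegral_eq_zero_iff
      ((hG_meas.sup (hf.meas hT).ennreal_ofReal).sub hG_meas)).mp h2
    filter_upwards [h3, hG_fin] with x hx hfin
    simp only [Pi.zero_apply] at hx
    have h4 : ENNReal.ofReal (f x) ≤ G x := by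
      have := tsub_eq_zero_iff_le.mp hx
      exact le_trans le_sup_right this
    rcases le_or_gt (f x) 0 with h | h
    · exact le_trans h (ht_nn x)
    · have : (ENNReal.ofReal (f x)).toReal ≤ (G x).toReal :=
        ENNReal.toReal_mono hfin.ne h4
      rwa [ENNReal.toReal_ofReal h.le] at this
  refine ⟨t, ht_meas, ht_nn, by rw [ht_int]; exact hSle, hdom, gh, hgh_mem, ?_⟩
  -- approximation
  have hbd : ∀ᵐ x ∂μ, ∀ k, gh k x ≤ t x := ae_all_iff.mpr (fun k => hdom _ (hgh_mem k))
  filter_upwards [hbd, hstep_ae, hG_fin] with x hxb hxs hxf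
  have hmono : Monotone fun k => gh k x := monotone_nat_of_le_succ hxs
  have hbdd : BddAbove (Set.range fun k => gh k x) := ⟨t x, by rintro y ⟨k, rfl⟩; exact hxb k⟩
  have htend : Tendsto (fun k => gh k x) atTop (𝓝 (⨆ k, gh k x)) :=
    tendsto_atTop_ciSup hmono hbdd
  have hL : (⨆ k, gh k x) = t x := by
    refine le_antisymm (ciSup_le (fun k => hxb k)) ?_
    have h0L : 0 ≤ ⨆ k, gh k x :=
      le_trans ((hgh_mem 0).nonneg x) (le_ciSup hbdd 0)
    have : ENNReal.ofReal (t x) ≤ ENNReal.ofReal (⨆ k, gh k x) := by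
      have e : ENNReal.ofReal (t x) = G x := by
        simp only [ht]; exact ENNReal.ofReal_toReal hxf.ne
      rw [e, hG]
      exact iSup_le (fun k => ENNReal.ofReal_le_ofReal (le_ciSup hbdd k))
    exact (ENNReal.ofReal_le_ofReal_iff h0L).mp this
  rwa [hL] at htend

open Classical in
/-- The linear modulus applied to a nonnegative integrable function. -/
noncomputable def tau (μ : Measure Ω) (T : (Ω → ℝ) → Ω → ℝ) (u : Ω → ℝ) : Ω → ℝ :=
  if h : IsDS μ T ∧ Measurable u ∧ Integrable u μ ∧ 0 ≤ᵐ[μ] u then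
    (exists_tau h.1 h.2.1 h.2.2.1 h.2.2.2).choose
  else 0

theorem tau_spec (hT : IsDS μ T) {u : Ω → ℝ} (hu : Measurable u) (hui : Integrable u μ)
    (hnn : 0 ≤ᵐ[μ] u) : tauSpec μ T u (tau μ T u) := by
  classical
  rw [tau]
  rw [dif_pos (⟨hT, hu, hui, hnn⟩ : IsDS μ T ∧ Measurable u ∧ Integrable u μ ∧ 0 ≤ᵐ[μ] u)]
  exact (exists_tau hT hu hui hnn).choose_spec


section TauAPI

variable (hT : IsDS μ T) {u u' : Ω → ℝ}

theorem tau_nonneg (μ : Measure Ω) (T : (Ω → ℝ) → Ω → ℝ) (u : Ω → ℝ) :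
    ∀ x, 0 ≤ tau μ T u x := by
  intro x
  rw [tau]
  split
  · next h => exact (exists_tau h.1 h.2.1 h.2.2.1 h.2.2.2).choose_spec.2.1 x
  · exact le_rfl

variable (hu : Measurable u) (hui : Integrable u μ) (hnn : 0 ≤ᵐ[μ] u)

include hT hu hui hnn

theorem tau_meas : Measurable (tau μ T u) := (tau_spec hT hu hui hnn).1

theorem tau_lintegral_le :
    ∫⁻ x, ENNReal.ofReal (tau μ T u x) ∂μ ≤ ∫⁻ x, ENNReal.ofReal (u x) ∂μ :=
  (tau_spec hT hu hui hnn).2.2.1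

theorem tau_integrable : Integrable (tau μ T u) μ := by
  refine ⟨(tau_meas hT hu hui hnn).aestronglyMeasurable, ?_⟩
  rw [hasFiniteIntegral_iff_norm]
  have e : ∫⁻ x, ENNReal.ofReal ‖tau μ T u x‖ ∂μ = ∫⁻ x, ENNReal.ofReal (tau μ T u x) ∂μ := by
    congr 1; funext x
    rw [Real.norm_eq_abs, abs_of_nonneg (tau_nonneg μ T u x)]
  rw [e]
  exact lt_of_le_of_lt (tau_lintegral_le hT hu hui hnn) (lintegral_ofReal_lt_top hui)

theorem tau_dom {f : Ω → ℝ} (hf : DMem μ T u f) : f ≤ᵐ[μ] tau μ T u :=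
  (tau_spec hT hu hui hnn).2.2.2.1 f hf

theorem tau_approx : ∃ gs : ℕ → Ω → ℝ, (∀ k, DMem μ T u (gs k)) ∧
    ∀ᵐ x ∂μ, Tendsto (fun k => gs k x) atTop (𝓝 (tau μ T u x)) :=
  (tau_spec hT hu hui hnn).2.2.2.2

/-- If every member of the family is a.e. below `z`, so is `tau u`. -/
theorem tau_le_of_members_le {z : Ω → ℝ} (hz : ∀ f, DMem μ T u f → f ≤ᵐ[μ] z) :
    tau μ T u ≤ᵐ[μ] z := by
  obtain ⟨gs, hgs_mem, hgs_lim⟩ := tau_approx hT hu hui hnn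
  have hall : ∀ᵐ x ∂μ, ∀ k, gs k x ≤ z x := ae_all_iff.mpr (fun k => hz _ (hgs_mem k))
  filter_upwards [hall, hgs_lim] with x hx hlim
  exact le_of_tendsto hlim (Filter.Eventually.of_forall hx)

/-- Key domination: `|T v| ≤ tau u` whenever `|v| ≤ u` a.e. -/
theorem tau_domT {v : Ω → ℝ} (hv : Measurable v) (hle : (fun x => |v x|) ≤ᵐ[μ] u) :
    (fun x => |T v x|) ≤ᵐ[μ] tau μ T u := by
  classical
  set w : ℕ → Ω → ℝ := fun i => if i = 0 then (fun x => max (v x) 0)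
    else if i = 1 then (fun x => max (-v x) 0)
    else if i = 2 then (fun x => u x - |v x|) else 0 with hw
  have hw0 : w 0 = fun x => max (v x) 0 := by simp [hw]
  have hw1 : w 1 = fun x => max (-v x) 0 := by simp [hw]
  have hw2 : w 2 = fun x => u x - |v x| := by simp [hw]
  have hwge : ∀ n : ℕ, w (n + 3) = 0 := by intro n; simp [hw]
  have hw_meas : ∀ i, Measurable (w i) := by
    intro i
    match i with
    | 0 => rw [hw0]; exact hv.max measurable_const
    | 1 => rw [hw1]; exact hv.neg.max measurable_const
    | 2 => rw [hw2]; exact hu.sub hv.abs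
    | (n+3) => rw [hwge]; exact measurable_const
  have hw_nn : ∀ i, 0 ≤ᵐ[μ] w i := by
    intro i
    match i with
    | 0 => rw [hw0]; exact Filter.Eventually.of_forall (fun x => le_max_right _ _)
    | 1 => rw [hw1]; exact Filter.Eventually.of_forall (fun x => le_max_right _ _)
    | 2 =>
      rw [hw2]
      filter_upwards [hle] with x hx
      simp only [Pi.zero_apply]
      simpa using hx
    | (n+3) => rw [hwge]
  have hw_sum : (fun x => ∑ i ∈ Finset.range 3, w i x) =ᵐ[μ] u := by
    refine Filter.Eventually.of_forall (fun x => ?_)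
    have : (3 : ℕ) = 2 + 1 := rfl
    simp only [Finset.sum_range_succ, Finset.sum_range_zero, hw0, hw1, hw2, zero_add]
    rcases le_or_gt 0 (v x) with h | h
    · rw [abs_of_nonneg h, max_eq_left h, max_eq_right (by linarith)]
      ring
    · rw [abs_of_neg h, max_eq_right h.le, max_eq_left (by linarith)]
      ring
  have hmem : DMem μ T u (fun x => ∑ i ∈ Finset.range 3, |T (w i) x|) :=
    ⟨3, w, hw_meas, hw_nn, hw_sum, rfl⟩
  have hd := tau_dom hT hu hui hnn hmem
  have hvsplit : v = (fun x => max (v x) 0) - (fun x => max (-v x) 0) := by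
    funext x
    simp only [Pi.sub_apply]
    rcases le_or_gt 0 (v x) with h | h
    · rw [max_eq_left h, max_eq_right (by linarith)]; ring
    · rw [max_eq_right h.le, max_eq_left (by linarith)]; ring
  filter_upwards [hd] with x hx
  have h1 : T v x = T (w 0) x - T (w 1) x := by
    have : T v = T (w 0) - T (w 1) := by
      conv_lhs => rw [hvsplit, ← hw0, ← hw1]
      rw [T_sub hT]
    rw [this]; rfl
  have h2 : |T v x| ≤ |T (w 0) x| + |T (w 1) x| := by
    rw [h1]; exact abs_sub _ _
  refine le_trans h2 (le_trans ?_ hx)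
  have : ∑ i ∈ Finset.range 3, |T (w i) x| = |T (w 0) x| + |T (w 1) x| + |T (w 2) x| := by
    simp [Finset.sum_range_succ]
  rw [this]
  have := abs_nonneg (T (w 2) x)
  linarith


end TauAPI

section TauAPI2

variable (hT : IsDS μ T) {u u' : Ω → ℝ}

/-- Concatenation of decompositions: members add. -/
theorem DMem.add {u' f f' : Ω → ℝ} (hf : DMem μ T u f) (hf' : DMem μ T u' f') :
    DMem μ T (fun x => u x + u' x) (fun x => f x + f' x) := by
  classical
  obtain ⟨m, v, hv, hvn, hvs, rfl⟩ := hf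
  obtain ⟨l, w, hw, hwn, hws, rfl⟩ := hf'
  set c : ℕ → Ω → ℝ := fun n => if n < m then v n else w (n - m) with hc
  have hsplit : ∀ (H : (Ω → ℝ) → Ω → ℝ) (x : Ω),
      ∑ n ∈ Finset.range (m + l), H (c n) x
        = ∑ n ∈ Finset.range m, H (v n) x + ∑ j ∈ Finset.range l, H (w j) x := by
    intro H x
    rw [Finset.sum_range_add]
    congr 1
    · refine Finset.sum_congr rfl (fun n hn => ?_)
      rw [hc]
      simp only [if_pos (Finset.mem_range.mp hn)]
    · refine Finset.sum_congr rfl (fun j hj => ?_)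
      rw [hc]
      have : ¬ (m + j < m) := by omega
      simp only [if_neg this, Nat.add_sub_cancel_left]
  have hc_cases : ∀ n, c n = v n ∨ c n = w (n - m) := by
    intro n
    by_cases hn : n < m
    · left; rw [hc]; simp [hn]
    · right; rw [hc]; simp [hn]
  refine ⟨m + l, c, ?_, ?_, ?_, ?_⟩
  · intro n
    rcases hc_cases n with h | h <;> rw [h]
    · exact hv _
    · exact hw _
  · intro n
    rcases hc_cases n with h | h <;> rw [h]
    · exact hvn _
    · exact hwn _
  · filter_upwards [hvs, hws] with x h1 h2
    rw [hsplit (fun g => g) x, h1, h2]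
  · funext x
    rw [hsplit (fun g y => |T g y|) x]

include hT

theorem tau_congr_ae (hu : Measurable u) (hui : Integrable u μ) (hnn : 0 ≤ᵐ[μ] u)
    (hu' : Measurable u') (hui' : Integrable u' μ) (hnn' : 0 ≤ᵐ[μ] u')
    (h : u =ᵐ[μ] u') : tau μ T u =ᵐ[μ] tau μ T u' := by
  have hDD : ∀ {a b : Ω → ℝ}, a =ᵐ[μ] b → ∀ f, DMem μ T a f → DMem μ T b f := by
    intro a b hab f hf
    obtain ⟨m, v, h1, h2, h3, h4⟩ := hf
    exact ⟨m, v, h1, h2, h3.trans hab, h4⟩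
  refine Filter.EventuallyLE.antisymm ?_ ?_
  · exact tau_le_of_members_le hT hu hui hnn
      (fun f hf => tau_dom hT hu' hui' hnn' (hDD h f hf))
  · exact tau_le_of_members_le hT hu' hui' hnn'
      (fun f hf => tau_dom hT hu hui hnn (hDD h.symm f hf))

theorem tau_add (hu : Measurable u) (hui : Integrable u μ) (hnn : 0 ≤ᵐ[μ] u)
    (hu' : Measurable u') (hui' : Integrable u' μ) (hnn' : 0 ≤ᵐ[μ] u') :
    tau μ T (fun x => u x + u' x) =ᵐ[μ] fun x => tau μ T u x + tau μ T u' x := by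
  have hs_meas : Measurable fun x => u x + u' x := hu.add hu'
  have hs_int : Integrable (fun x => u x + u' x) μ := hui.add hui'
  have hs_nn : 0 ≤ᵐ[μ] fun x => u x + u' x := by
    filter_upwards [hnn, hnn'] with x h1 h2
    simp only [Pi.zero_apply] at *
    linarith
  refine Filter.EventuallyLE.antisymm ?_ ?_
  · -- every member of D_{u+u'} splits
    refine tau_le_of_members_le hT hs_meas hs_int hs_nn (fun f hf => ?_)
    obtain ⟨m, wv, hwv, hwn, hws, rfl⟩ := hf
    classical
    set a : ℕ → Ω → ℝ := fun i x =>
      if u x + u' x = 0 then 0 else wv i x * u x / (u x + u' x) with ha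
    set b : ℕ → Ω → ℝ := fun i x =>
      if u x + u' x = 0 then 0 else wv i x * u' x / (u x + u' x) with hb
    have ha_meas : ∀ i, Measurable (a i) := fun i =>
      Measurable.ite ((hu.add hu') (measurableSet_singleton 0)) measurable_const
        (((hwv i).mul hu).div (hu.add hu'))
    have hb_meas : ∀ i, Measurable (b i) := fun i =>
      Measurable.ite ((hu.add hu') (measurableSet_singleton 0)) measurable_const
        (((hwv i).mul hu').div (hu.add hu'))
    have hgood : ∀ᵐ x ∂μ, (∀ i, 0 ≤ wv i x) ∧ 0 ≤ u x ∧ 0 ≤ u' x ∧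
        (∑ i ∈ Finset.range m, wv i x) = u x + u' x := by
      filter_upwards [ae_all_iff.mpr hwn, hnn, hnn', hws] with x h1 h2 h3 h4
      exact ⟨h1, h2, h3, h4⟩
    have hdenom : ∀ x, (∀ i, 0 ≤ wv i x) → 0 ≤ u x → 0 ≤ u' x →
        (∑ i ∈ Finset.range m, wv i x) = u x + u' x →
        (u x + u' x = 0 → ∀ i, i < m → wv i x = 0) := by
      intro x h1 h2 h3 h4 h0 i hi
      have := Finset.single_le_sum (fun j _ => h1 j) (Finset.mem_range.mpr hi)
      rw [h4, h0] at this
      linarith [h1 i]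
    have ha_nn : ∀ i, 0 ≤ᵐ[μ] a i := by
      intro i
      filter_upwards [hgood] with x ⟨h1, h2, h3, h4⟩
      rw [ha]
      simp only [Pi.zero_apply]
      by_cases h0 : u x + u' x = 0
      · simp [h0]
      · have hpos : 0 < u x + u' x := lt_of_le_of_ne (by linarith) (Ne.symm h0)
        simp only [if_neg h0]
        exact div_nonneg (mul_nonneg (h1 i) h2) hpos.le
    have hb_nn : ∀ i, 0 ≤ᵐ[μ] b i := by
      intro i
      filter_upwards [hgood] with x ⟨h1, h2, h3, h4⟩
      rw [hb]
      simp only [Pi.zero_apply]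
      by_cases h0 : u x + u' x = 0
      · simp [h0]
      · have hpos : 0 < u x + u' x := lt_of_le_of_ne (by linarith) (Ne.symm h0)
        simp only [if_neg h0]
        exact div_nonneg (mul_nonneg (h1 i) h3) hpos.le
    have ha_sum : (fun x => ∑ i ∈ Finset.range m, a i x) =ᵐ[μ] u := by
      filter_upwards [hgood] with x ⟨h1, h2, h3, h4⟩
      by_cases h0 : u x + u' x = 0
      · have : u x = 0 := by linarith
        simp only [ha, h0, if_true]
        simp [this]
      · simp only [ha, if_neg h0]
        rw [← Finset.sum_div, ← Finset.sum_mul, h4]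
        field_simp
    have hb_sum : (fun x => ∑ i ∈ Finset.range m, b i x) =ᵐ[μ] u' := by
      filter_upwards [hgood] with x ⟨h1, h2, h3, h4⟩
      by_cases h0 : u x + u' x = 0
      · have : u' x = 0 := by linarith
        simp only [hb, h0, if_true]
        simp [this]
      · simp only [hb, if_neg h0]
        rw [← Finset.sum_div, ← Finset.sum_mul, h4]
        field_simp
    have hmem_a : DMem μ T u (fun x => ∑ i ∈ Finset.range m, |T (a i) x|) :=
      ⟨m, a, ha_meas, ha_nn, ha_sum, rfl⟩
    have hmem_b : DMem μ T u' (fun x => ∑ i ∈ Finset.range m, |T (b i) x|) :=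
      ⟨m, b, hb_meas, hb_nn, hb_sum, rfl⟩
    have hTsplit : ∀ᵐ x ∂μ, ∀ i, i < m → T (wv i) x = T (a i) x + T (b i) x := by
      rw [ae_all_iff]
      intro i
      by_cases hi : i < m
      · have heq : wv i =ᵐ[μ] fun x => a i x + b i x := by
          filter_upwards [hgood] with x ⟨h1, h2, h3, h4⟩
          by_cases h0 : u x + u' x = 0
          · simp only [ha, hb, h0, if_true]
            rw [hdenom x h1 h2 h3 h4 h0 i hi]
            norm_num
          · simp only [ha, hb, if_neg h0]
            field_simp
        have := T_congr_ae hT (hwv i) ((ha_meas i).add (hb_meas i)) heq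
        have e2 : T (fun x => a i x + b i x) = fun x => T (a i) x + T (b i) x := by
          have : (fun x => a i x + b i x) = a i + b i := rfl
          rw [this, T_add hT]
          rfl
        rw [T_add hT] at this
        filter_upwards [this] with x hx
        intro _
        exact hx
      · exact Filter.Eventually.of_forall (fun x h => absurd h hi)
    filter_upwards [hTsplit, tau_dom hT hu hui hnn hmem_a,
      tau_dom hT hu' hui' hnn' hmem_b] with x hx hxa hxb
    calc ∑ i ∈ Finset.range m, |T (wv i) x|
        ≤ ∑ i ∈ Finset.range m, (|T (a i) x| + |T (b i) x|) := by
          refine Finset.sum_le_sum (fun i hi => ?_)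
          rw [hx i (Finset.mem_range.mp hi)]
          exact abs_add_le _ _
    _ = ∑ i ∈ Finset.range m, |T (a i) x| + ∑ i ∈ Finset.range m, |T (b i) x| :=
          Finset.sum_add_distrib
    _ ≤ tau μ T u x + tau μ T u' x := add_le_add hxa hxb
  · -- approximating members add up
    obtain ⟨gs, hgs_mem, hgs_lim⟩ := tau_approx hT hu hui hnn
    obtain ⟨gs', hgs'_mem, hgs'_lim⟩ := tau_approx hT hu' hui' hnn'
    have hsum_mem : ∀ k, DMem μ T (fun x => u x + u' x) (fun x => gs k x + gs' k x) :=
      fun k => (hgs_mem k).add (hgs'_mem k)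
    have hall : ∀ᵐ x ∂μ, ∀ k, gs k x + gs' k x ≤ tau μ T (fun x => u x + u' x) x :=
      ae_all_iff.mpr (fun k => tau_dom hT hs_meas hs_int hs_nn (hsum_mem k))
    filter_upwards [hall, hgs_lim, hgs'_lim] with x hx hl hl'
    exact le_of_tendsto (hl.add hl') (Filter.Eventually.of_forall hx)

theorem tau_mono (hu : Measurable u) (hui : Integrable u μ) (hnn : 0 ≤ᵐ[μ] u)
    (hu' : Measurable u') (hui' : Integrable u' μ) (hnn' : 0 ≤ᵐ[μ] u')
    (h : u ≤ᵐ[μ] u') : tau μ T u ≤ᵐ[μ] tau μ T u' := by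
  set d : Ω → ℝ := fun x => u' x - u x with hd
  have hd_meas : Measurable d := hu'.sub hu
  have hd_int : Integrable d μ := hui'.sub hui
  have hd_nn : 0 ≤ᵐ[μ] d := by filter_upwards [h] with x hx; simp [hd, hx]
  have he : u' = fun x => u x + d x := by funext x; simp [hd]
  have h1 : tau μ T u' =ᵐ[μ] fun x => tau μ T u x + tau μ T d x := by
    conv_lhs => rw [he]
    exact tau_add hT hu hui hnn hd_meas hd_int hd_nn
  filter_upwards [h1] with x hx
  rw [hx]
  have := tau_nonneg μ T d x
  linarith

theorem tau_zero_of_ae_zero (hu : Measurable u) (hui : Integrable u μ) (h0 : u =ᵐ[μ] 0) :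
    tau μ T u =ᵐ[μ] 0 := by
  have hnn : 0 ≤ᵐ[μ] u := by filter_upwards [h0] with x hx; rw [hx]
  have hmem_zero : ∀ f, DMem μ T u f → f ≤ᵐ[μ] 0 := by
    intro f hf
    obtain ⟨m, v, hv, hvn, hvs, rfl⟩ := hf
    have hvz : ∀ᵐ x ∂μ, ∀ i, i < m → v i x = 0 := by
      rw [ae_all_iff]
      intro i
      by_cases hi : i < m
      · filter_upwards [ae_all_iff.mpr hvn, hvs, h0] with x h1 h2 h3
        intro _
        have hle := Finset.single_le_sum (fun j _ => h1 j) (Finset.mem_range.mpr hi)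
        have : (∑ j ∈ Finset.range m, v j x) = 0 := by
          rw [h2]; exact h3
        linarith [h1 i]
      · exact Filter.Eventually.of_forall (fun x h => absurd h hi)
    have hTz : ∀ᵐ x ∂μ, ∀ i, i < m → T (v i) x = 0 := by
      rw [ae_all_iff]
      intro i
      by_cases hi : i < m
      · have heq : v i =ᵐ[μ] (0 : Ω → ℝ) := by
          filter_upwards [hvz] with x hx
          exact hx i hi
        have h5 := T_congr_ae (f := v i) (g := (0 : Ω → ℝ)) hT (hv i) measurable_const heq
        have h6 : T (0 : Ω → ℝ) = 0 := T_zero hT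
        rw [h6] at h5
        filter_upwards [h5] with x hx _
        exact hx
      · exact Filter.Eventually.of_forall (fun x h => absurd h hi)
    filter_upwards [hTz] with x hx
    simp only [Pi.zero_apply]
    refine le_of_eq (Finset.sum_eq_zero (fun i hi => ?_))
    rw [hx i (Finset.mem_range.mp hi)]
    simp
  have hle := tau_le_of_members_le hT hu hui hnn hmem_zero
  filter_upwards [hle] with x hx
  have := tau_nonneg μ T u x
  simp only [Pi.zero_apply] at hx ⊢
  linarith

/-- The modulus is an `L^∞` contraction on nonnegative functions bounded by a constant. -/
theorem tau_bdd (hu : Measurable u) (hui : Integrable u μ) (hnn : 0 ≤ᵐ[μ] u)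
    {c : ℝ} (hc : 0 ≤ c) (hb : u ≤ᵐ[μ] fun _ => c) :
    tau μ T u ≤ᵐ[μ] fun _ => c := by
  classical
  refine tau_le_of_members_le hT hu hui hnn (fun f hf => ?_)
  obtain ⟨m, v, hv, hvn, hvs, rfl⟩ := hf
  -- for each sign vector, `|T (∑ ± v_i)| ≤ c` a.e.
  have hδ : ∀ δ : Fin m → Bool, ∀ᵐ x ∂μ,
      |∑ i ∈ Finset.univ (α := Fin m), (if δ i then (1:ℝ) else -1) * T (v i.val) x| ≤ c := by
    intro δ
    set hfun : Ω → ℝ := fun x => ∑ i ∈ Finset.univ (α := Fin m),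
      (if δ i then (1:ℝ) else -1) * v i.val x with hhfun
    have hmeas : Measurable hfun := by
      refine Finset.measurable_sum _ (fun i _ => ?_)
      exact (measurable_const.mul (hv i.val))
    have hbdd : ∀ᵐ x ∂μ, |hfun x| ≤ c := by
      filter_upwards [ae_all_iff.mpr hvn, hvs, hb] with x h1 h2 h3
      calc |hfun x| ≤ ∑ i ∈ Finset.univ (α := Fin m), |(if δ i then (1:ℝ) else -1) * v i.val x| :=
            Finset.abs_sum_le_sum_abs _ _
      _ = ∑ i ∈ Finset.univ (α := Fin m), v i.val x := by
            refine Finset.sum_congr rfl (fun i _ => ?_)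
            rcases Bool.eq_false_or_eq_true (δ i) with h | h <;>
              simp [h, abs_mul, abs_of_nonneg (h1 i.val)]
      _ = ∑ i ∈ Finset.range m, v i x := (Finset.sum_range (fun i => v i x)).symm
      _ = u x := h2
      _ ≤ c := h3
    have hTh : T hfun = fun x => ∑ i ∈ Finset.univ (α := Fin m),
        (if δ i then (1:ℝ) else -1) * T (v i.val) x := by
      have e1 : hfun = fun x => ∑ i ∈ Finset.univ (α := Fin m),
          (((if δ i then (1:ℝ) else -1)) • v i.val) x := by
        funext x; rw [hhfun]; rfl
      rw [e1, T_sum hT]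
      funext x
      refine Finset.sum_congr rfl (fun i _ => ?_)
      rw [T_smul hT]
      rfl
    have hTb := T_Linf hT (memLpTop_of_ae_le hmeas hbdd)
    have : eLpNorm (T hfun) ⊤ μ ≤ ENNReal.ofReal c :=
      le_trans hTb (eLpNormTop_le_of_ae_le hbdd)
    have := ae_le_of_eLpNormTop_le hc this
    filter_upwards [this] with x hx
    rwa [hTh] at hx
  have hδall : ∀ᵐ x ∂μ, ∀ δ : Fin m → Bool,
      |∑ i ∈ Finset.univ (α := Fin m), (if δ i then (1:ℝ) else -1) * T (v i.val) x| ≤ c :=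
    ae_all_iff.mpr hδ
  filter_upwards [hδall] with x hx
  set δ : Fin m → Bool := fun i => decide (0 ≤ T (v i.val) x) with hδdef
  have key : ∑ i ∈ Finset.range m, |T (v i) x|
      = ∑ i ∈ Finset.univ (α := Fin m), (if δ i then (1:ℝ) else -1) * T (v i.val) x := by
    rw [Finset.sum_range (fun i => |T (v i) x|)]
    refine Finset.sum_congr rfl (fun i _ => ?_)
    rcases le_or_gt 0 (T (v i.val) x) with h | h
    · rw [abs_of_nonneg h]
      simp [hδdef, h]
    · rw [abs_of_neg h]
      simp [hδdef, not_le.mpr h]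
  calc ∑ i ∈ Finset.range m, |T (v i) x| ≤ |∑ i ∈ Finset.univ (α := Fin m),
        (if δ i then (1:ℝ) else -1) * T (v i.val) x| := by
        rw [key]; exact le_abs_self _
  _ ≤ c := hx δ

end TauAPI2


/-! ### The signed modulus `Pop` and Hopf's lemma -/

noncomputable def Pop (μ : Measure Ω) (T : (Ω → ℝ) → Ω → ℝ) (w : Ω → ℝ) : Ω → ℝ :=
  fun x => tau μ T (fun y => max (w y) 0) x - tau μ T (fun y => max (-w y) 0) x

section PopAPI

variable (hT : IsDS μ T) {w w' : Ω → ℝ}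

theorem posPart_meas (hw : Measurable w) : Measurable fun y => max (w y) 0 :=
  hw.max measurable_const

theorem negPart_meas (hw : Measurable w) : Measurable fun y => max (-w y) 0 :=
  hw.neg.max measurable_const

theorem posPart_int (hwi : Integrable w μ) : Integrable (fun y => max (w y) 0) μ :=
  hwi.pos_part

theorem negPart_int (hwi : Integrable w μ) : Integrable (fun y => max (-w y) 0) μ :=
  hwi.neg.pos_part

theorem posPart_nn : 0 ≤ᵐ[μ] fun y => max (w y) 0 :=
  Filter.Eventually.of_forall (fun x => le_max_right _ _)

include hT

theorem Pop_meas (hw : Measurable w) (hwi : Integrable w μ) : Measurable (Pop μ T w) :=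
  (tau_meas hT (posPart_meas hw) (posPart_int hwi) posPart_nn).sub
    (tau_meas hT (negPart_meas hw) (negPart_int hwi) posPart_nn)

theorem Pop_integrable (hw : Measurable w) (hwi : Integrable w μ) :
    Integrable (Pop μ T w) μ :=
  (tau_integrable hT (posPart_meas hw) (posPart_int hwi) posPart_nn).sub
    (tau_integrable hT (negPart_meas hw) (negPart_int hwi) posPart_nn)

theorem Pop_eq_tau_of_nonneg (hw : Measurable w) (hwi : Integrable w μ) (hnn : 0 ≤ᵐ[μ] w) :
    Pop μ T w =ᵐ[μ] tau μ T w := by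
  have h1 : (fun y => max (w y) 0) =ᵐ[μ] w := by
    filter_upwards [hnn] with x hx
    exact max_eq_left hx
  have h2 : (fun y => max (-w y) 0) =ᵐ[μ] 0 := by
    filter_upwards [hnn] with x hx
    simp only [Pi.zero_apply]
    exact max_eq_right (by simpa using hx)
  have e1 := tau_congr_ae hT (posPart_meas hw) (posPart_int hwi) posPart_nn hw hwi hnn h1
  have e2 := tau_zero_of_ae_zero hT (negPart_meas hw) (negPart_int hwi) h2
  filter_upwards [e1, e2] with x hx1 hx2
  simp only [Pop, hx1, hx2, Pi.zero_apply]
  ring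

theorem Pop_nonneg_of_nonneg (hw : Measurable w) (hwi : Integrable w μ) (hnn : 0 ≤ᵐ[μ] w) :
    0 ≤ᵐ[μ] Pop μ T w := by
  filter_upwards [Pop_eq_tau_of_nonneg hT hw hwi hnn] with x hx
  rw [hx]
  exact tau_nonneg μ T w x

omit hT in
theorem max_sub_max_neg (t : ℝ) : max t 0 - max (-t) 0 = t := by
  rcases le_or_gt 0 t with h | h
  · rw [max_eq_left h, max_eq_right (neg_nonpos.mpr h)]; ring
  · rw [max_eq_right h.le, max_eq_left (neg_nonneg.mpr h.le)]; ring

theorem Pop_add (hw : Measurable w) (hwi : Integrable w μ)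
    (hw' : Measurable w') (hwi' : Integrable w' μ) :
    Pop μ T (fun x => w x + w' x) =ᵐ[μ] fun x => Pop μ T w x + Pop μ T w' x := by
  set a : Ω → ℝ := fun x => w x + w' x with ha
  have ha_meas : Measurable a := hw.add hw'
  have ha_int : Integrable a μ := hwi.add hwi'
  have hkey : (fun x => max (a x) 0 + (max (-w x) 0 + max (-w' x) 0))
      = fun x => max (-a x) 0 + (max (w x) 0 + max (w' x) 0) := by
    funext x
    have i1 := max_sub_max_neg (a x)
    have i2 := max_sub_max_neg (w x)
    have i3 := max_sub_max_neg (w' x)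
    have e : a x = w x + w' x := rfl
    linarith
  -- expand tau over the sums on both sides
  have hL : tau μ T (fun x => max (a x) 0 + (max (-w x) 0 + max (-w' x) 0)) =ᵐ[μ]
      fun x => tau μ T (fun y => max (a y) 0) x +
        (tau μ T (fun y => max (-w y) 0) x + tau μ T (fun y => max (-w' y) 0) x) := by
    have hsum_meas : Measurable fun x => max (-w x) 0 + max (-w' x) 0 :=
      (negPart_meas hw).add (negPart_meas hw')
    have hsum_int : Integrable (fun x => max (-w x) 0 + max (-w' x) 0) μ :=
      (negPart_int hwi).add (negPart_int hwi')
    have hsum_nn : 0 ≤ᵐ[μ] fun x => max (-w x) 0 + max (-w' x) 0 :=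
      Filter.Eventually.of_forall (fun x => by positivity)
    have h1 := tau_add hT (posPart_meas ha_meas) (posPart_int ha_int) posPart_nn
      hsum_meas hsum_int hsum_nn
    have h2 := tau_add hT (negPart_meas hw) (negPart_int hwi) posPart_nn
      (negPart_meas hw') (negPart_int hwi') posPart_nn
    filter_upwards [h1, h2] with x hx1 hx2
    rw [hx1, hx2]
  have hR : tau μ T (fun x => max (-a x) 0 + (max (w x) 0 + max (w' x) 0)) =ᵐ[μ]
      fun x => tau μ T (fun y => max (-a y) 0) x +
        (tau μ T (fun y => max (w y) 0) x + tau μ T (fun y => max (w' y) 0) x) := by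
    have hsum_meas : Measurable fun x => max (w x) 0 + max (w' x) 0 :=
      (posPart_meas hw).add (posPart_meas hw')
    have hsum_int : Integrable (fun x => max (w x) 0 + max (w' x) 0) μ :=
      (posPart_int hwi).add (posPart_int hwi')
    have hsum_nn : 0 ≤ᵐ[μ] fun x => max (w x) 0 + max (w' x) 0 :=
      Filter.Eventually.of_forall (fun x => by positivity)
    have h1 := tau_add hT (negPart_meas ha_meas) (negPart_int ha_int) posPart_nn
      hsum_meas hsum_int hsum_nn
    have h2 := tau_add hT (posPart_meas hw) (posPart_int hwi) posPart_nn
      (posPart_meas hw') (posPart_int hwi') posPart_nn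
    filter_upwards [h1, h2] with x hx1 hx2
    rw [hx1, hx2]
  have hLR : tau μ T (fun x => max (a x) 0 + (max (-w x) 0 + max (-w' x) 0))
      = tau μ T (fun x => max (-a x) 0 + (max (w x) 0 + max (w' x) 0)) := by
    rw [hkey]
  filter_upwards [hL, hR] with x hx1 hx2
  have hcomb : tau μ T (fun y => max (a y) 0) x +
      (tau μ T (fun y => max (-w y) 0) x + tau μ T (fun y => max (-w' y) 0) x)
      = tau μ T (fun y => max (-a y) 0) x +
      (tau μ T (fun y => max (w y) 0) x + tau μ T (fun y => max (w' y) 0) x) := by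
    rw [← hx1, ← hx2, hLR]
  simp only [Pop]
  have e : (fun y => max (a y) 0) = fun y => max (w y + w' y) 0 := rfl
  rw [← e]
  have e2 : (fun y => max (-a y) 0) = fun y => max (-(w y + w' y)) 0 := by
    funext y; rw [ha]
  rw [← e2]
  linarith

theorem Pop_mono (hw : Measurable w) (hwi : Integrable w μ)
    (hw' : Measurable w') (hwi' : Integrable w' μ) (h : w ≤ᵐ[μ] w') :
    Pop μ T w ≤ᵐ[μ] Pop μ T w' := by
  set d : Ω → ℝ := fun x => w' x - w x with hd
  have hd_meas : Measurable d := hw'.sub hw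
  have hd_int : Integrable d μ := hwi'.sub hwi
  have hd_nn : 0 ≤ᵐ[μ] d := by
    filter_upwards [h] with x hx
    simp only [hd, Pi.zero_apply]
    linarith
  have he : w' = fun x => w x + d x := by funext x; simp [hd]
  have h1 : Pop μ T w' =ᵐ[μ] fun x => Pop μ T w x + Pop μ T d x := by
    conv_lhs => rw [he]
    exact Pop_add hT hw hwi hd_meas hd_int
  filter_upwards [h1, Pop_nonneg_of_nonneg hT hd_meas hd_int hd_nn] with x hx1 hx2
  rw [hx1]
  simp only [Pi.zero_apply] at hx2
  linarith

/-- Integral contraction of `Pop` on nonnegative functions. -/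
theorem Pop_integral_le (hw : Measurable w) (hwi : Integrable w μ) (hnn : 0 ≤ᵐ[μ] w) :
    ∫ x, Pop μ T w x ∂μ ≤ ∫ x, w x ∂μ := by
  have h1 : ∫ x, Pop μ T w x ∂μ = ∫ x, tau μ T w x ∂μ :=
    integral_congr_ae (Pop_eq_tau_of_nonneg hT hw hwi hnn)
  rw [h1]
  have h2 : ∫ x, tau μ T w x ∂μ
      = (∫⁻ x, ENNReal.ofReal (tau μ T w x) ∂μ).toReal := by
    rw [integral_eq_lintegral_of_nonneg_ae
      (Filter.Eventually.of_forall (tau_nonneg μ T w))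
      (tau_meas hT hw hwi hnn).aestronglyMeasurable]
  have h3 : ∫ x, w x ∂μ = (∫⁻ x, ENNReal.ofReal (w x) ∂μ).toReal := by
    rw [integral_eq_lintegral_of_nonneg_ae hnn hw.aestronglyMeasurable]
  rw [h2, h3]
  refine ENNReal.toReal_mono (lintegral_ofReal_lt_top hwi).ne ?_
  exact tau_lintegral_le hT hw hwi hnn

end PopAPI

/-! ### Hopf's maximal ergodic lemma -/

noncomputable def sseq (μ : Measure Ω) (T : (Ω → ℝ) → Ω → ℝ) (w : Ω → ℝ) : ℕ → Ω → ℝ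
  | 0 => fun _ => 0
  | (n+1) => fun x => w x + Pop μ T (sseq μ T w n) x

noncomputable def maxS (μ : Measure Ω) (T : (Ω → ℝ) → Ω → ℝ) (w : Ω → ℝ) : ℕ → Ω → ℝ
  | 0 => fun _ => 0
  | (N+1) => fun x => max (maxS μ T w N x) (sseq μ T w (N+1) x)

section Hopf

theorem Integrable.max' {f g : Ω → ℝ} (hf : Integrable f μ) (hg : Integrable g μ) :
    Integrable (fun x => max (f x) (g x)) μ := by
  have e : (fun x => max (f x) (g x)) = fun x => (f x + g x + |f x - g x|) / 2 := by
    funext x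
    rcases le_total (f x) (g x) with h | h
    · rw [max_eq_right h, abs_of_nonpos (by linarith)]; ring
    · rw [max_eq_left h, abs_of_nonneg (by linarith)]; ring
  rw [e]
  exact ((hf.add hg).add (hf.sub hg).abs).div_const 2

variable (hT : IsDS μ T) {w : Ω → ℝ}

include hT

theorem sseq_meas_int (hw : Measurable w) (hwi : Integrable w μ) :
    ∀ n, Measurable (sseq μ T w n) ∧ Integrable (sseq μ T w n) μ := by
  intro n
  induction n with
  | zero => exact ⟨measurable_const, integrable_zero Ω ℝ μ⟩
  | succ n ih =>
    exact ⟨hw.add (Pop_meas hT ih.1 ih.2), hwi.add (Pop_integrable hT ih.1 ih.2)⟩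

theorem maxS_meas_int (hw : Measurable w) (hwi : Integrable w μ) :
    ∀ N, Measurable (maxS μ T w N) ∧ Integrable (maxS μ T w N) μ := by
  intro N
  induction N with
  | zero => exact ⟨measurable_const, integrable_zero Ω ℝ μ⟩
  | succ N ih =>
    exact ⟨ih.1.max (sseq_meas_int hT hw hwi (N+1)).1,
      Integrable.max' ih.2 (sseq_meas_int hT hw hwi (N+1)).2⟩

omit hT in
theorem maxS_nonneg (w : Ω → ℝ) : ∀ N x, 0 ≤ maxS μ T w N x := by
  intro N
  induction N with
  | zero => intro x; simp [maxS]
  | succ N ih => intro x; exact le_trans (ih x) (le_max_left _ _)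

omit hT in
theorem sseq_le_maxS (w : Ω → ℝ) : ∀ N n, n ≤ N → ∀ x, sseq μ T w n x ≤ maxS μ T w N x := by
  intro N
  induction N with
  | zero =>
    intro n hn x
    interval_cases n
    simp [sseq, maxS]
  | succ N ih =>
    intro n hn x
    rcases Nat.lt_or_ge n (N+1) with h | h
    · exact le_trans (ih n (Nat.lt_succ_iff.mp h) x) (le_max_left _ _)
    · have : n = N + 1 := le_antisymm hn h
      subst this
      exact le_max_right _ _
  
omit hT in
theorem maxS_attained (w : Ω → ℝ) : ∀ N x, maxS μ T w N x = 0 ∨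
    ∃ n, 1 ≤ n ∧ n ≤ N ∧ maxS μ T w N x = sseq μ T w n x := by
  intro N
  induction N with
  | zero => intro x; left; simp [maxS]
  | succ N ih =>
    intro x
    rcases max_cases (maxS μ T w N x) (sseq μ T w (N+1) x) with ⟨h, -⟩ | ⟨h, -⟩
    · rcases ih x with h0 | ⟨n, h1, h2, h3⟩
      · left; show max (maxS μ T w N x) (sseq μ T w (N+1) x) = 0; rw [h, h0]
      · right
        exact ⟨n, h1, le_trans h2 (Nat.le_succ _), by
          show max (maxS μ T w N x) (sseq μ T w (N+1) x) = _; rw [h, h3]⟩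
    · right
      refine ⟨N+1, by omega, le_rfl, ?_⟩
      show max (maxS μ T w N x) (sseq μ T w (N+1) x) = _
      rw [h]

/-- Hopf's maximal ergodic lemma. -/
theorem hopf (hw : Measurable w) (hwi : Integrable w μ) (N : ℕ) :
    0 ≤ ∫ x in {y | 0 < maxS μ T w N y}, w x ∂μ := by
  set m : Ω → ℝ := maxS μ T w N with hm
  have hm_meas : Measurable m := (maxS_meas_int hT hw hwi N).1
  have hm_int : Integrable m μ := (maxS_meas_int hT hw hwi N).2
  set E : Set Ω := {y | 0 < m y} with hE
  have hE_meas : MeasurableSet E := measurableSet_lt measurable_const hm_meas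
  -- key bound
  have hkey : ∀ᵐ x ∂μ, ∀ n, 1 ≤ n → n ≤ N → sseq μ T w n x ≤ w x + Pop μ T m x := by
    rw [ae_all_iff]
    intro n
    rcases n with _ | n
    · exact Filter.Eventually.of_forall (fun x h1 => by omega)
    · by_cases hn : n + 1 ≤ N
      · have hP := Pop_mono hT (sseq_meas_int hT hw hwi n).1 (sseq_meas_int hT hw hwi n).2
          hm_meas hm_int
          (Filter.Eventually.of_forall (sseq_le_maxS w N n (by omega)))
        filter_upwards [hP] with x hx
        intro _ _
        show w x + Pop μ T (sseq μ T w n) x ≤ _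
        linarith
      · exact Filter.Eventually.of_forall (fun x h1 h2 => absurd h2 hn)
  have hEbound : ∀ᵐ x ∂μ, x ∈ E → m x - Pop μ T m x ≤ w x := by
    filter_upwards [hkey] with x hx hxe
    rcases maxS_attained w N x with h0 | ⟨n, h1, h2, h3⟩
    · rw [hE] at hxe
      rw [← hm] at h0
      simp only [Set.mem_setOf_eq, h0] at hxe
      exact absurd hxe (lt_irrefl 0)
    · rw [hm, h3]
      have := hx n h1 h2
      linarith
  -- integrate
  have hwE : Integrable w (μ.restrict E) := hwi.restrict
  have hmE : Integrable m (μ.restrict E) := hm_int.restrict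
  have hPE : Integrable (Pop μ T m) (μ.restrict E) := (Pop_integrable hT hm_meas hm_int).restrict
  have step1 : ∫ x in E, (m x - Pop μ T m x) ∂μ ≤ ∫ x in E, w x ∂μ := by
    refine integral_mono_ae (hmE.sub hPE) hwE ?_
    rw [Filter.EventuallyLE, ae_restrict_iff' hE_meas]
    filter_upwards [hEbound] with x hx hxe
    exact hx hxe
  have step2 : ∫ x in E, (m x - Pop μ T m x) ∂μ = ∫ x in E, m x ∂μ - ∫ x in E, Pop μ T m x ∂μ :=
    integral_sub hmE hPE
  have step3 : ∫ x in E, m x ∂μ = ∫ x, m x ∂μ := by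
    have hcompl : ∫ x in Eᶜ, m x ∂μ = 0 := by
      have : ∀ x ∈ Eᶜ, m x = 0 := by
        intro x hx
        rw [hE] at hx
        simp only [Set.mem_compl_iff, Set.mem_setOf_eq, not_lt] at hx
        exact le_antisymm hx (maxS_nonneg w N x)
      calc ∫ x in Eᶜ, m x ∂μ = ∫ x in Eᶜ, (0:ℝ) ∂μ :=
            setIntegral_congr_fun hE_meas.compl this
      _ = 0 := by simp
    have := integral_add_compl hE_meas hm_int
    rw [hcompl] at this
    linarith
  have step4 : ∫ x in E, Pop μ T m x ∂μ ≤ ∫ x, Pop μ T m x ∂μ := by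
    refine setIntegral_le_integral (Pop_integrable hT hm_meas hm_int) ?_
    exact Pop_nonneg_of_nonneg hT hm_meas hm_int
      (Filter.Eventually.of_forall (fun x => maxS_nonneg w N x))
  have step5 : ∫ x, Pop μ T m x ∂μ ≤ ∫ x, m x ∂μ :=
    Pop_integral_le hT hm_meas hm_int (Filter.Eventually.of_forall (fun x => maxS_nonneg w N x))
  calc (0:ℝ) ≤ ∫ x, m x ∂μ - ∫ x, Pop μ T m x ∂μ := by linarith
  _ ≤ ∫ x in E, m x ∂μ - ∫ x in E, Pop μ T m x ∂μ := by
      rw [step3]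
      have := step4
      linarith
  _ = ∫ x in E, (m x - Pop μ T m x) ∂μ := step2.symm
  _ ≤ ∫ x in E, w x ∂μ := step1

end Hopf


/-! ### Iterates of the modulus and the weak maximal inequality -/

noncomputable def tauIter (μ : Measure Ω) (T : (Ω → ℝ) → Ω → ℝ) (c : Ω → ℝ) : ℕ → Ω → ℝ
  | 0 => c
  | (k+1) => tau μ T (tauIter μ T c k)

section WeakMax

variable (hT : IsDS μ T) {c : Ω → ℝ}

include hT

theorem tauIter_props (hc : Measurable c) (hci : Integrable c μ) (hcn : ∀ x, 0 ≤ c x) :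
    ∀ k, Measurable (tauIter μ T c k) ∧ Integrable (tauIter μ T c k) μ ∧
      ∀ x, 0 ≤ tauIter μ T c k x := by
  intro k
  induction k with
  | zero => exact ⟨hc, hci, hcn⟩
  | succ k ih =>
    have hnn : 0 ≤ᵐ[μ] tauIter μ T c k := Filter.Eventually.of_forall ih.2.2
    exact ⟨tau_meas hT ih.1 ih.2.1 hnn, tau_integrable hT ih.1 ih.2.1 hnn,
      tau_nonneg μ T _⟩

theorem tauIter_bdd (hc : Measurable c) (hci : Integrable c μ) (hcn : ∀ x, 0 ≤ c x)
    {d : ℝ} (hd : 0 ≤ d) (hbd : c ≤ᵐ[μ] fun _ => d) :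
    ∀ k, tauIter μ T c k ≤ᵐ[μ] fun _ => d := by
  intro k
  induction k with
  | zero => exact hbd
  | succ k ih =>
    have hp := tauIter_props hT hc hci hcn k
    exact tau_bdd hT hp.1 hp.2.1 (Filter.Eventually.of_forall hp.2.2) hd ih

omit hT in
theorem Pop_zero (hT : IsDS μ T) : Pop μ T (fun _ => (0:ℝ)) =ᵐ[μ] 0 := by
  have h1 : (fun y => max ((fun _ : Ω => (0:ℝ)) y) 0) =ᵐ[μ] (0 : Ω → ℝ) := by
    refine Filter.Eventually.of_forall (fun x => ?_)
    simp
  have h2 : (fun y => max (-(fun _ : Ω => (0:ℝ)) y) 0) =ᵐ[μ] (0 : Ω → ℝ) := by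
    refine Filter.Eventually.of_forall (fun x => ?_)
    simp
  have e1 := tau_zero_of_ae_zero hT (by measurability) (by
    simpa using (integrable_zero Ω ℝ μ)) h1
  have e2 := tau_zero_of_ae_zero hT (by measurability) (by
    simpa using (integrable_zero Ω ℝ μ)) h2
  filter_upwards [e1, e2] with x hx1 hx2
  simp only [Pop, hx1, hx2, Pi.zero_apply]
  simp

theorem Pop_sub {v v' : Ω → ℝ} (hv : Measurable v) (hvi : Integrable v μ)
    (hv' : Measurable v') (hvi' : Integrable v' μ) :
    Pop μ T (fun x => v x - v' x) =ᵐ[μ] fun x => Pop μ T v x - Pop μ T v' x := by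
  have e : v = fun x => (v x - v' x) + v' x := by funext x; ring
  have h1 : Pop μ T v =ᵐ[μ] fun x => Pop μ T (fun y => v y - v' y) x + Pop μ T v' x := by
    conv_lhs => rw [e]
    exact Pop_add hT (hv.sub hv') (hvi.sub hvi') hv' hvi'
  filter_upwards [h1] with x hx
  linarith

theorem Pop_sum {n : ℕ} {v : ℕ → Ω → ℝ} (hv : ∀ k, Measurable (v k))
    (hvi : ∀ k, Integrable (v k) μ) :
    Pop μ T (fun x => ∑ k ∈ Finset.range n, v k x) =ᵐ[μ]
      fun x => ∑ k ∈ Finset.range n, Pop μ T (v k) x := by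
  induction n with
  | zero =>
    simp only [Finset.range_zero, Finset.sum_empty]
    exact Pop_zero hT
  | succ n ih =>
    have e : (fun x => ∑ k ∈ Finset.range (n+1), v k x)
        = fun x => (∑ k ∈ Finset.range n, v k x) + v n x := by
      funext x; rw [Finset.sum_range_succ]
    rw [e]
    have h1 := Pop_add hT (w := fun x => ∑ k ∈ Finset.range n, v k x)
      (w' := v n)
      (Finset.measurable_sum (Finset.range n) (fun k _ => hv k))
      (integrable_finset_sum (Finset.range n) (fun k _ => hvi k)) (hv n) (hvi n)
    filter_upwards [h1, ih] with x hx1 hx2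
    rw [hx1]
    simp only [Finset.sum_range_succ]
    rw [hx2]

/-- The weak (1,1)-type maximal inequality. -/
theorem weak_max [SigmaFinite μ] {b : Ω → ℝ} (hb : Measurable b) (hbi : Integrable b μ)
    {lam : ℝ} (hlam : 0 < lam) :
    μ {x | ∃ n : ℕ, 1 ≤ n ∧ (n:ℝ) * lam <
        ∑ k ∈ Finset.range n, tauIter μ T (fun y => |b y|) k x}
      ≤ ENNReal.ofReal ((∫ x, |b x| ∂μ) / lam) := by
  classical
  set uh : ℕ → Ω → ℝ := tauIter μ T (fun y => |b y|) with huh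
  have huh_props : ∀ k, Measurable (uh k) ∧ Integrable (uh k) μ ∧ ∀ x, 0 ≤ uh k x :=
    tauIter_props hT hb.abs hbi.abs (fun x => abs_nonneg _)
  set Sn : ℕ → Ω → ℝ := fun n x => ∑ k ∈ Finset.range n, uh k x with hSn
  have hSn_meas : ∀ n, Measurable (Sn n) :=
    fun n => Finset.measurable_sum _ (fun k _ => (huh_props k).1)
  set A : ℕ → Set Ω := fun N => {x | ∃ n, 1 ≤ n ∧ n ≤ N ∧ (n:ℝ) * lam < Sn n x} with hA
  have hA_meas : ∀ N, MeasurableSet (A N) := by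
    intro N
    have : A N = ⋃ n : ℕ, {x | 1 ≤ n ∧ n ≤ N ∧ (n:ℝ) * lam < Sn n x} := by
      ext x; simp [hA]
    rw [this]
    refine MeasurableSet.iUnion (fun n => ?_)
    by_cases h1 : 1 ≤ n ∧ n ≤ N
    · have : {x | 1 ≤ n ∧ n ≤ N ∧ (n:ℝ) * lam < Sn n x}
          = {x | (n:ℝ) * lam < Sn n x} := by
        ext x; simp [h1.1, h1.2]
      rw [this]
      exact measurableSet_lt measurable_const (hSn_meas n)
    · have : {x | 1 ≤ n ∧ n ≤ N ∧ (n:ℝ) * lam < Sn n x} = ∅ := by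
        ext x; simp only [Set.mem_setOf_eq, Set.mem_empty_iff_false, iff_false]
        intro hc; exact h1 ⟨hc.1, hc.2.1⟩
      rw [this]
      exact MeasurableSet.empty
  -- core: any finite-measure measurable subset of `A N` has controlled measure
  have hcore : ∀ N (F : Set Ω), MeasurableSet F → μ F < ⊤ → F ⊆ A N →
      lam * (μ F).toReal ≤ ∫ x, |b x| ∂μ := by
    intro N F hF hFfin hFA
    set c0 : Ω → ℝ := F.indicator (fun _ => lam) with hc0
    have hc0_meas : Measurable c0 := measurable_const.indicator hF
    have hc0_int : Integrable c0 μ := by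
      rw [hc0, integrable_indicator_iff hF]
      exact integrableOn_const hFfin.ne
    have hc0_nn : ∀ x, 0 ≤ c0 x := by
      intro x
      rw [hc0]
      by_cases hx : x ∈ F <;> simp [Set.indicator_apply, hx, hlam.le]
    have hc0_le : c0 ≤ᵐ[μ] fun _ => lam := by
      refine Filter.Eventually.of_forall (fun x => ?_)
      rw [hc0]
      by_cases hx : x ∈ F <;> simp [Set.indicator_apply, hx, hlam.le]
    set ch : ℕ → Ω → ℝ := tauIter μ T c0 with hch
    have hch_props : ∀ k, Measurable (ch k) ∧ Integrable (ch k) μ ∧ ∀ x, 0 ≤ ch k x :=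
      tauIter_props hT hc0_meas hc0_int hc0_nn
    have hch_le : ∀ k, ch k ≤ᵐ[μ] fun _ => lam :=
      tauIter_bdd hT hc0_meas hc0_int hc0_nn hlam.le hc0_le
    set w' : Ω → ℝ := fun x => |b x| - c0 x with hw'
    have hw'_meas : Measurable w' := hb.abs.sub hc0_meas
    have hw'_int : Integrable w' μ := hbi.abs.sub hc0_int
    -- the inductive lower bound on sseq
    have hClaim : ∀ n, (fun x => Sn n x - ∑ k ∈ Finset.range n, ch k x)
        ≤ᵐ[μ] sseq μ T w' n := by
      intro n
      induction n with
      | zero =>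
        refine Filter.Eventually.of_forall (fun x => ?_)
        simp [hSn, sseq]
      | succ n ih =>
        set dn : Ω → ℝ := fun x => Sn n x - ∑ k ∈ Finset.range n, ch k x with hdn
        have hdn_meas : Measurable dn :=
          (hSn_meas n).sub (Finset.measurable_sum _ (fun k _ => (hch_props k).1))
        have hdn_int : Integrable dn μ :=
          (integrable_finset_sum _ (fun k _ => (huh_props k).2.1)).sub
            (integrable_finset_sum _ (fun k _ => (hch_props k).2.1))
        have hs_props := sseq_meas_int hT hw'_meas hw'_int n
        have hstep : Pop μ T dn ≤ᵐ[μ] Pop μ T (sseq μ T w' n) :=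
          Pop_mono hT hdn_meas hdn_int hs_props.1 hs_props.2 ih
        -- expand Pop dn
        have hexp : Pop μ T dn =ᵐ[μ]
            fun x => ∑ k ∈ Finset.range n, (uh (k+1) x - ch (k+1) x) := by
          have e1 : dn = fun x => ∑ k ∈ Finset.range n, (uh k x - ch k x) := by
            funext x
            rw [hdn]
            simp [hSn, Finset.sum_sub_distrib]
          rw [e1]
          have h2 := Pop_sum hT (n := n) (v := fun k x => uh k x - ch k x)
            (fun k => (huh_props k).1.sub (hch_props k).1)
            (fun k => (huh_props k).2.1.sub (hch_props k).2.1)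
          have h3 : ∀ᵐ x ∂μ, ∀ k, k < n →
              Pop μ T (fun y => uh k y - ch k y) x = uh (k+1) x - ch (k+1) x := by
            rw [ae_all_iff]
            intro k
            by_cases hk : k < n
            · have ha := Pop_sub hT (huh_props k).1 (huh_props k).2.1
                (hch_props k).1 (hch_props k).2.1
              have hbu := Pop_eq_tau_of_nonneg hT (huh_props k).1 (huh_props k).2.1
                (Filter.Eventually.of_forall (huh_props k).2.2)
              have hbc := Pop_eq_tau_of_nonneg hT (hch_props k).1 (hch_props k).2.1
                (Filter.Eventually.of_forall (hch_props k).2.2)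
              filter_upwards [ha, hbu, hbc] with x hx1 hx2 hx3
              intro _
              rw [hx1, hx2, hx3]
              rfl
            · exact Filter.Eventually.of_forall (fun x h => absurd h hk)
          filter_upwards [h2, h3] with x hx2 hx3
          rw [hx2]
          exact Finset.sum_congr rfl (fun k hk => hx3 k (Finset.mem_range.mp hk))
        filter_upwards [hstep, hexp] with x hx1 hx2
        have : sseq μ T w' (n+1) x = w' x + Pop μ T (sseq μ T w' n) x := rfl
        rw [this]
        have e0 : Sn (n+1) x - ∑ k ∈ Finset.range (n+1), ch k x
            = w' x + ∑ k ∈ Finset.range n, (uh (k+1) x - ch (k+1) x) := by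
          simp only [hSn, hw']
          rw [Finset.sum_range_succ' (fun k => uh k x) n,
            Finset.sum_range_succ' (fun k => ch k x) n]
          have : uh 0 x = |b x| := rfl
          rw [this]
          have : ch 0 x = c0 x := rfl
          rw [this]
          rw [Finset.sum_sub_distrib]
          ring
        rw [e0, ← hx2]
        linarith
    -- A N is a.e. contained in the Hopf set
    have hsub : ∀ᵐ x ∂μ, x ∈ A N → 0 < maxS μ T w' N x := by
      have hca : ∀ᵐ x ∂μ, ∀ k, ch k x ≤ lam := by
        rw [ae_all_iff]
        intro k
        filter_upwards [hch_le k] with x hx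
        exact hx
      have hcl : ∀ᵐ x ∂μ, ∀ n, Sn n x - ∑ k ∈ Finset.range n, ch k x ≤ sseq μ T w' n x := by
        rw [ae_all_iff]
        intro n
        filter_upwards [hClaim n] with x hx
        exact hx
      filter_upwards [hca, hcl] with x hx1 hx2
      rintro ⟨n, hn1, hn2, hn3⟩
      have hchsum : ∑ k ∈ Finset.range n, ch k x ≤ (n:ℝ) * lam := by
        calc ∑ k ∈ Finset.range n, ch k x ≤ ∑ k ∈ Finset.range n, lam :=
              Finset.sum_le_sum (fun k _ => hx1 k)
        _ = (n:ℝ) * lam := by rw [Finset.sum_const, Finset.card_range]; ring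
      have h4 : 0 < sseq μ T w' n x := by
        have := hx2 n
        linarith
      exact lt_of_lt_of_le h4 (sseq_le_maxS w' N n hn2 x)
    -- apply Hopf
    have hhopf := hopf hT hw'_meas hw'_int N
    set E : Set Ω := {y | 0 < maxS μ T w' N y} with hEdef
    have hE_meas : MeasurableSet E :=
      measurableSet_lt measurable_const (maxS_meas_int hT hw'_meas hw'_int N).1
    have hFE : μ (F \ E) = 0 := by
      have h := hsub
      rw [ae_iff] at h
      refine measure_mono_null ?_ h
      intro x hx
      simp only [Set.mem_setOf_eq]
      intro hc
      exact hx.2 (hc (hFA hx.1))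
    have hsplit : ∫ x in E, w' x ∂μ = ∫ x in E, |b x| ∂μ - ∫ x in E, c0 x ∂μ := by
      have := integral_sub (hbi.abs.restrict (s := E)) (hc0_int.restrict (s := E))
      simpa [hw'] using this
    have hindic : ∫ x in E, c0 x ∂μ = lam * (μ (F ∩ E)).toReal := by
      rw [hc0]
      rw [setIntegral_indicator hF]
      rw [setIntegral_const]
      rw [Set.inter_comm]
      simp [mul_comm, Measure.real]
    have hFinterE : μ (F ∩ E) = μ F := by
      refine le_antisymm (measure_mono Set.inter_subset_left) ?_
      calc μ F ≤ μ (F ∩ E) + μ (F \ E) := measure_le_inter_add_diff μ F E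
      _ = μ (F ∩ E) := by rw [hFE, add_zero]
    have habs_le : ∫ x in E, |b x| ∂μ ≤ ∫ x, |b x| ∂μ :=
      setIntegral_le_integral hbi.abs (Filter.Eventually.of_forall (fun x => abs_nonneg _))
    rw [hindic, hFinterE] at hsplit
    have : 0 ≤ ∫ x in E, |b x| ∂μ - lam * (μ F).toReal := by
      rw [← hsplit]; exact hhopf
    linarith
  -- σ-finite exhaustion
  have hbound : ∀ N, μ (A N) ≤ ENNReal.ofReal ((∫ x, |b x| ∂μ) / lam) := by
    intro N
    have hAunion : A N = ⋃ j, (A N ∩ spanningSets μ j) := by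
      rw [← Set.inter_iUnion, iUnion_spanningSets, Set.inter_univ]
    have hdir : Directed (· ⊆ ·) fun j => A N ∩ spanningSets μ j := by
      refine (Monotone.directed_le ?_)
      intro i j hij
      exact Set.inter_subset_inter_right _ (monotone_spanningSets μ hij)
    have := hdir.measure_iUnion (μ := μ)
    rw [hAunion, this]
    refine iSup_le (fun j => ?_)
    have hFm : MeasurableSet (A N ∩ spanningSets μ j) :=
      (hA_meas N).inter (measurableSet_spanningSets μ j)
    have hFfin : μ (A N ∩ spanningSets μ j) < ⊤ :=
      lt_of_le_of_lt (measure_mono Set.inter_subset_right) (measure_spanningSets_lt_top μ j)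
    have hc := hcore N _ hFm hFfin Set.inter_subset_left
    rw [ENNReal.le_ofReal_iff_toReal_le hFfin.ne (by positivity)]
    rw [le_div_iff₀ hlam]
    linarith [hc]
  -- conclude
  have hAall : {x | ∃ n : ℕ, 1 ≤ n ∧ (n:ℝ) * lam < Sn n x} = ⋃ N, A N := by
    ext x
    simp only [Set.mem_setOf_eq, Set.mem_iUnion, hA]
    constructor
    · rintro ⟨n, h1, h2⟩
      exact ⟨n, n, h1, le_rfl, h2⟩
    · rintro ⟨N, n, h1, h2, h3⟩
      exact ⟨n, h1, h3⟩
  rw [hAall]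
  have hdir : Directed (· ⊆ ·) A := by
    refine Monotone.directed_le ?_
    intro i j hij x
    rintro ⟨n, h1, h2, h3⟩
    exact ⟨n, h1, le_trans h2 hij, h3⟩
  rw [hdir.measure_iUnion]
  exact iSup_le hbound

end WeakMax


/-! ### Iterates and the key uniform estimate -/

section LemmaA

variable (hT : IsDS μ T)

include hT

theorem T_iter_meas {f : Ω → ℝ} (hf : Measurable f) : ∀ k, Measurable (T^[k] f) := by
  intro k
  induction k with
  | zero => simpa using hf
  | succ k ih =>
    rw [Function.iterate_succ_apply']
    exact T_meas hT ih

theorem T_iter_add (f g : Ω → ℝ) : ∀ k, T^[k] (f + g) = T^[k] f + T^[k] g := by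
  intro k
  induction k with
  | zero => simp
  | succ k ih =>
    rw [Function.iterate_succ_apply', ih, T_add hT, Function.iterate_succ_apply',
      Function.iterate_succ_apply']

theorem T_iter_Linf {f : Ω → ℝ} (hf : Measurable f) {c : ℝ} (hc : 0 ≤ c)
    (hbd : ∀ᵐ x ∂μ, |f x| ≤ c) : ∀ k, ∀ᵐ x ∂μ, |T^[k] f x| ≤ c := by
  have key : ∀ k, eLpNorm (T^[k] f) ⊤ μ ≤ ENNReal.ofReal c := by
    intro k
    induction k with
    | zero => simpa using eLpNormTop_le_of_ae_le hbd
    | succ k ih =>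
      rw [Function.iterate_succ_apply']
      refine le_trans (T_Linf hT ?_) ih
      refine ⟨(T_iter_meas hT hf k).aestronglyMeasurable, ?_⟩
      exact lt_of_le_of_lt ih ENNReal.ofReal_lt_top
  exact fun k => ae_le_of_eLpNormTop_le hc (key k)

theorem T_iter_dom {b : Ω → ℝ} (hb : Measurable b) (hbi : Integrable b μ) :
    ∀ k, ∀ᵐ x ∂μ, |T^[k] b x| ≤ tauIter μ T (fun y => |b y|) k x := by
  have hprops := tauIter_props hT hb.abs hbi.abs (fun x => abs_nonneg _)
  intro k
  induction k with
  | zero => exact Filter.Eventually.of_forall (fun x => by simp [tauIter])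
  | succ k ih =>
    have hd := tau_domT hT ((hprops k).1) ((hprops k).2.1)
      (Filter.Eventually.of_forall (hprops k).2.2) (T_iter_meas hT hb k) ih
    rw [Function.iterate_succ_apply']
    exact hd

/-- The key estimate: small `L^p` norm gives a uniformly small set of bad behaviour
for all Cesàro averages simultaneously. -/
theorem lemmaA [SigmaFinite μ] {p : ℝ≥0∞} (hp1 : 1 ≤ p) (hp : p ≠ ⊤)
    {ε δ : ℝ} (hε : 0 < ε) (hδ : 0 < δ) :
    ∃ γ : ℝ, 0 < γ ∧ ∀ h : Ω → ℝ, Measurable h → MemLp h p μ →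
      eLpNorm h p μ ≤ ENNReal.ofReal γ →
      ∃ E : Set Ω, MeasurableSet E ∧ μ Eᶜ ≤ ENNReal.ofReal ε ∧
        ∀ᵐ x ∂μ, ∀ n : ℕ, x ∈ E → |cesaro T (n+1) h x| ≤ δ := by
  classical
  have hp0 : p ≠ 0 := by
    intro h0
    rw [h0] at hp1
    simp at hp1
  set q : ℝ := p.toReal with hq
  have hq1 : 1 ≤ q := by
    rw [hq]
    rw [← ENNReal.toReal_one]
    exact ENNReal.toReal_mono hp hp1
  have hq0 : 0 < q := lt_of_lt_of_le one_pos hq1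
  set c : ℝ := δ / 2 with hc
  have hcpos : 0 < c := by positivity
  set β : ℝ := δ * ε / 4 with hβ
  have hβpos : 0 < β := by positivity
  set m : ℝ := min (β / c) 1 with hm
  have hmpos : 0 < m := lt_min (by positivity) one_pos
  set γ : ℝ := c * m ^ (1 / q) with hγ
  have hγpos : 0 < γ := by
    have := Real.rpow_pos_of_pos hmpos (1 / q)
    positivity
  refine ⟨γ, hγpos, ?_⟩
  intro h hmeas hmem hnorm
  -- the key smallness: c^(1-q) * γ^q ≤ β
  have hkey : c ^ (1 - q) * γ ^ q ≤ β := by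
    have e1 : γ ^ q = c ^ q * m := by
      rw [hγ, Real.mul_rpow hcpos.le (Real.rpow_nonneg hmpos.le _), ← Real.rpow_mul hmpos.le,
        one_div_mul_cancel hq0.ne', Real.rpow_one]
    rw [e1, ← mul_assoc, ← Real.rpow_add hcpos]
    have e2 : 1 - q + q = 1 := by ring
    rw [e2, Real.rpow_one]
    calc c * m ≤ c * (β / c) := by
          refine mul_le_mul_of_nonneg_left ?_ hcpos.le
          rw [hm]
          exact min_le_left _ _
    _ = β := by field_simp
  -- the decomposition h = g + b
  set b : Ω → ℝ := fun x => if c < |h x| then h x else 0 with hbdef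
  set g : Ω → ℝ := fun x => if c < |h x| then 0 else h x with hgdef
  have hSmeas : MeasurableSet {x | c < |h x|} := measurableSet_lt measurable_const hmeas.abs
  have hb_meas : Measurable b := Measurable.ite hSmeas hmeas measurable_const
  have hg_meas : Measurable g := Measurable.ite hSmeas measurable_const hmeas
  have hgb : (g + b) = h := by
    funext x
    simp only [Pi.add_apply, hbdef, hgdef]
    by_cases hx : c < |h x| <;> simp [hx]
  have hg_bd : ∀ x, |g x| ≤ c := by
    intro x
    rw [hgdef]
    by_cases hx : c < |h x|
    · simp [hx, hcpos.le]
    · simpa [hx] using le_of_not_gt hx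
  -- L¹ bound on b
  have hb_pt : ∀ x, (‖b x‖₊ : ℝ≥0∞) ≤ ENNReal.ofReal (c ^ (1 - q)) * (‖h x‖₊ : ℝ≥0∞) ^ q := by
    intro x
    rw [hbdef]
    by_cases hx : c < |h x|
    · simp only [if_pos hx]
      have hr : |h x| ≤ c ^ (1 - q) * |h x| ^ q := by
        have h1 : (1:ℝ) ≤ |h x| / c := (one_le_div hcpos).mpr hx.le
        have h2 : |h x| / c ≤ (|h x| / c) ^ q := by
          calc |h x| / c = (|h x| / c) ^ (1:ℝ) := (Real.rpow_one _).symm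
          _ ≤ (|h x| / c) ^ q := Real.rpow_le_rpow_of_exponent_le h1 hq1
        calc |h x| = c * (|h x| / c) := by field_simp
        _ ≤ c * (|h x| / c) ^ q := mul_le_mul_of_nonneg_left h2 hcpos.le
        _ = c ^ (1 - q) * |h x| ^ q := by
            rw [Real.div_rpow (abs_nonneg _) hcpos.le, Real.rpow_sub hcpos, Real.rpow_one]
            ring
      calc (‖h x‖₊ : ℝ≥0∞) = ENNReal.ofReal |h x| := by
            rw [← enorm_eq_nnnorm, ← ofReal_norm, Real.norm_eq_abs]
      _ ≤ ENNReal.ofReal (c ^ (1 - q) * |h x| ^ q) := ENNReal.ofReal_le_ofReal hr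
      _ = ENNReal.ofReal (c ^ (1 - q)) * ENNReal.ofReal (|h x| ^ q) := by
            rw [ENNReal.ofReal_mul (Real.rpow_nonneg hcpos.le _)]
      _ = ENNReal.ofReal (c ^ (1 - q)) * (‖h x‖₊ : ℝ≥0∞) ^ q := by
            congr 1
            rw [← ENNReal.ofReal_rpow_of_nonneg (abs_nonneg _) hq0.le]
            congr 1
            rw [← enorm_eq_nnnorm, ← ofReal_norm, Real.norm_eq_abs]
    · simp [if_neg hx]
  have hlp : ∫⁻ x, (‖h x‖₊ : ℝ≥0∞) ^ q ∂μ = (eLpNorm h p μ) ^ q := by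
    rw [eLpNorm_eq_lintegral_rpow_enorm_toReal hp0 hp]
    rw [← ENNReal.rpow_mul, one_div_mul_cancel hq0.ne', ENNReal.rpow_one]
    rfl
  have hbl : ∫⁻ x, (‖b x‖₊ : ℝ≥0∞) ∂μ ≤ ENNReal.ofReal β := by
    calc ∫⁻ x, (‖b x‖₊ : ℝ≥0∞) ∂μ
        ≤ ∫⁻ x, ENNReal.ofReal (c ^ (1 - q)) * (‖h x‖₊ : ℝ≥0∞) ^ q ∂μ :=
          lintegral_mono (fun x => hb_pt x)
    _ = ENNReal.ofReal (c ^ (1 - q)) * ∫⁻ x, (‖h x‖₊ : ℝ≥0∞) ^ q ∂μ := by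
          rw [lintegral_const_mul]
          exact hmeas.enorm.pow_const _
    _ = ENNReal.ofReal (c ^ (1 - q)) * (eLpNorm h p μ) ^ q := by rw [hlp]
    _ ≤ ENNReal.ofReal (c ^ (1 - q)) * (ENNReal.ofReal γ) ^ q := by
          refine mul_le_mul_right (ENNReal.rpow_le_rpow hnorm hq0.le) _
    _ = ENNReal.ofReal (c ^ (1 - q)) * ENNReal.ofReal (γ ^ q) := by
          rw [ENNReal.ofReal_rpow_of_nonneg hγpos.le hq0.le]
    _ = ENNReal.ofReal (c ^ (1 - q) * γ ^ q) := by
          rw [ENNReal.ofReal_mul (Real.rpow_nonneg hcpos.le _)]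
    _ ≤ ENNReal.ofReal β := ENNReal.ofReal_le_ofReal hkey
  have hb_int : Integrable b μ := by
    have : MemLp b 1 μ := by
      refine ⟨hb_meas.aestronglyMeasurable, ?_⟩
      rw [eLpNorm_one_eq_lintegral_enorm]
      exact lt_of_le_of_lt hbl ENNReal.ofReal_lt_top
    exact memLp_one_iff_integrable.mp this
  have hb_abs_int : ∫ x, |b x| ∂μ ≤ β := by
    have e1 : ∫ x, |b x| ∂μ = (∫⁻ x, ENNReal.ofReal (|b x|) ∂μ).toReal := by
      rw [integral_eq_lintegral_of_nonneg_ae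
        (Filter.Eventually.of_forall (fun x => abs_nonneg _))
        hb_meas.abs.aestronglyMeasurable]
    have e2 : ∫⁻ x, ENNReal.ofReal (|b x|) ∂μ = ∫⁻ x, (‖b x‖₊ : ℝ≥0∞) ∂μ := by
      congr 1; funext x
      rw [← enorm_eq_nnnorm, ← ofReal_norm, Real.norm_eq_abs]
    rw [e1, e2]
    exact ENNReal.toReal_le_of_le_ofReal hβpos.le hbl
  -- the bad set
  set uh : ℕ → Ω → ℝ := tauIter μ T (fun y => |b y|) with huh
  set Sn : ℕ → Ω → ℝ := fun n x => ∑ k ∈ Finset.range n, uh k x with hSn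
  have huh_props : ∀ k, Measurable (uh k) ∧ Integrable (uh k) μ ∧ ∀ x, 0 ≤ uh k x :=
    tauIter_props hT hb_meas.abs hb_int.abs (fun x => abs_nonneg _)
  set A : Set Ω := {x | ∃ n : ℕ, 1 ≤ n ∧ (n:ℝ) * c < Sn n x} with hA
  have hA_meas : MeasurableSet A := by
    have : A = ⋃ n : ℕ, {x | 1 ≤ n ∧ (n:ℝ) * c < Sn n x} := by
      ext x; simp [hA]
    rw [this]
    refine MeasurableSet.iUnion (fun n => ?_)
    by_cases h1 : 1 ≤ n
    · have : {x | 1 ≤ n ∧ (n:ℝ) * c < Sn n x} = {x | (n:ℝ) * c < Sn n x} := by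
        ext x; simp [h1]
      rw [this]
      exact measurableSet_lt measurable_const
        (Finset.measurable_sum _ (fun k _ => (huh_props k).1))
    · have : {x | 1 ≤ n ∧ (n:ℝ) * c < Sn n x} = ∅ := by
        ext x; simp [h1]
      rw [this]
      exact MeasurableSet.empty
  have hAbound : μ A ≤ ENNReal.ofReal ε := by
    have hwm := weak_max hT hb_meas hb_int hcpos
    refine le_trans hwm ?_
    refine ENNReal.ofReal_le_ofReal ?_
    calc (∫ x, |b x| ∂μ) / c ≤ β / c := by gcongr
    _ = ε / 2 := by rw [hβ, hc]; field_simp; ring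
    _ ≤ ε := by linarith
  refine ⟨Aᶜ, hA_meas.compl, by rwa [compl_compl], ?_⟩
  -- final pointwise bound
  have hgbd : ∀ᵐ x ∂μ, ∀ k, |T^[k] g x| ≤ c :=
    ae_all_iff.mpr (T_iter_Linf hT hg_meas hcpos.le (Filter.Eventually.of_forall hg_bd))
  have hbbd : ∀ᵐ x ∂μ, ∀ k, |T^[k] b x| ≤ uh k x :=
    ae_all_iff.mpr (T_iter_dom hT hb_meas hb_int)
  filter_upwards [hgbd, hbbd] with x hxg hxb
  intro n hxE
  have hxA : ∀ n' : ℕ, 1 ≤ n' → Sn n' x ≤ (n':ℝ) * c := by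
    intro n' hn'
    by_contra hcon
    exact hxE ⟨n', hn', lt_of_not_ge hcon⟩
  have hiter : ∀ k, T^[k] h = T^[k] g + T^[k] b := by
    intro k
    rw [← hgb]
    exact T_iter_add hT g b k
  have hnum : |∑ k ∈ Finset.range (n+1), T^[k] h x| ≤ ((n:ℝ)+1) * δ := by
    calc |∑ k ∈ Finset.range (n+1), T^[k] h x|
        ≤ ∑ k ∈ Finset.range (n+1), |T^[k] h x| := Finset.abs_sum_le_sum_abs _ _
    _ ≤ ∑ k ∈ Finset.range (n+1), (c + uh k x) := by
        refine Finset.sum_le_sum (fun k _ => ?_)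
        have : T^[k] h x = T^[k] g x + T^[k] b x := by rw [hiter k]; rfl
        rw [this]
        calc |T^[k] g x + T^[k] b x| ≤ |T^[k] g x| + |T^[k] b x| := abs_add_le _ _
        _ ≤ c + uh k x := add_le_add (hxg k) (hxb k)
    _ = ((n:ℝ)+1) * c + Sn (n+1) x := by
        rw [Finset.sum_add_distrib, Finset.sum_const, Finset.card_range, hSn]
        push_cast
        ring
    _ ≤ ((n:ℝ)+1) * c + ((n:ℝ)+1) * c := by
        have := hxA (n+1) (by omega)
        push_cast at this ⊢
        linarith
    _ = ((n:ℝ)+1) * δ := by rw [hc]; ring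
  show |cesaro T (n+1) h x| ≤ δ
  rw [cesaro]
  rw [abs_div]
  have hpos : (0:ℝ) < ((n:ℕ)+1 : ℕ) := by positivity
  rw [div_le_iff₀ (by positivity)]
  have : |((n+1 : ℕ) : ℝ)| = (n:ℝ) + 1 := by
    rw [abs_of_pos (by positivity)]
    push_cast
    ring
  rw [this]
  calc |∑ k ∈ Finset.range (n+1), T^[k] h x| ≤ ((n:ℝ)+1) * δ := hnum
  _ = δ * ((n:ℝ)+1) := by ring

end LemmaA


/-! ### The closedness theorem -/

/-- A real sequence uniformly approximated by convergent sequences converges. -/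
theorem exists_lim_of_approx (u : ℕ → ℝ) (d : ℕ → ℝ) (hd : Tendsto d atTop (𝓝 0))
    (v : ℕ → ℕ → ℝ) (L : ℕ → ℝ) (hv : ∀ i, Tendsto (v i) atTop (𝓝 (L i)))
    (hb : ∀ i n, |u n - v i n| ≤ d i) : ∃ M, Tendsto u atTop (𝓝 M) := by
  refine cauchySeq_tendsto_of_complete ?_
  rw [Metric.cauchySeq_iff]
  intro θ hθ
  obtain ⟨i, hi⟩ : ∃ i, d i < θ / 4 := by
    have : ∀ᶠ i in atTop, d i < θ / 4 := hd.eventually_lt_const (by positivity)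
    exact this.exists
  have hcau : CauchySeq (v i) := (hv i).cauchySeq
  rw [Metric.cauchySeq_iff] at hcau
  obtain ⟨N, hN⟩ := hcau (θ / 4) (by positivity)
  refine ⟨N, fun m hm n hn => ?_⟩
  have h1 := hb i m
  have h2 := hb i n
  have h3 := hN m hm n hn
  rw [Real.dist_eq] at *
  have : u m - u n = (u m - v i m) + (v i m - v i n) + (v i n - u n) := by ring
  calc |u m - u n| ≤ |u m - v i m| + |v i m - v i n| + |v i n - u n| := by
        rw [this]
        refine le_trans (abs_add_le _ _) ?_
        have := abs_add_le (u m - v i m) (v i m - v i n)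
        linarith
  _ < θ := by
      have h2' : |v i n - u n| ≤ d i := by rwa [abs_sub_comm]
      linarith

theorem cesaro_split (hT : IsDS μ T) (a b : Ω → ℝ) (n : ℕ) (x : Ω) :
    cesaro T n (a + b) x = cesaro T n a x + cesaro T n b x := by
  rw [cesaro, cesaro, cesaro]
  rw [← add_div]
  congr 1
  rw [← Finset.sum_add_distrib]
  refine Finset.sum_congr rfl (fun k _ => ?_)
  rw [T_iter_add hT a b k]
  rfl

set_option synthInstance.maxHeartbeats 1000000 in
set_option maxHeartbeats 2000000 in
theorem stmt7_aux (μ : Measure Ω) [SigmaFinite μ] (T : (Ω → ℝ) → Ω → ℝ)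
    (hT : IsDS μ T) (p : ℝ≥0∞) [Fact (1 ≤ p)] (hp : p ≠ ⊤) :
    IsClosed {f : Lp ℝ p μ | ∃ g : Ω → ℝ,
      TendstoAU μ (fun n => cesaro T (n + 1) ⇑f) g} := by
  classical
  have hp1 : (1:ℝ≥0∞) ≤ p := Fact.out
  refine IsSeqClosed.isClosed ?_
  intro fseq f hmem htend
  choose gj hgj using hmem
  -- the candidate limit function
  set u : Ω → ℕ → ℝ := fun x n => cesaro T (n + 1) (⇑f) x with hu
  set g : Ω → ℝ := fun x =>
    if hx : ∃ L : ℝ, Tendsto (u x) atTop (𝓝 L) then hx.choose else 0 with hgdef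
  refine ⟨g, ?_⟩
  intro ε hε
  -- per-index construction
  have hstep : ∀ i : ℕ, ∃ (vfun gl : Ω → ℝ) (E F : Set Ω),
      MeasurableSet E ∧ MeasurableSet F ∧
      μ Eᶜ ≤ ENNReal.ofReal (ε * (1/2)^(i+2)) ∧ μ Fᶜ ≤ ENNReal.ofReal (ε * (1/2)^(i+2)) ∧
      (∀ᵐ x ∂μ, ∀ n : ℕ, x ∈ E →
        |cesaro T (n+1) (⇑f) x - cesaro T (n+1) vfun x| ≤ (1/2)^i) ∧
      Tendsto (fun n => eLpNorm (F.indicator (gl - cesaro T (n+1) vfun)) ⊤ μ)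
        atTop (𝓝 0) := by
    intro i
    have hεi : (0:ℝ) < ε * (1/2)^(i+2) := by positivity
    have hδi : (0:ℝ) < (1/2:ℝ)^i := by positivity
    obtain ⟨γ, hγpos, hγ⟩ := lemmaA hT hp1 hp hεi hδi
    -- choose a close member of the sequence
    obtain ⟨J, hJ⟩ : ∃ J, dist (fseq J) f < γ := by
      have := (Metric.tendsto_atTop.mp htend) γ hγpos
      obtain ⟨N, hN⟩ := this
      exact ⟨N, hN N le_rfl⟩
    set vfun : Ω → ℝ := ⇑(fseq J) with hvfun
    set h : Ω → ℝ := ⇑f - vfun with hh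
    have hh_meas : Measurable h :=
      ((Lp.stronglyMeasurable f).measurable).sub ((Lp.stronglyMeasurable (fseq J)).measurable)
    have hh_mem : MemLp h p μ := (Lp.memLp f).sub (Lp.memLp (fseq J))
    have hh_norm : eLpNorm h p μ ≤ ENNReal.ofReal γ := by
      have hne : eLpNorm h p μ ≠ ⊤ := hh_mem.2.ne
      rw [ENNReal.le_ofReal_iff_toReal_le hne hγpos.le]
      have : (eLpNorm h p μ).toReal = dist f (fseq J) := by
        rw [Lp.dist_def]
      rw [this, dist_comm]
      exact hJ.le
    obtain ⟨E, hE_meas, hE_compl, hE_bound⟩ := hγ h hh_meas hh_mem hh_norm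
    obtain ⟨F, hF_meas, hF_compl, hF_tend⟩ := hgj J (ε * (1/2)^(i+2)) hεi
    refine ⟨vfun, gj J, E, F, hE_meas, hF_meas, hE_compl, hF_compl, ?_, hF_tend⟩
    have hsplit : ∀ n x, cesaro T (n+1) (⇑f) x = cesaro T (n+1) h x + cesaro T (n+1) vfun x := by
      intro n x
      have : (h + vfun) = ⇑f := by
        funext y
        simp [hh]
      rw [← this]
      exact cesaro_split hT h vfun (n+1) x
    filter_upwards [hE_bound] with x hx
    intro n hxE
    rw [hsplit n x]
    simpa using hx n hxE
  choose vfun gl Eseq Fseq hEm hFm hEc hFc hEb hFt using hstep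
  set Eset : Set Ω := ⋂ i, (Eseq i ∩ Fseq i) with hEset
  have hEset_meas : MeasurableSet Eset :=
    MeasurableSet.iInter (fun i => (hEm i).inter (hFm i))
  refine ⟨Eset, hEset_meas, ?_, ?_⟩
  · -- measure of complement
    have h1 : Eset ᶜ = ⋃ i, (Eseq i ∩ Fseq i)ᶜ := by
      rw [hEset, Set.compl_iInter]
    rw [h1]
    calc μ (⋃ i, (Eseq i ∩ Fseq i)ᶜ) ≤ ∑' i, μ ((Eseq i ∩ Fseq i)ᶜ) := measure_iUnion_le _
    _ ≤ ∑' i, ENNReal.ofReal (ε * (1/2)^(i+1)) := by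
        refine ENNReal.tsum_le_tsum (fun i => ?_)
        rw [Set.compl_inter]
        calc μ ((Eseq i)ᶜ ∪ (Fseq i)ᶜ) ≤ μ ((Eseq i)ᶜ) + μ ((Fseq i)ᶜ) := measure_union_le _ _
        _ ≤ ENNReal.ofReal (ε * (1/2)^(i+2)) + ENNReal.ofReal (ε * (1/2)^(i+2)) :=
            add_le_add (hEc i) (hFc i)
        _ = ENNReal.ofReal (ε * (1/2)^(i+1)) := by
            rw [← ENNReal.ofReal_add (by positivity) (by positivity)]
            congr 1
            ring
    _ ≤ ENNReal.ofReal ε := by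
        rw [ENNReal.tsum_eq_iSup_sum]
        refine iSup_le (fun s => ?_)
        rw [← ENNReal.ofReal_sum_of_nonneg (fun i _ => by positivity)]
        refine ENNReal.ofReal_le_ofReal ?_
        obtain ⟨n, hn⟩ := s.exists_nat_subset_range
        calc ∑ i ∈ s, ε * (1/2)^(i+1) ≤ ∑ i ∈ Finset.range n, ε * (1/2)^(i+1) := by
              refine Finset.sum_le_sum_of_subset_of_nonneg hn (fun i _ _ => by positivity)
        _ = (ε/2) * ∑ i ∈ Finset.range n, (1/2:ℝ)^i := by
              rw [Finset.mul_sum]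
              refine Finset.sum_congr rfl (fun i _ => ?_)
              rw [pow_succ]
              ring
        _ ≤ (ε/2) * 2 := by
              refine mul_le_mul_of_nonneg_left ?_ (by positivity)
              exact sum_geometric_two_le n
        _ = ε := by ring
  · -- the convergence
    set η : ℕ → ℕ → ℝ≥0∞ := fun i n =>
      eLpNorm ((Fseq i).indicator (gl i - cesaro T (n+1) (vfun i))) ⊤ μ with hη
    -- collected a.e. facts
    have hae1 : ∀ᵐ x ∂μ, ∀ i, ∀ n : ℕ, x ∈ Eseq i →
        |cesaro T (n+1) (⇑f) x - cesaro T (n+1) (vfun i) x| ≤ (1/2)^i :=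
      ae_all_iff.mpr (fun i => hEb i)
    have hae2 : ∀ᵐ x ∂μ, ∀ i n, x ∈ Fseq i →
        (‖gl i x - cesaro T (n+1) (vfun i) x‖₊ : ℝ≥0∞) ≤ η i n := by
      rw [ae_all_iff]
      intro i
      rw [ae_all_iff]
      intro n
      have hle : ∀ᵐ x ∂μ, (‖(Fseq i).indicator (gl i - cesaro T (n+1) (vfun i)) x‖₊ : ℝ≥0∞)
          ≤ η i n := by
        have e : η i n = eLpNormEssSup ((Fseq i).indicator (gl i - cesaro T (n+1) (vfun i))) μ := by
          simp only [hη, eLpNorm_exponent_top]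
        rw [e]
        exact ae_le_eLpNormEssSup
      filter_upwards [hle] with x hx hxF
      rwa [Set.indicator_of_mem hxF] at hx
    -- pointwise analysis on Eset
    have hmain : ∀ᵐ x ∂μ, x ∈ Eset → (Tendsto (u x) atTop (𝓝 (g x)) ∧
        ∀ i n, |g x - u x n| ≤ 2 * (1/2)^i + |gl i x - cesaro T (n+1) (vfun i) x|) := by
      filter_upwards [hae1, hae2] with x h1 h2
      intro hxE
      have hxEi : ∀ i, x ∈ Eseq i ∧ x ∈ Fseq i := by
        intro i
        have := Set.mem_iInter.mp hxE i
        exact ⟨this.1, this.2⟩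
      -- convergence of the approximants at x
      have hconv : ∀ i, Tendsto (fun n => cesaro T (n+1) (vfun i) x) atTop (𝓝 (gl i x)) := by
        intro i
        have hb : ∀ n, (ENNReal.ofReal |gl i x - cesaro T (n+1) (vfun i) x|) ≤ η i n := by
          intro n
          have := h2 i n (hxEi i).2
          rwa [← enorm_eq_nnnorm, ← ofReal_norm, Real.norm_eq_abs] at this
        have h0 : Tendsto (fun n => ENNReal.ofReal |gl i x - cesaro T (n+1) (vfun i) x|)
            atTop (𝓝 0) := by
          refine tendsto_of_tendsto_of_tendsto_of_le_of_le tendsto_const_nhds (hFt i)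
            (fun n => zero_le) hb
        have h0' : Tendsto (fun n => |gl i x - cesaro T (n+1) (vfun i) x|) atTop (𝓝 0) := by
          have h3 : Tendsto (fun n =>
              (ENNReal.ofReal |gl i x - cesaro T (n+1) (vfun i) x|).toReal) atTop
              (𝓝 ((0:ℝ≥0∞)).toReal) := (ENNReal.tendsto_toReal (by simp)).comp h0
          simp only [ENNReal.toReal_zero] at h3
          exact h3.congr (fun n => ENNReal.toReal_ofReal (abs_nonneg _))
        rw [tendsto_iff_dist_tendsto_zero]
        refine h0'.congr (fun n => ?_)
        rw [Real.dist_eq, abs_sub_comm]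
      -- existence of the limit at x
      have hex : ∃ L, Tendsto (u x) atTop (𝓝 L) := by
        refine exists_lim_of_approx (u x) (fun i => (1/2:ℝ)^i) ?_
          (fun i n => cesaro T (n+1) (vfun i) x) (fun i => gl i x) hconv ?_
        · exact tendsto_pow_atTop_nhds_zero_of_lt_one (by norm_num) (by norm_num)
        · intro i n
          exact h1 i n (hxEi i).1
      have hgx : Tendsto (u x) atTop (𝓝 (g x)) := by
        have e : g x = hex.choose := by
          simp only [hgdef]
          rw [dif_pos hex]
        rw [e]
        exact hex.choose_spec
      refine ⟨hgx, ?_⟩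
      intro i n
      have hgl : |g x - gl i x| ≤ (1/2)^i := by
        have htd : Tendsto (fun n => |u x n - cesaro T (n+1) (vfun i) x|) atTop
            (𝓝 (|g x - gl i x|)) := by
          have := (hgx.sub (hconv i)).abs
          exact this
        refine le_of_tendsto htd (Filter.Eventually.of_forall (fun n => ?_))
        exact h1 i n (hxEi i).1
      calc |g x - u x n| ≤ |g x - gl i x| + |gl i x - cesaro T (n+1) (vfun i) x|
          + |cesaro T (n+1) (vfun i) x - u x n| := by
            have e : g x - u x n = (g x - gl i x) + (gl i x - cesaro T (n+1) (vfun i) x)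
                + (cesaro T (n+1) (vfun i) x - u x n) := by ring
            rw [e]
            refine le_trans (abs_add_le _ _) ?_
            have := abs_add_le (g x - gl i x) (gl i x - cesaro T (n+1) (vfun i) x)
            linarith
      _ ≤ 2 * (1/2)^i + |gl i x - cesaro T (n+1) (vfun i) x| := by
            have h1' : |cesaro T (n+1) (vfun i) x - u x n| ≤ (1/2)^i := by
              rw [abs_sub_comm]
              exact h1 i n (hxEi i).1
            linarith
    -- eLpNorm bound for each i, n
    have hnormbd : ∀ i n, eLpNorm (Eset.indicator (g - cesaro T (n+1) (⇑f))) ⊤ μ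
        ≤ ENNReal.ofReal (2 * (1/2)^i) + η i n := by
      intro i n
      rw [eLpNorm_exponent_top]
      refine essSup_le_of_ae_le _ ?_
      filter_upwards [hmain, hae2] with x hx h2
      by_cases hxE : x ∈ Eset
      · rw [Set.indicator_of_mem hxE]
        have hb := (hx hxE).2 i n
        have e1 : ((‖(g - cesaro T (n+1) (⇑f)) x‖₊ : ℝ≥0∞))
            = ENNReal.ofReal (|g x - u x n|) := by
          rw [← enorm_eq_nnnorm, ← ofReal_norm, Real.norm_eq_abs]
          rfl
        rw [enorm_eq_nnnorm, e1]
        calc ENNReal.ofReal (|g x - u x n|)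
            ≤ ENNReal.ofReal (2 * (1/2)^i + |gl i x - cesaro T (n+1) (vfun i) x|) :=
              ENNReal.ofReal_le_ofReal hb
        _ = ENNReal.ofReal (2 * (1/2)^i)
              + ENNReal.ofReal (|gl i x - cesaro T (n+1) (vfun i) x|) := by
              rw [ENNReal.ofReal_add (by positivity) (abs_nonneg _)]
        _ ≤ ENNReal.ofReal (2 * (1/2)^i) + η i n := by
              refine add_le_add_right ?_ _
              have := h2 i n (Set.mem_iInter.mp hxE i).2
              rwa [← enorm_eq_nnnorm, ← ofReal_norm, Real.norm_eq_abs] at this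
      · rw [Set.indicator_of_notMem hxE]
        simp
    -- conclude the ENNReal convergence
    rw [ENNReal.tendsto_nhds_zero]
    intro ν hν
    have hν2 : (0:ℝ≥0∞) < ν / 2 := ENNReal.div_pos hν.ne' (by norm_num)
    -- choose i with ofReal (2 * (1/2)^i) ≤ ν/2
    obtain ⟨i, hi⟩ : ∃ i, ENNReal.ofReal (2 * (1/2)^i) ≤ ν / 2 := by
      have ht : Tendsto (fun i : ℕ => ENNReal.ofReal (2 * (1/2)^i)) atTop (𝓝 0) := by
        have h1 : Tendsto (fun i : ℕ => 2 * (1/2:ℝ)^i) atTop (𝓝 0) := by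
          have := tendsto_pow_atTop_nhds_zero_of_lt_one
            (by norm_num : (0:ℝ) ≤ 1/2) (by norm_num : (1/2:ℝ) < 1)
          have h2 := this.const_mul (2:ℝ)
          simpa using h2
        have := (ENNReal.continuous_ofReal.tendsto 0).comp h1
        simpa [Function.comp_def] using this
      exact ((ENNReal.tendsto_nhds_zero.mp ht) (ν/2) hν2).exists
    have hηt : Tendsto (η i) atTop (𝓝 0) := by
      have h5 := hFt i
      simp only [hη]
      exact h5
    have hηi := (ENNReal.tendsto_nhds_zero.mp hηt) (ν/2) hν2
    filter_upwards [hηi] with n hn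
    calc eLpNorm (Eset.indicator (g - cesaro T (n+1) (⇑f))) ⊤ μ
        ≤ ENNReal.ofReal (2 * (1/2)^i) + η i n := hnormbd i n
    _ ≤ ν / 2 + ν / 2 := add_le_add hi hn
    _ = ν := ENNReal.add_halves ν

end DSproof


/-- for a Dunford-Schwartz operator `T` and `1 ≤ p < ∞`, the set
`C_p = {f ∈ L^p : (M_n(T)(f)) converges a.u.}` is closed in `L^p`. -/
theorem stmt7 (μ : Measure Ω) [SigmaFinite μ] (T : (Ω → ℝ) → Ω → ℝ)
    (hT : IsDS μ T) (p : ℝ≥0∞) [Fact (1 ≤ p)] (hp : p ≠ ⊤) :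
    IsClosed {f : Lp ℝ p μ | ∃ g : Ω → ℝ,
      TendstoAU μ (fun n => cesaro T (n + 1) ⇑f) g} :=
  DSproof.stmt7_aux μ T hT p hp
end

section
/- Let (Ω,𝒜,μ) be a σ-finite measure space and let T : L²(Ω) → L²(Ω) be a linear contraction (‖T f‖₂ ≤ ‖f‖₂ for all f ∈ L²). Then the set D = { g + (T(h) − h) : g ∈ L²(Ω), T(g) = g, h ∈ L²(Ω) ∩ L^∞(Ω) } is dense in L²(Ω). -/
open MeasureTheory Filter Set
open scoped ENNReal Topology RealInnerProductSpace

variable {Ω : Type*} [MeasurableSpace Ω]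

/-- for a linear contraction `T` of `L²`, the set
`D = {g + (T h − h) : g ∈ L², T g = g, h ∈ L² ∩ L^∞}` is dense in `L²`. -/
theorem stmt9 (μ : Measure Ω) [SigmaFinite μ] (T : Lp ℝ 2 μ →ₗ[ℝ] Lp ℝ 2 μ)
    (hT : ∀ f : Lp ℝ 2 μ, ‖T f‖ ≤ ‖f‖) :
    Dense {x : Lp ℝ 2 μ | ∃ g h : Lp ℝ 2 μ,
      T g = g ∧ MemLp (⇑h) ⊤ μ ∧ x = g + (T h - h)} := by
  have hmem0 : MemLp (⇑(0 : Lp ℝ 2 μ)) ⊤ μ :=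
    (MemLp.zero : MemLp (0 : Ω → ℝ) ⊤ μ).ae_eq (Lp.coeFn_zero ℝ 2 μ).symm
  set S : Submodule ℝ (Lp ℝ 2 μ) :=
    { carrier := {x : Lp ℝ 2 μ | ∃ g h : Lp ℝ 2 μ,
        T g = g ∧ MemLp (⇑h) ⊤ μ ∧ x = g + (T h - h)}
      add_mem' := by
        rintro x y ⟨g₁, h₁, hg₁, hh₁, rfl⟩ ⟨g₂, h₂, hg₂, hh₂, rfl⟩
        refine ⟨g₁ + g₂, h₁ + h₂, by rw [map_add, hg₁, hg₂],
          (hh₁.add hh₂).ae_eq (Lp.coeFn_add h₁ h₂).symm, ?_⟩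
        rw [map_add]; abel
      zero_mem' := ⟨0, 0, map_zero T, hmem0, by simp⟩
      smul_mem' := by
        rintro c x ⟨g, h, hg, hh, rfl⟩
        refine ⟨c • g, c • h, by rw [_root_.map_smul, hg],
          (hh.const_smul c).ae_eq (Lp.coeFn_smul c h).symm, ?_⟩
        rw [_root_.map_smul]; module }
  show Dense (S : Set (Lp ℝ 2 μ))
  rw [Submodule.dense_iff_topologicalClosure_eq_top, Submodule.topologicalClosure_eq_top_iff,
    Submodule.eq_bot_iff]
  intro f hf
  rw [Submodule.mem_orthogonal] at hf
  -- f ⟂ (T h - h) for all bounded h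
  have hcob : ∀ h : Lp ℝ 2 μ, MemLp (⇑h) ⊤ μ → ⟪T h - h, f⟫ = 0 := fun h hh =>
    hf _ ⟨0, h, map_zero T, hh, by simp⟩
  -- extend to all h by density of simple functions
  set T' : Lp ℝ 2 μ →L[ℝ] Lp ℝ 2 μ := T.mkContinuous 1 (fun g => by simpa using hT g)
  have hT'c : (⇑T' : Lp ℝ 2 μ → Lp ℝ 2 μ) = ⇑T := rfl
  have hdense : Dense {h : Lp ℝ 2 μ | MemLp (⇑h) ⊤ μ} := by
    refine (Lp.simpleFunc.dense (by norm_num : (2 : ℝ≥0∞) ≠ ∞)).mono ?_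
    rintro h ⟨s, hs⟩
    have : ⇑h =ᵐ[μ] ⇑s := by
      rw [← hs]
      exact AEEqFun.coeFn_mk _ _
    exact (s.memLp_top μ).ae_eq this.symm
  have hall : ∀ h : Lp ℝ 2 μ, ⟪T h - h, f⟫ = 0 := by
    have : (fun h : Lp ℝ 2 μ => ⟪T' h - h, f⟫) = fun _ => (0 : ℝ) := by
      refine Continuous.ext_on hdense ?_ continuous_const ?_
      · exact ((T'.continuous.sub continuous_id).inner continuous_const)
      · intro h hh
        simpa [hT'c] using hcob h hh
    intro h
    have := congrFun this h
    simpa [hT'c] using this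
  -- deduce T f = f
  have hTf : T f = f := by
    have h1 : ⟪T f, f⟫ = ⟪f, f⟫ := by
      have := hall f
      rw [inner_sub_left, sub_eq_zero] at this
      exact this
    have h2 : ‖T f - f‖ ^ 2 = ‖T f‖ ^ 2 - ‖f‖ ^ 2 := by
      rw [norm_sub_sq_real, h1, real_inner_self_eq_norm_sq]; ring
    have h3 : ‖T f - f‖ ^ 2 ≤ 0 := by
      rw [h2]; nlinarith [hT f, norm_nonneg (T f), norm_nonneg f]
    have : ‖T f - f‖ = 0 := by nlinarith [norm_nonneg (T f - f)]
    rwa [norm_eq_zero, sub_eq_zero] at this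
  -- f ∈ S, so ⟪f, f⟫ = 0
  have : ⟪f, f⟫ = 0 := hf f ⟨f, 0, hTf, hmem0, by simp⟩
  exact inner_self_eq_zero.mp this
end

section
/- On the space of real sequences, let T be the unilateral shift T((ξ₁,ξ₂,ξ₃,…)) = (0,ξ₁,ξ₂,…), and let e₁ = (1,0,0,…) ∈ ℓ¹. Then T is a Dunford–Schwartz operator on (ℕ, counting measure) and ‖M_{2n}(T)(e₁) − M_n(T)(e₁)‖_{ℓ¹} = 1 for every n ≥ 1. Consequently, the sequence (M_n(T)(e₁)) does not converge in the norm of ℓ¹. -/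
open MeasureTheory Filter Set
open scoped ENNReal Topology

variable {Ω : Type*} [MeasurableSpace Ω]

/-- The unilateral shift `T((ξ₁,ξ₂,ξ₃,…)) = (0,ξ₁,ξ₂,…)` on real sequences. -/
def seqShift : (ℕ → ℝ) → ℕ → ℝ :=
  fun ξ i => if i = 0 then 0 else ξ (i - 1)

/-- The sequence `e₁ = (1,0,0,…)`. -/
def eOne : ℕ → ℝ := fun i => if i = 0 then 1 else 0

lemma count_ae_all {P : ℕ → Prop} (h : ∀ᵐ i ∂(Measure.count : Measure ℕ), P i) : ∀ i, P i := by
  intro i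
  by_contra hi
  have h0 : (Measure.count : Measure ℕ) {x | ¬ P x} = 0 := h
  have h1 : {x | ¬ P x} = (∅ : Set ℕ) := Measure.count_eq_zero_iff.mp h0
  exact absurd hi (by simpa using (Set.eq_empty_iff_forall_notMem.mp h1 i))

lemma l1_count (f : ℕ → ℝ) :
    eLpNorm f 1 (Measure.count : Measure ℕ) = ∑' i, (‖f i‖₊ : ℝ≥0∞) := by
  rw [eLpNorm_one_eq_lintegral_enorm, MeasureTheory.lintegral_count]
  rfl

lemma shift_iter (f : ℕ → ℝ) (k : ℕ) :
    ∀ i, seqShift^[k] f i = if i < k then 0 else f (i - k) := by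
  induction k with
  | zero => simp
  | succ k ih =>
    intro i
    rw [Function.iterate_succ_apply']
    show (if i = 0 then 0 else seqShift^[k] f (i - 1)) = _
    rcases Nat.eq_zero_or_pos i with h | h
    · simp [h]
    · rw [if_neg h.ne', ih]
      by_cases hc : i - 1 < k
      · rw [if_pos hc, if_pos (by omega : i < k + 1)]
      · rw [if_neg hc, if_neg (by omega : ¬ i < k + 1)]
        congr 1
        omega

lemma iter_eOne (k i : ℕ) : seqShift^[k] eOne i = if i = k then 1 else 0 := by
  rw [shift_iter]
  unfold eOne
  rcases lt_trichotomy i k with h | h | h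
  · simp [h, h.ne]
  · simp [h]
  · have h1 : ¬ i < k := by omega
    have h2 : ¬ i - k = 0 := by omega
    simp [h1, h2, h.ne']

lemma cesaro_eOne (n i : ℕ) :
    cesaro seqShift n eOne i = (if i < n then (1:ℝ) else 0) / n := by
  unfold cesaro
  congr 1
  simp only [iter_eOne]
  rw [Finset.sum_ite_eq (Finset.range n) i (fun _ => (1:ℝ))]
  simp [Finset.mem_range]

lemma shift_l1 (f : ℕ → ℝ) :
    eLpNorm (seqShift f) 1 (Measure.count : Measure ℕ)
      = eLpNorm f 1 (Measure.count : Measure ℕ) := by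
  rw [l1_count, l1_count]
  rw [tsum_eq_zero_add' (f := fun i => (‖seqShift f i‖₊ : ℝ≥0∞)) ENNReal.summable]
  have h0 : seqShift f 0 = 0 := rfl
  have hs : ∀ i : ℕ, seqShift f (i + 1) = f i := fun i => rfl
  simp [h0, hs]

/-- the unilateral shift is a Dunford-Schwartz operator on `(ℕ, count)`,
`e₁ ∈ ℓ¹`, `‖M_{2n}(T)(e₁) − M_n(T)(e₁)‖_{ℓ¹} = 1` for all `n ≥ 1`, and hence
`(M_n(T)(e₁))` does not converge in `ℓ¹`. -/
theorem stmt14 :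
    IsDS (Measure.count : Measure ℕ) seqShift ∧
    MemLp eOne 1 (Measure.count : Measure ℕ) ∧
    (∀ n : ℕ, 1 ≤ n →
      eLpNorm (cesaro seqShift (2 * n) eOne - cesaro seqShift n eOne) 1
        (Measure.count : Measure ℕ) = 1) ∧
    ¬ ∃ g : ℕ → ℝ, Tendsto (fun n =>
        eLpNorm (cesaro seqShift (n + 1) eOne - g) 1 (Measure.count : Measure ℕ))
      atTop (𝓝 0) := by
  set μ : Measure ℕ := Measure.count with hμ
  have hmeas : ∀ f : ℕ → ℝ, AEStronglyMeasurable f μ :=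
    fun f => (measurable_of_countable f).aestronglyMeasurable
  -- the key ℓ¹-norm computation
  have hdiff : ∀ n : ℕ, 1 ≤ n →
      eLpNorm (cesaro seqShift (2 * n) eOne - cesaro seqShift n eOne) 1 μ = 1 := by
    intro n hn
    have hn0 : (n : ℝ) ≠ 0 := Nat.cast_ne_zero.mpr (by omega)
    have h2n0 : (0:ℝ) < 2 * n := by positivity
    have hval : ∀ i : ℕ,
        |cesaro seqShift (2 * n) eOne i - cesaro seqShift n eOne i|
          = if i < 2 * n then 1 / (2 * (n:ℝ)) else 0 := by
      intro i
      rw [cesaro_eOne, cesaro_eOne]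
      rcases lt_or_ge i n with h | h
      · have h2 : i < 2 * n := by omega
        rw [if_pos h, if_pos h2, if_pos h2]
        push_cast
        rw [abs_eq (by positivity)]
        right
        field_simp
        ring
      · rcases lt_or_ge i (2 * n) with h2 | h2
        · rw [if_neg (not_lt.mpr h), if_pos h2, if_pos h2]
          push_cast
          rw [abs_eq (by positivity)]
          left
          field_simp
          simp
        · rw [if_neg (not_lt.mpr h), if_neg (not_lt.mpr h2), if_neg (not_lt.mpr h2)]
          simp
    rw [l1_count]
    have hterm : ∀ i : ℕ,
        (‖(cesaro seqShift (2 * n) eOne - cesaro seqShift n eOne) i‖₊ : ℝ≥0∞)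
          = if i < 2 * n then ENNReal.ofReal (1 / (2 * (n:ℝ))) else 0 := by
      intro i
      rw [← enorm_eq_nnnorm, ← ofReal_norm]
      rw [Pi.sub_apply, Real.norm_eq_abs, hval i]
      split_ifs <;> simp
    simp only [hterm]
    rw [tsum_eq_sum (s := Finset.range (2 * n))
      (by intro b hb; rw [if_neg (by simpa [Finset.mem_range] using hb)])]
    rw [Finset.sum_ite_of_true (by intro i hi; simpa [Finset.mem_range] using hi)]
    rw [Finset.sum_const, Finset.card_range, nsmul_eq_mul]
    rw [← ENNReal.ofReal_natCast, ← ENNReal.ofReal_mul (by positivity)]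
    have : ((2 * n : ℕ) : ℝ) * (1 / (2 * (n:ℝ))) = 1 := by
      push_cast; field_simp
    rw [this, ENNReal.ofReal_one]
  refine ⟨?_, ?_, hdiff, ?_⟩
  · -- IsDS
    refine ⟨?_, ?_, ?_, ?_, ?_⟩
    · intro f g
      funext i
      simp only [seqShift, Pi.add_apply]
      split_ifs <;> simp
    · intro c f
      funext i
      simp only [seqShift, Pi.smul_apply, smul_eq_mul]
      split_ifs <;> simp
    · intro f _
      exact measurable_of_countable _
    · intro f _
      exact le_of_eq (shift_l1 f)
    · intro f _
      rw [eLpNorm_exponent_top, eLpNorm_exponent_top]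
      have hae := MeasureTheory.enorm_ae_le_eLpNormEssSup f μ
      have hall := count_ae_all hae
      refine essSup_le_of_ae_le _ (Filter.Eventually.of_forall ?_)
      intro i
      show (↑‖seqShift f i‖₊ : ℝ≥0∞) ≤ eLpNormEssSup f μ
      rcases Nat.eq_zero_or_pos i with h | h
      · have : seqShift f i = 0 := by simp [seqShift, h]
        simp [this]
      · have : seqShift f i = f (i - 1) := by
          simp [seqShift, h.ne']
        rw [this]
        exact hall (i - 1)
  · -- e₁ ∈ ℓ¹
    refine ⟨hmeas _, ?_⟩
    rw [l1_count]
    have : ∀ i : ℕ, (‖eOne i‖₊ : ℝ≥0∞) = if i = 0 then 1 else 0 := by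
      intro i
      unfold eOne
      split_ifs <;> simp
    simp only [this]
    rw [tsum_eq_single 0 (by intro b hb; rw [if_neg hb])]
    simp
  · -- non-convergence
    rintro ⟨g, hg⟩
    set a : ℕ → ℝ≥0∞ := fun n => eLpNorm (cesaro seqShift (n + 1) eOne - g) 1 μ with ha
    have h2 : Tendsto (fun n => a (2 * n + 1)) atTop (𝓝 0) := by
      refine hg.comp ?_
      exact tendsto_atTop_atTop.mpr fun b => ⟨b, fun n hn => by omega⟩
    have e1 := h2.eventually_lt_const (by norm_num : (0:ℝ≥0∞) < 1/2)
    have e2 := hg.eventually_lt_const (by norm_num : (0:ℝ≥0∞) < 1/2)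
    rcases ((e1.and e2).and (eventually_ge_atTop 1)).exists with ⟨n, ⟨hn1, hn2⟩, hn3⟩
    have key : eLpNorm (cesaro seqShift (2 * (n + 1)) eOne - cesaro seqShift (n + 1) eOne) 1 μ
        ≤ a (2 * n + 1) + a n := by
      have hsplit : cesaro seqShift (2 * (n + 1)) eOne - cesaro seqShift (n + 1) eOne
          = (cesaro seqShift (2 * (n + 1)) eOne - g) + (g - cesaro seqShift (n + 1) eOne) := by
        ext i; simp only [Pi.sub_apply, Pi.add_apply]; ring
      rw [hsplit]
      refine le_trans (eLpNorm_add_le ((hmeas _).sub (hmeas _)) ((hmeas _).sub (hmeas _))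
        le_rfl) ?_
      have hidx : 2 * (n + 1) = (2 * n + 1) + 1 := by ring
      rw [eLpNorm_sub_comm g]
      rw [hidx]
    have hone := hdiff (n + 1) (by omega)
    rw [hone] at key
    have : (1 : ℝ≥0∞) < 1/2 + 1/2 := lt_of_le_of_lt key (ENNReal.add_lt_add hn1 hn2)
    rw [ENNReal.add_halves] at this
    exact lt_irrefl _ this
end
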